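/- arXiv:2106.03243 — 8 statements merged into one kernel-verified Lean document; each statement's English description precedes it below -/
import Mathlib

section
/- Let d, n be positive integers, let x_1, ..., x_n be vectors in ℝ^d, let V_0 be a symmetric positive definite d×d real matrix, and for t = 1, ..., n set V_t = V_0 + Σ_{i=1}^t x_i x_iᵀ. Then for every real b > 0, Σ_{t=1}^n min(b, x_tᵀ V_{t-1}⁻¹ x_t) ≤ (b / log(1 + b)) · log(det V_n / det V_0) ≤ (1 + b) · log(det V_n / det V_0). -/
open Matrix Finset

private lemma vmv_psd {d : ℕ} (x : Fin d → ℝ) : (vecMulVec x x).PosSemidef := by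
  rw [posSemidef_iff_dotProduct_mulVec]
  constructor
  · ext i j
    simp [Matrix.conjTranspose_apply, vecMulVec_apply, mul_comm]
  · intro v
    have h : star v ⬝ᵥ (vecMulVec x x *ᵥ v) = (x ⬝ᵥ v) * (x ⬝ᵥ v) := by
      simp [vecMulVec, dotProduct, mulVec, Finset.mul_sum, Finset.sum_mul, mul_comm,
        mul_left_comm, mul_assoc]
    rw [h]
    exact mul_self_nonneg _

private lemma det_rank_one_update {d : ℕ} {A : Matrix (Fin d) (Fin d) ℝ} (hA : A.PosDef)
    (x : Fin d → ℝ) :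
    (A + vecMulVec x x).det = A.det * (1 + x ⬝ᵥ A⁻¹ *ᵥ x) := by
  rw [vecMulVec_eq Unit, det_add_replicateCol_mul_replicateRow hA.det_pos.ne'.isUnit]
  congr 1
  rw [Matrix.mul_assoc, ← replicateCol_mulVec, det_unique]
  simp [Matrix.one_apply, Matrix.replicateRow_mul_replicateCol_apply]

-- concavity step: for 0 ≤ u ≤ b, u * log (1+b) ≤ b * log (1+u)
private lemma concave_step {u b : ℝ} (hu : 0 ≤ u) (hub : u ≤ b) (hb : 0 < b) :
    u * Real.log (1 + b) ≤ b * Real.log (1 + u) := by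
  have hcc := strictConcaveOn_log_Ioi.concaveOn
  have h1 : (1 : ℝ) ∈ Set.Ioi (0:ℝ) := by norm_num
  have h2 : (1 + b) ∈ Set.Ioi (0:ℝ) := by simp; linarith
  have ha : 0 ≤ 1 - u / b := by
    have : u / b ≤ 1 := (div_le_one hb).2 hub
    linarith
  have hb' : 0 ≤ u / b := div_nonneg hu hb.le
  have hsum : (1 - u / b) + u / b = 1 := by ring
  have key := hcc.2 h1 h2 ha hb' hsum
  simp only [smul_eq_mul] at key
  have heq : (1 - u / b) * 1 + u / b * (1 + b) = 1 + u := by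
    field_simp; ring
  rw [heq, Real.log_one, mul_zero, zero_add] at key
  calc u * Real.log (1 + b) = (u / b * Real.log (1 + b)) * b := by field_simp
    _ ≤ Real.log (1 + u) * b := mul_le_mul_of_nonneg_right key hb.le
    _ = b * Real.log (1 + u) := mul_comm _ _

/-- **Elliptical potential lemma.** -/
theorem stmt_0 (d n : ℕ) (hd : 0 < d) (hn : 0 < n)
    (x : ℕ → Fin d → ℝ) (V₀ : Matrix (Fin d) (Fin d) ℝ) (hV₀ : V₀.PosDef)
    (V : ℕ → Matrix (Fin d) (Fin d) ℝ)
    (hV : ∀ t, V t = V₀ + ∑ i ∈ Finset.range t, vecMulVec (x i) (x i))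
    (b : ℝ) (hb : 0 < b) :
    (∑ t ∈ Finset.range n, min b (x t ⬝ᵥ (V t)⁻¹ *ᵥ x t))
      ≤ (b / Real.log (1 + b)) * Real.log ((V n).det / V₀.det) ∧
    (b / Real.log (1 + b)) * Real.log ((V n).det / V₀.det)
      ≤ (1 + b) * Real.log ((V n).det / V₀.det) := by
  set u : ℕ → ℝ := fun t => x t ⬝ᵥ (V t)⁻¹ *ᵥ x t with hu
  have hVpd : ∀ t, (V t).PosDef := by
    intro t
    rw [hV t]
    exact hV₀.add_posSemidef (Finset.sum_induction _ _ (fun a b ha hb => ha.add hb)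
      Matrix.PosSemidef.zero (fun i _ => vmv_psd (x i)))
  have hunn : ∀ t, 0 ≤ u t := by
    intro t
    have := ((hVpd t).inv.posSemidef).dotProduct_mulVec_nonneg (x t)
    simpa using this
  have hdetpos : ∀ t, 0 < (V t).det := fun t => (hVpd t).det_pos
  have hV0 : V 0 = V₀ := by rw [hV 0]; simp
  have hstep : ∀ t, (V (t + 1)).det = (V t).det * (1 + u t) := by
    intro t
    have : V (t + 1) = V t + vecMulVec (x t) (x t) := by
      rw [hV (t + 1), hV t, Finset.sum_range_succ, add_assoc]
    rw [this, det_rank_one_update (hVpd t)]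
  have hL : 0 < Real.log (1 + b) := Real.log_pos (by linarith)
  -- telescoping
  have htel : ∀ m, ∑ t ∈ Finset.range m, Real.log (1 + u t)
      = Real.log ((V m).det) - Real.log (V₀.det) := by
    intro m
    induction m with
    | zero => simp [hV0]
    | succ k ih =>
      rw [Finset.sum_range_succ, ih, hstep k,
        Real.log_mul (hdetpos k).ne' (by nlinarith [hunn k])]
      ring
  have hlogdiv : Real.log ((V n).det / V₀.det)
      = ∑ t ∈ Finset.range n, Real.log (1 + u t) := by
    rw [Real.log_div (hdetpos n).ne' hV₀.det_pos.ne', htel n]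
  have hlognn : 0 ≤ Real.log ((V n).det / V₀.det) := by
    rw [hlogdiv]
    exact Finset.sum_nonneg fun t _ => Real.log_nonneg (by linarith [hunn t])
  constructor
  · rw [hlogdiv, Finset.mul_sum]
    apply Finset.sum_le_sum
    intro t _
    have hut := hunn t
    rcases le_total b (u t) with h | h
    · rw [min_eq_left h]
      have : Real.log (1 + b) ≤ Real.log (1 + u t) :=
        Real.log_le_log (by linarith) (by linarith)
      calc b = (b / Real.log (1 + b)) * Real.log (1 + b) := by field_simp
        _ ≤ (b / Real.log (1 + b)) * Real.log (1 + u t) := by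
            apply mul_le_mul_of_nonneg_left this (div_nonneg hb.le hL.le)
    · rw [min_eq_right h]
      rw [div_mul_eq_mul_div, le_div_iff₀ hL]
      exact concave_step hut h hb
  · apply mul_le_mul_of_nonneg_right _ hlognn
    rw [div_le_iff₀ hL]
    have h2 : b / (1 + b) ≤ Real.log (1 + b) := by
      have := Real.log_le_sub_one_of_pos (x := (1 + b)⁻¹) (by positivity)
      rw [Real.log_inv] at this
      have h3 : b / (1 + b) = 1 - (1 + b)⁻¹ := by field_simp; ring
      linarith
    calc b = (1 + b) * (b / (1 + b)) := by field_simp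
      _ ≤ (1 + b) * Real.log (1 + b) := by
          exact mul_le_mul_of_nonneg_left h2 (by linarith)
end

section
/- Let n be a positive integer and let H and M be n×n real symmetric positive semidefinite matrices. Then log det(I + M) ≤ log det(I + H) + √n · ‖M − H‖_F, where ‖·‖_F denotes the Frobenius norm and I is the n×n identity matrix. -/
open Matrix Finset

section Aux
variable {n : ℕ}

lemma my_sym_apply {A : Matrix (Fin n) (Fin n) ℝ} (hA : A.IsHermitian) (i j : Fin n) :
    A i j = A j i := by
  conv_lhs => rw [← hA]
  simp [Matrix.conjTranspose_apply]

lemma my_trace_eq_sum_eigenvalues {A : Matrix (Fin n) (Fin n) ℝ} (hA : A.IsHermitian) :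
    A.trace = ∑ i, hA.eigenvalues i := by
  conv_lhs => rw [hA.spectral_theorem]
  rw [Unitary.conjStarAlgAut_apply, Matrix.trace_mul_cycle]
  rw [show (star (hA.eigenvectorUnitary : Matrix (Fin n) (Fin n) ℝ)) *
      (hA.eigenvectorUnitary : Matrix (Fin n) (Fin n) ℝ) = 1 from Unitary.coe_star_mul_self _]
  simp [Matrix.trace_diagonal]

lemma my_trace_nonneg {M : Matrix (Fin n) (Fin n) ℝ} (hM : M.PosSemidef) : 0 ≤ M.trace := by
  rw [Matrix.trace]
  refine Finset.sum_nonneg fun i _ => ?_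
  exact hM.diag_nonneg

/-- log det A ≤ trace A - n for psd A with positive determinant. -/
lemma my_log_det_le {A : Matrix (Fin n) (Fin n) ℝ} (hA : A.PosSemidef) (hd : 0 < A.det) :
    Real.log A.det ≤ A.trace - n := by
  have hdet := hA.isHermitian.det_eq_prod_eigenvalues
  simp only [RCLike.ofReal_real_eq_id, id_eq] at hdet
  have hne : ∀ i ∈ Finset.univ (α := Fin n), hA.isHermitian.eigenvalues i ≠ 0 := by
    intro i _ h0
    rw [hdet] at hd
    exact absurd (Finset.prod_eq_zero (Finset.mem_univ i) h0) (by positivity)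
  have hpos : ∀ i : Fin n, 0 < hA.isHermitian.eigenvalues i := fun i =>
    lt_of_le_of_ne (hA.eigenvalues_nonneg i) (Ne.symm (hne i (Finset.mem_univ i)))
  rw [hdet, Real.log_prod hne, my_trace_eq_sum_eigenvalues hA.isHermitian]
  have : ∑ i, Real.log (hA.isHermitian.eigenvalues i)
      ≤ ∑ i : Fin n, (hA.isHermitian.eigenvalues i - 1) :=
    Finset.sum_le_sum fun i _ => Real.log_le_sub_one_of_pos (hpos i)
  simpa [Finset.sum_sub_distrib] using this

end Aux

/-- First-order bound on the log-determinant of `I + M` versus `I + H`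
in terms of the Frobenius norm of `M - H`. -/
theorem stmt_1 (n : ℕ) (hn : 0 < n) (H M : Matrix (Fin n) (Fin n) ℝ)
    (hH : H.PosSemidef) (hM : M.PosSemidef) :
    Real.log (1 + M).det ≤ Real.log (1 + H).det
      + Real.sqrt n * Real.sqrt (∑ i, ∑ j, (M i j - H i j) ^ 2) := by
  set P : Matrix (Fin n) (Fin n) ℝ := 1 + H with hPdef
  set Q : Matrix (Fin n) (Fin n) ℝ := 1 + M with hQdef
  set D : Matrix (Fin n) (Fin n) ℝ := M - H with hDdef
  have hP : P.PosDef := Matrix.PosDef.one.add_posSemidef hH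
  have hQ : Q.PosDef := Matrix.PosDef.one.add_posSemidef hM
  have hPinv : (P⁻¹).PosDef := hP.inv
  set B : Matrix (Fin n) (Fin n) ℝ := P⁻¹ with hBdef
  set S : Matrix (Fin n) (Fin n) ℝ := (open scoped MatrixOrder in CFC.sqrt B) with hSdef
  have hSpsd : S.PosSemidef := open scoped MatrixOrder in
    Matrix.nonneg_iff_posSemidef.mp (CFC.sqrt_nonneg B)
  have hSS : S * S = B := open scoped MatrixOrder in
    CFC.sqrt_mul_sqrt_self B (Matrix.nonneg_iff_posSemidef.mpr hPinv.posSemidef)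
  have hSh : Sᴴ = S := hSpsd.isHermitian
  have hdetP : P.det ≠ 0 := ne_of_gt hP.det_pos
  have hdetB : B.det ≠ 0 := ne_of_gt hPinv.det_pos
  have hdetS : S.det ≠ 0 := by
    intro h
    apply hdetB
    rw [← hSS, Matrix.det_mul, h, zero_mul]
  -- step 1: 1 - B is psd
  have hSPS : S * P * S = 1 := by
    have hBinv : B⁻¹ = P := Matrix.nonsing_inv_nonsing_inv P (isUnit_iff_ne_zero.mpr hdetP)
    calc S * P * S = S * (S * S)⁻¹ * S := by rw [hSS, hBinv]
      _ = S * (S⁻¹ * S⁻¹) * S := by rw [Matrix.mul_inv_rev]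
      _ = (S * S⁻¹) * (S⁻¹ * S) := by noncomm_ring
      _ = 1 := by rw [Matrix.mul_nonsing_inv _ (isUnit_iff_ne_zero.mpr hdetS),
            Matrix.nonsing_inv_mul _ (isUnit_iff_ne_zero.mpr hdetS), one_mul]
  have hOneSub : (1 - B).PosSemidef := by
    have he : (1 : Matrix (Fin n) (Fin n) ℝ) - B = S * H * Sᴴ := by
      rw [hSh]
      have : S * H * S = S * P * S - S * S := by
        rw [hPdef]; noncomm_ring
      rw [this, hSPS, hSS]
    rw [he]
    exact hH.mul_mul_conjTranspose_same S
  -- step 2: B - B*B psd, hence trace (B*B) ≤ trace B ≤ n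
  have hBsub : (B - B * B).PosSemidef := by
    have he : B - B * B = S * (1 - B) * Sᴴ := by
      rw [hSh, ← hSS]; noncomm_ring
    rw [he]
    exact hOneSub.mul_mul_conjTranspose_same S
  have htrB2 : (B * B).trace ≤ (n : ℝ) := by
    have h1 : (B * B).trace ≤ B.trace := by
      have := my_trace_nonneg hBsub
      rw [Matrix.trace_sub] at this; linarith
    have h2 : B.trace ≤ (n : ℝ) := by
      have := my_trace_nonneg hOneSub
      rw [Matrix.trace_sub, Matrix.trace_one] at this
      simp only [Fintype.card_fin] at this
      linarith
    linarith
  -- step 3: Frobenius norm of B squared = trace (B*B)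
  have hfrobB : ∑ i, ∑ j, (B i j) ^ 2 = (B * B).trace := by
    rw [Matrix.trace]
    refine Finset.sum_congr rfl fun i _ => ?_
    rw [Matrix.diag_apply, Matrix.mul_apply]
    refine Finset.sum_congr rfl fun j _ => ?_
    rw [sq, my_sym_apply hPinv.isHermitian i j]
  -- step 4: trace (B * D) ≤ sqrt n * frobenius norm of D
  have htrBD : (B * D).trace ≤ Real.sqrt n * Real.sqrt (∑ i, ∑ j, (D i j) ^ 2) := by
    have hDh : D.IsHermitian := hM.isHermitian.sub hH.isHermitian
    have h1 : (B * D).trace = ∑ i, ∑ j, B i j * D i j := by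
      rw [Matrix.trace]
      refine Finset.sum_congr rfl fun i _ => ?_
      rw [Matrix.diag_apply, Matrix.mul_apply]
      exact Finset.sum_congr rfl fun j _ => by rw [my_sym_apply hDh j i]
    have h2 : ∑ i, ∑ j, B i j * D i j
        ≤ Real.sqrt (∑ i, ∑ j, (B i j) ^ 2) * Real.sqrt (∑ i, ∑ j, (D i j) ^ 2) := by
      have cs := Real.sum_mul_le_sqrt_mul_sqrt (Finset.univ : Finset (Fin n × Fin n))
        (fun p => B p.1 p.2) (fun p => D p.1 p.2)
      have e1 : ∑ p : Fin n × Fin n, B p.1 p.2 * D p.1 p.2 = ∑ i, ∑ j, B i j * D i j :=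
        Fintype.sum_prod_type _
      have e2 : ∑ p : Fin n × Fin n, (B p.1 p.2) ^ 2 = ∑ i, ∑ j, (B i j) ^ 2 :=
        Fintype.sum_prod_type _
      have e3 : ∑ p : Fin n × Fin n, (D p.1 p.2) ^ 2 = ∑ i, ∑ j, (D i j) ^ 2 :=
        Fintype.sum_prod_type _
      rw [e1, e2, e3] at cs
      exact cs
    have h3 : Real.sqrt (∑ i, ∑ j, (B i j) ^ 2) ≤ Real.sqrt n := by
      apply Real.sqrt_le_sqrt
      rw [hfrobB]; exact htrB2
    calc (B * D).trace = ∑ i, ∑ j, B i j * D i j := h1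
      _ ≤ Real.sqrt (∑ i, ∑ j, (B i j) ^ 2) * Real.sqrt (∑ i, ∑ j, (D i j) ^ 2) := h2
      _ ≤ Real.sqrt n * Real.sqrt (∑ i, ∑ j, (D i j) ^ 2) :=
          mul_le_mul_of_nonneg_right h3 (Real.sqrt_nonneg _)
  -- step 5: log det inequality via A = S Q S
  set A : Matrix (Fin n) (Fin n) ℝ := S * Q * S with hAdef
  have hApsd : A.PosSemidef := by
    have := hQ.posSemidef.mul_mul_conjTranspose_same S
    rwa [hSh] at this
  have hdetA : A.det = Q.det * B.det := by
    rw [hAdef, Matrix.det_mul, Matrix.det_mul, ← hSS, Matrix.det_mul]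
    ring
  have hdetApos : 0 < A.det := by
    rw [hdetA]; exact mul_pos hQ.det_pos hPinv.det_pos
  have key1 : Real.log A.det ≤ A.trace - n := my_log_det_le hApsd hdetApos
  have htraceA : A.trace = (B * Q).trace := by
    rw [hAdef, Matrix.trace_mul_cycle, hSS]
  have hQP : Q = P + D := by
    rw [hQdef, hPdef, hDdef]; abel
  have hBQ : (B * Q).trace = n + (B * D).trace := by
    rw [hQP, mul_add, Matrix.trace_add, hBdef,
      Matrix.nonsing_inv_mul P (isUnit_iff_ne_zero.mpr hdetP), Matrix.trace_one,
      Fintype.card_fin]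
  have hlogA : Real.log A.det = Real.log Q.det - Real.log P.det := by
    rw [hdetA, Real.log_mul (ne_of_gt hQ.det_pos) hdetB, hBdef, Matrix.det_nonsing_inv,
      Ring.inverse_eq_inv', Real.log_inv]
    ring
  have hfin : Real.log Q.det ≤ Real.log P.det + (B * D).trace := by
    rw [← sub_le_iff_le_add', ← hlogA]
    calc Real.log A.det ≤ A.trace - n := key1
      _ = (B * D).trace := by rw [htraceA, hBQ]; ring
  have hDent : ∑ i, ∑ j, (D i j) ^ 2 = ∑ i, ∑ j, (M i j - H i j) ^ 2 := by
    simp [hDdef, Matrix.sub_apply]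
  calc Real.log Q.det ≤ Real.log P.det + (B * D).trace := hfin
    _ ≤ Real.log P.det + Real.sqrt n * Real.sqrt (∑ i, ∑ j, (D i j) ^ 2) := by linarith
    _ = Real.log P.det + Real.sqrt n * Real.sqrt (∑ i, ∑ j, (M i j - H i j) ^ 2) := by
        rw [hDent]
end

section
/- Let t, p be positive integers, X ∈ ℝ^{t×p}, ξ ∈ ℝ^t, θ* ∈ ℝ^p. Set Z = XᵀX + I_p (which is symmetric positive definite) and define the ridge-regression estimator θ̂ = Z⁻¹ Xᵀ (X θ* + ξ). Then for every vector x ∈ ℝ^p, |xᵀ(θ̂ − θ*)| ≤ ‖x‖_{Z⁻¹} · (‖Xᵀξ‖_{Z⁻¹} + ‖θ*‖₂), and consequently ‖θ̂ − θ*‖_Z ≤ ‖Xᵀξ‖_{Z⁻¹} + ‖θ*‖₂. -/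
open Matrix Finset

open scoped MatrixOrder in
noncomputable def Matrix.PosSemidef.sqrt {p : ℕ} {A : Matrix (Fin p) (Fin p) ℝ}
    (_hA : A.PosSemidef) : Matrix (Fin p) (Fin p) ℝ := CFC.sqrt A

open scoped MatrixOrder in
lemma Matrix.PosSemidef.sqrt_mul_self {p : ℕ} {A : Matrix (Fin p) (Fin p) ℝ}
    (hA : A.PosSemidef) : hA.sqrt * hA.sqrt = A := CFC.sqrt_mul_sqrt_self A hA.nonneg

open scoped MatrixOrder in
lemma Matrix.PosSemidef.posSemidef_sqrt {p : ℕ} {A : Matrix (Fin p) (Fin p) ℝ}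
    (hA : A.PosSemidef) : hA.sqrt.PosSemidef := (CFC.sqrt_nonneg A).posSemidef

lemma dp_sqrt {p : ℕ} {A : Matrix (Fin p) (Fin p) ℝ} (hA : A.PosSemidef) (x y : Fin p → ℝ) :
    x ⬝ᵥ A *ᵥ y = (hA.sqrt *ᵥ x) ⬝ᵥ (hA.sqrt *ᵥ y) := by
  have hs : (hA.sqrt)ᵀ = hA.sqrt := by
    rw [← conjTranspose_eq_transpose_of_trivial]
    exact hA.posSemidef_sqrt.isHermitian
  have hvm : x ᵥ* hA.sqrt = hA.sqrt *ᵥ x := by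
    conv_lhs => rw [← hs, vecMul_transpose]
  conv_lhs => rw [← hA.sqrt_mul_self]
  rw [← mulVec_mulVec, dotProduct_mulVec, hvm]

lemma cs_tri {p : ℕ} {A : Matrix (Fin p) (Fin p) ℝ} (hA : A.PosSemidef)
    (x u v : Fin p → ℝ) :
    |x ⬝ᵥ A *ᵥ (u - v)| ≤ Real.sqrt (x ⬝ᵥ A *ᵥ x) *
      (Real.sqrt (u ⬝ᵥ A *ᵥ u) + Real.sqrt (v ⬝ᵥ A *ᵥ v)) := by
  set S := hA.sqrt with hS
  let e : (Fin p → ℝ) → EuclideanSpace ℝ (Fin p) := fun a => WithLp.toLp 2 a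
  have hdp : ∀ a b : Fin p → ℝ, a ⬝ᵥ b = inner ℝ (e a) (e b) := by
    intro a b
    simp [dotProduct, PiLp.inner_apply, RCLike.inner_apply, e, mul_comm]
  have hnorm : ∀ a : Fin p → ℝ, Real.sqrt (a ⬝ᵥ a) = ‖e a‖ := by
    intro a
    rw [hdp, real_inner_self_eq_norm_sq, Real.sqrt_sq (norm_nonneg _)]
  have h1 : |x ⬝ᵥ A *ᵥ (u - v)| ≤ ‖e (S *ᵥ x)‖ * ‖e (S *ᵥ (u - v))‖ := by
    rw [dp_sqrt hA, hdp]
    exact abs_real_inner_le_norm _ _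
  have h2 : e (S *ᵥ (u - v)) = e (S *ᵥ u) - e (S *ᵥ v) := by
    simp only [e, mulVec_sub, WithLp.toLp_sub]
  have h3 : ‖e (S *ᵥ (u - v))‖ ≤ ‖e (S *ᵥ u)‖ + ‖e (S *ᵥ v)‖ := by
    rw [h2]; exact norm_sub_le _ _
  have hx : Real.sqrt (x ⬝ᵥ A *ᵥ x) = ‖e (S *ᵥ x)‖ := by rw [dp_sqrt hA, hnorm]
  have hu : Real.sqrt (u ⬝ᵥ A *ᵥ u) = ‖e (S *ᵥ u)‖ := by rw [dp_sqrt hA, hnorm]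
  have hv : Real.sqrt (v ⬝ᵥ A *ᵥ v) = ‖e (S *ᵥ v)‖ := by rw [dp_sqrt hA, hnorm]
  rw [hx, hu, hv]
  exact h1.trans (mul_le_mul_of_nonneg_left h3 (norm_nonneg _))

/-- Self-normalized bound for the ridge-regression estimator. -/
theorem stmt_3 (t p : ℕ) (ht : 0 < t) (hp : 0 < p)
    (X : Matrix (Fin t) (Fin p) ℝ) (ξ : Fin t → ℝ) (θs : Fin p → ℝ)
    (Z : Matrix (Fin p) (Fin p) ℝ) (hZ : Z = Xᵀ * X + 1)
    (θhat : Fin p → ℝ) (hθhat : θhat = Z⁻¹ *ᵥ (Xᵀ *ᵥ (X *ᵥ θs + ξ))) :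
    (∀ x : Fin p → ℝ,
      |x ⬝ᵥ (θhat - θs)| ≤ Real.sqrt (x ⬝ᵥ Z⁻¹ *ᵥ x) *
        (Real.sqrt ((Xᵀ *ᵥ ξ) ⬝ᵥ Z⁻¹ *ᵥ (Xᵀ *ᵥ ξ)) + Real.sqrt (∑ i, (θs i) ^ 2))) ∧
    Real.sqrt ((θhat - θs) ⬝ᵥ Z *ᵥ (θhat - θs)) ≤
      Real.sqrt ((Xᵀ *ᵥ ξ) ⬝ᵥ Z⁻¹ *ᵥ (Xᵀ *ᵥ ξ)) + Real.sqrt (∑ i, (θs i) ^ 2) := by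
  have hApsd : (Xᵀ * X).PosSemidef := by
    have := Matrix.posSemidef_conjTranspose_mul_self X
    rwa [conjTranspose_eq_transpose_of_trivial] at this
  have hZpd : Z.PosDef := hZ ▸ Matrix.PosDef.posSemidef_add hApsd Matrix.PosDef.one
  have hZinv : Z⁻¹.PosDef := hZpd.inv
  have hZdet : IsUnit Z.det := hZpd.det_pos.ne'.isUnit
  have hZt : Zᵀ = Z := by
    rw [← conjTranspose_eq_transpose_of_trivial]; exact hZpd.isHermitian
  -- symmetric move lemma
  have hmove : ∀ y v : Fin p → ℝ, (Z *ᵥ y) ⬝ᵥ v = y ⬝ᵥ Z *ᵥ v := by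
    intro y v
    conv_rhs => rw [dotProduct_mulVec]
    conv_lhs => rw [← hZt, mulVec_transpose]
  -- the difference vector
  have hw : θhat - θs = Z⁻¹ *ᵥ (Xᵀ *ᵥ ξ - θs) := by
    have h1 : Z⁻¹ *ᵥ (Z *ᵥ θs) = θs := by
      rw [mulVec_mulVec, nonsing_inv_mul Z hZdet, one_mulVec]
    have hXX : Xᵀ * X = Z - 1 := by rw [hZ, add_sub_cancel_right]
    have harg : Xᵀ *ᵥ (X *ᵥ θs + ξ) = Z *ᵥ θs + (Xᵀ *ᵥ ξ - θs) := by
      rw [mulVec_add, mulVec_mulVec, hXX, sub_mulVec, one_mulVec]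
      abel
    rw [hθhat, harg, mulVec_add, h1]
    abel
  -- θs ⬝ Z⁻¹ θs ≤ ∑ θs i ^2
  have hθbound : θs ⬝ᵥ Z⁻¹ *ᵥ θs ≤ ∑ i, (θs i) ^ 2 := by
    set y := Z⁻¹ *ᵥ θs with hy
    have hθy : θs = Z *ᵥ y := by
      rw [hy, mulVec_mulVec, mul_nonsing_inv Z hZdet, one_mulVec]
    have hsum : ∑ i, (θs i) ^ 2 = θs ⬝ᵥ θs := by
      simp [dotProduct, pow_two]
    have hM : (Z * Z - Z).PosSemidef := by
      have h2 : Z * Z - Z = (Xᵀ * X) * (Xᵀ * X) + Xᵀ * X := by rw [hZ]; noncomm_ring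
      have hAA : ((Xᵀ * X) * (Xᵀ * X)).PosSemidef := by
        have := Matrix.posSemidef_conjTranspose_mul_self (Xᵀ * X)
        rwa [conjTranspose_eq_transpose_of_trivial,
          (show (Xᵀ * X)ᵀ = Xᵀ * X by
            rw [← conjTranspose_eq_transpose_of_trivial]; exact hApsd.isHermitian)] at this
      rw [h2]; exact hAA.add hApsd
    have h0 : 0 ≤ y ⬝ᵥ (Z * Z - Z) *ᵥ y := by
      have := hM.dotProduct_mulVec_nonneg y
      simpa using this
    have e1 : θs ⬝ᵥ Z⁻¹ *ᵥ θs = y ⬝ᵥ Z *ᵥ y := by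
      conv_lhs => rw [← hy, hθy, hmove]
    have e2 : θs ⬝ᵥ θs = y ⬝ᵥ (Z * Z) *ᵥ y := by
      conv_lhs => rw [hθy, hmove, mulVec_mulVec]
    have e3 : y ⬝ᵥ (Z * Z - Z) *ᵥ y = y ⬝ᵥ (Z * Z) *ᵥ y - y ⬝ᵥ Z *ᵥ y := by
      rw [sub_mulVec, dotProduct_sub]
    rw [hsum, e1, e2]
    linarith [h0, e3 ▸ h0]
  have hθb' : Real.sqrt (θs ⬝ᵥ Z⁻¹ *ᵥ θs) ≤ Real.sqrt (∑ i, (θs i) ^ 2) :=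
    Real.sqrt_le_sqrt hθbound
  have part1 : ∀ x : Fin p → ℝ,
      |x ⬝ᵥ (θhat - θs)| ≤ Real.sqrt (x ⬝ᵥ Z⁻¹ *ᵥ x) *
        (Real.sqrt ((Xᵀ *ᵥ ξ) ⬝ᵥ Z⁻¹ *ᵥ (Xᵀ *ᵥ ξ)) + Real.sqrt (∑ i, (θs i) ^ 2)) := by
    intro x
    rw [hw]
    calc |x ⬝ᵥ Z⁻¹ *ᵥ (Xᵀ *ᵥ ξ - θs)|
        ≤ Real.sqrt (x ⬝ᵥ Z⁻¹ *ᵥ x) *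
          (Real.sqrt ((Xᵀ *ᵥ ξ) ⬝ᵥ Z⁻¹ *ᵥ (Xᵀ *ᵥ ξ)) + Real.sqrt (θs ⬝ᵥ Z⁻¹ *ᵥ θs)) :=
          cs_tri hZinv.posSemidef x (Xᵀ *ᵥ ξ) θs
      _ ≤ _ := by
          apply mul_le_mul_of_nonneg_left _ (Real.sqrt_nonneg _)
          linarith
  refine ⟨part1, ?_⟩
  set w := θhat - θs with hwdef
  set C := Real.sqrt ((Xᵀ *ᵥ ξ) ⬝ᵥ Z⁻¹ *ᵥ (Xᵀ *ᵥ ξ)) + Real.sqrt (∑ i, (θs i) ^ 2) with hC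
  have hCnn : 0 ≤ C := add_nonneg (Real.sqrt_nonneg _) (Real.sqrt_nonneg _)
  set E := w ⬝ᵥ Z *ᵥ w with hE
  have hEnn : 0 ≤ E := by
    have := hZpd.posSemidef.dotProduct_mulVec_nonneg w
    simpa using this
  have key := part1 (Z *ᵥ w)
  have e1 : (Z *ᵥ w) ⬝ᵥ w = E := by rw [hmove]
  have e2 : (Z *ᵥ w) ⬝ᵥ Z⁻¹ *ᵥ (Z *ᵥ w) = E := by
    rw [hmove, mulVec_mulVec, mulVec_mulVec,
      mul_nonsing_inv Z hZdet, Matrix.one_mul]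
  rw [e1, e2] at key
  have key' : E ≤ Real.sqrt E * C := (le_abs_self _).trans key
  rcases eq_or_lt_of_le hEnn with h | h
  · rw [← h, Real.sqrt_zero]; exact hCnn
  · have hs : 0 < Real.sqrt E := Real.sqrt_pos.2 h
    have : Real.sqrt E * Real.sqrt E ≤ Real.sqrt E * C := by
      rwa [Real.mul_self_sqrt hEnn]
    exact le_of_mul_le_mul_left this hs
end

section
/- Let T, p be positive integers, φ_1, ..., φ_T ∈ ℝ^p, and I_1, ..., I_T ∈ {0, 1}. Set Z_0 = I_p (the p×p identity) and Z_t = Z_{t-1} + I_t φ_t φ_tᵀ for t = 1, ..., T. Let δ ∈ (0, 1), S ≥ 0, γ_t = √(log det Z_t + 2 log(1/δ)) + S, and B_t = 2 γ_{t-1} ‖φ_t‖_{Z_{t-1}⁻¹}. Then for every real b > 0, Σ_{t=1}^T min(b, I_t B_t²) ≤ 8 · (log det Z_T + 2 log(1/δ) + S² + b/8) · log det Z_T. -/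
open Matrix Finset

private lemma key_min (C b x : ℝ) (hC : 0 ≤ C) (hb : 0 < b) (hx : 0 ≤ x) :
    min b (C * x) ≤ (C + b) * Real.log (1 + x) := by
  have h1x : (0:ℝ) < 1 + x := by linarith
  have hlog : x / (1 + x) ≤ Real.log (1 + x) := by
    have h := Real.log_le_sub_one_of_pos (x := (1+x)⁻¹) (by positivity)
    rw [Real.log_inv] at h
    have h2 : (1+x)⁻¹ - 1 = -(x/(1+x)) := by field_simp; ring
    linarith
  have hx' : x ≤ (1 + x) * Real.log (1 + x) := by
    rw [div_le_iff₀ h1x] at hlog; linarith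
  have hmin1 : min b (C * x) ≤ C * x := min_le_right _ _
  have hmin2 : min b (C * x) ≤ b := min_le_left _ _
  have hstep : min b (C * x) * (1 + x) ≤ (C + b) * x := by
    have h3 : min b (C*x) * x ≤ b * x := mul_le_mul_of_nonneg_right hmin2 hx
    nlinarith
  have hstep2 : (C + b) * x ≤ ((C + b) * Real.log (1 + x)) * (1 + x) := by
    have := mul_le_mul_of_nonneg_left hx' (by linarith : (0:ℝ) ≤ C + b)
    nlinarith
  have := hstep.trans hstep2
  exact le_of_mul_le_mul_right this h1x

private lemma mono_of_step (f : ℕ → ℝ) (T : ℕ) (h : ∀ t < T, f t ≤ f (t+1)) :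
    ∀ t ≤ T, f t ≤ f T := by
  induction T with
  | zero => intro t ht; simp [Nat.le_zero.mp ht]
  | succ T ih =>
    intro t ht
    rcases eq_or_lt_of_le ht with h' | h'
    · rw [h']
    · exact (ih (fun s hs => h s (hs.trans (Nat.lt_succ_self T))) t (Nat.lt_succ_iff.mp h')).trans
        (h T (Nat.lt_succ_self T))

/-- Clipped sum of squared query thresholds of the frozen-NTK selective sampler
(Lemma on the log-determinant term). Rounds are indexed `0, ..., T-1`, with
`Z t` the covariance matrix *before* round `t` (so `Z 0 = I`). -/
theorem stmt_9 (T p : ℕ) (hT : 0 < T) (hp : 0 < p)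
    (φ : ℕ → Fin p → ℝ) (I : ℕ → ℝ)
    (hI : ∀ t < T, I t = 0 ∨ I t = 1)
    (δ S : ℝ) (hδ : δ ∈ Set.Ioo (0 : ℝ) 1) (hS : 0 ≤ S)
    (Z : ℕ → Matrix (Fin p) (Fin p) ℝ) (hZ0 : Z 0 = 1)
    (hZ : ∀ t < T, Z (t + 1) = Z t + I t • vecMulVec (φ t) (φ t))
    (γ B : ℕ → ℝ)
    (hγ : ∀ t < T, γ t = Real.sqrt (Real.log (Z t).det + 2 * Real.log (1 / δ)) + S)
    (hB : ∀ t < T, B t = 2 * γ t * Real.sqrt (φ t ⬝ᵥ (Z t)⁻¹ *ᵥ φ t))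
    (b : ℝ) (hb : 0 < b) :
    ∑ t ∈ Finset.range T, min b (I t * (B t) ^ 2) ≤
      8 * (Real.log (Z T).det + 2 * Real.log (1 / δ) + S ^ 2 + b / 8)
        * Real.log (Z T).det := by
  obtain ⟨hδ0, hδ1⟩ := hδ
  -- positive definiteness of all Z t
  have hPD : ∀ t, t ≤ T → (Z t).PosDef := by
    intro t
    induction t with
    | zero => intro _; rw [hZ0]; exact Matrix.PosDef.one
    | succ t ih =>
      intro ht
      have ht' : t < T := ht
      rw [hZ t ht']
      refine (ih ht'.le).add_posSemidef ?_
      rcases hI t ht' with h | h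
      · rw [h, zero_smul]; exact Matrix.PosSemidef.zero
      · rw [h, one_smul, vecMulVec_eq Unit]
        have h2 := Matrix.posSemidef_conjTranspose_mul_self (Matrix.replicateRow Unit (φ t))
        simpa using h2
  -- nonnegativity of quadratic forms
  have hq : ∀ t, t < T → 0 ≤ φ t ⬝ᵥ (Z t)⁻¹ *ᵥ φ t := by
    intro t ht
    have h := ((hPD t ht.le).inv).posSemidef.dotProduct_mulVec_nonneg (φ t)
    simpa using h
  set x : ℕ → ℝ := fun t => I t * (φ t ⬝ᵥ (Z t)⁻¹ *ᵥ φ t) with hxdef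
  have hxnn : ∀ t, t < T → 0 ≤ x t := by
    intro t ht
    rcases hI t ht with h | h
    · simp [hxdef, h]
    · simpa [hxdef, h] using hq t ht
  -- determinant recursion
  have hdet : ∀ t, t < T → (Z (t+1)).det = (Z t).det * (1 + x t) := by
    intro t ht
    rcases hI t ht with h | h
    · rw [hZ t ht, h, zero_smul, add_zero]
      simp [hxdef, h]
    · rw [hZ t ht, h, one_smul, vecMulVec_eq Unit]
      have hup : IsUnit (Z t).det := (hPD t ht.le).det_pos.ne'.isUnit
      rw [Matrix.det_add_replicateCol_mul_replicateRow hup]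
      congr 1
      rw [Matrix.det_unique]
      have hcol : (Z t)⁻¹ * Matrix.replicateCol Unit (φ t) = Matrix.replicateCol Unit ((Z t)⁻¹ *ᵥ φ t) :=
        (Matrix.replicateCol_mulVec _ _).symm
      rw [Matrix.mul_assoc, hcol]
      simp [hxdef, h]
  -- determinants are at least 1
  have hdet1 : ∀ t, t ≤ T → 1 ≤ (Z t).det := by
    intro t
    induction t with
    | zero => intro _; rw [hZ0]; simp
    | succ t ih =>
      intro ht
      have ht' : t < T := ht
      rw [hdet t ht']
      have h1 := ih ht'.le
      have h2 := hxnn t ht'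
      nlinarith
  -- determinants are monotone up to T
  have hdetmono : ∀ t, t ≤ T → (Z t).det ≤ (Z T).det := by
    refine mono_of_step _ T ?_
    intro t ht
    rw [hdet t ht]
    have h1 := hdet1 t ht.le
    have h2 := hxnn t ht
    nlinarith
  have hA0 : 0 ≤ Real.log (Z T).det := Real.log_nonneg (hdet1 T le_rfl)
  have hlogδ : 0 ≤ Real.log (1/δ) := Real.log_nonneg (one_le_one_div hδ0 hδ1.le)
  set A := Real.log (Z T).det with hAdef
  set C : ℝ := 8 * (A + 2 * Real.log (1/δ) + S ^ 2) with hCdef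
  have hC0 : 0 ≤ C := by positivity
  -- telescoping of log det
  have htel : ∀ n, n ≤ T → Real.log (Z n).det = ∑ t ∈ Finset.range n, Real.log (1 + x t) := by
    intro n
    induction n with
    | zero => intro _; simp [hZ0]
    | succ n ih =>
      intro hn
      have hn' : n < T := hn
      rw [Finset.sum_range_succ, ← ih hn'.le, hdet n hn',
        Real.log_mul (by nlinarith [hdet1 n hn'.le]) (by nlinarith [hxnn n hn'])]
  -- per-term bound
  have hterm : ∀ t ∈ Finset.range T,
      min b (I t * (B t) ^ 2) ≤ (C + b) * Real.log (1 + x t) := by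
    intro t ht'
    have ht : t < T := Finset.mem_range.mp ht'
    have hqt := hq t ht
    have hBt : I t * (B t) ^ 2 = (4 * (γ t) ^ 2) * x t := by
      have hsq : Real.sqrt (φ t ⬝ᵥ (Z t)⁻¹ *ᵥ φ t) ^ 2 = φ t ⬝ᵥ (Z t)⁻¹ *ᵥ φ t :=
        Real.sq_sqrt hqt
      simp only [hxdef]
      rw [hB t ht, mul_pow, mul_pow, hsq]
      ring
    have hat : 0 ≤ Real.log (Z t).det + 2 * Real.log (1/δ) := by
      have := Real.log_nonneg (hdet1 t ht.le)
      linarith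
    have haT : Real.log (Z t).det ≤ A := by
      rw [hAdef]
      exact Real.log_le_log (by linarith [hdet1 t ht.le]) (hdetmono t ht.le)
    have hγsq : 4 * (γ t) ^ 2 ≤ C := by
      rw [hγ t ht, hCdef]
      have hs := Real.sq_sqrt hat
      have hsn := Real.sqrt_nonneg (Real.log (Z t).det + 2 * Real.log (1/δ))
      nlinarith [sq_nonneg (Real.sqrt (Real.log (Z t).det + 2 * Real.log (1/δ)) - S)]
    have h1 : I t * (B t) ^ 2 ≤ C * x t := by
      rw [hBt]
      exact mul_le_mul_of_nonneg_right hγsq (hxnn t ht)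
    calc min b (I t * (B t) ^ 2) ≤ min b (C * x t) := min_le_min le_rfl h1
      _ ≤ (C + b) * Real.log (1 + x t) := key_min C b (x t) hC0 hb (hxnn t ht)
  calc ∑ t ∈ Finset.range T, min b (I t * (B t) ^ 2)
      ≤ ∑ t ∈ Finset.range T, (C + b) * Real.log (1 + x t) := Finset.sum_le_sum hterm
    _ = (C + b) * ∑ t ∈ Finset.range T, Real.log (1 + x t) := by rw [Finset.mul_sum]
    _ = (C + b) * A := by rw [← htel T le_rfl]
    _ = 8 * (A + 2 * Real.log (1 / δ) + S ^ 2 + b / 8) * A := by rw [hCdef]; ring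
end

section
/- Let T, p be positive integers, φ_1, ..., φ_T ∈ ℝ^p, δ ∈ (0, 1), S ≥ 0. Set Z_0 = I_p, and let Δ̂_t, Δ_t be real numbers satisfying |Δ_t| ≤ 1/2, Δ̂_t ≥ 0 and 0 ≤ Δ̂_t − Δ_t ≤ B_t, where γ_t = √(log det Z_t + 2 log(1/δ)) + S, B_t = 2 γ_{t-1} ‖φ_t‖_{Z_{t-1}⁻¹}, I_t = 1{Δ̂_t ≤ B_t}, and Z_t = Z_{t-1} + I_t φ_t φ_tᵀ for t = 1, ..., T. Then for every ε ∈ (0, 1/2), 2 Σ_{t=1}^T I_t |Δ_t| ≤ 2ε · #{t ∈ [T] : |Δ_t| ≤ ε} + (16/ε) · (log det Z_T + 2 log(1/δ) + S² + 1/16) · log det Z_T. -/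
open Matrix Finset

lemma aux_vecMulVec_posSemidef {p : ℕ} (v : Fin p → ℝ) : (vecMulVec v v).PosSemidef := by
  apply PosSemidef.of_dotProduct_mulVec_nonneg
  · ext i j
    simp [Matrix.IsHermitian, conjTranspose_apply, vecMulVec_apply, mul_comm]
  · intro x
    have hx : dotProduct (star x) (vecMulVec v v *ᵥ x) = (v ⬝ᵥ x) * (v ⬝ᵥ x) := by
      simp only [star_trivial, dotProduct, mulVec, vecMulVec_apply, Finset.mul_sum,
        Finset.sum_mul]
      rw [Finset.sum_comm]
      congr 1; ext j; congr 1; ext i; ring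
    rw [hx]
    exact mul_self_nonneg _

lemma aux_quad_nonneg {p : ℕ} {M : Matrix (Fin p) (Fin p) ℝ} (hM : M.PosSemidef)
    (v : Fin p → ℝ) : 0 ≤ v ⬝ᵥ M *ᵥ v := by
  simpa [star_trivial] using hM.dotProduct_mulVec_nonneg v

lemma aux_detLemma {p : ℕ} {A : Matrix (Fin p) (Fin p) ℝ} (hA : A.PosDef) (u : Fin p → ℝ) :
    (A + vecMulVec u u).det = A.det * (1 + u ⬝ᵥ A⁻¹ *ᵥ u) := by
  rw [vecMulVec_eq Unit, Matrix.det_add_replicateCol_mul_replicateRow hA.det_pos.ne'.isUnit]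
  congr 1
  rw [det_unique]
  simp only [Matrix.add_apply, Matrix.one_apply_eq, Matrix.mul_apply, Matrix.replicateRow, Matrix.replicateCol,
    Matrix.of_apply, dotProduct, mulVec, Finset.mul_sum, Finset.sum_mul, Finset.univ_unique,
    Finset.sum_singleton]
  congr 1
  rw [Finset.sum_comm]
  exact Finset.sum_congr rfl fun i _ => Finset.sum_congr rfl fun j _ => by ring

set_option maxHeartbeats 1000000 in
/-- Cumulative-regret bound over queried rounds for the frozen-NTK selective
sampler. Rounds are indexed `0, ..., T-1`; `Z t` is the covariance matrix
before round `t` (`Z 0 = I`), and `γ, B, I, Z` are defined by the mutual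
recursion of the algorithm. -/
theorem stmt_11 (T p : ℕ) (hT : 0 < T) (hp : 0 < p)
    (φ : ℕ → Fin p → ℝ) (δ S : ℝ) (hδ : δ ∈ Set.Ioo (0 : ℝ) 1) (hS : 0 ≤ S)
    (Z : ℕ → Matrix (Fin p) (Fin p) ℝ) (hZ0 : Z 0 = 1)
    (γ B I : ℕ → ℝ) (Δhat Δ : ℕ → ℝ)
    (hγ : ∀ t < T, γ t = Real.sqrt (Real.log (Z t).det + 2 * Real.log (1 / δ)) + S)
    (hB : ∀ t < T, B t = 2 * γ t * Real.sqrt (φ t ⬝ᵥ (Z t)⁻¹ *ᵥ φ t))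
    (hI : ∀ t < T, I t = if Δhat t ≤ B t then (1 : ℝ) else 0)
    (hZ : ∀ t < T, Z (t + 1) = Z t + I t • vecMulVec (φ t) (φ t))
    (hΔbd : ∀ t < T, |Δ t| ≤ 1 / 2)
    (hΔhat : ∀ t < T, 0 ≤ Δhat t)
    (hΔl : ∀ t < T, 0 ≤ Δhat t - Δ t)
    (hΔu : ∀ t < T, Δhat t - Δ t ≤ B t)
    (ε : ℝ) (hε : 0 < ε) (hε' : ε < 1 / 2) :
    2 * ∑ t ∈ Finset.range T, I t * |Δ t| ≤
      2 * ε * ((Finset.range T).filter (fun t => |Δ t| ≤ ε)).card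
        + (16 / ε) * (Real.log (Z T).det + 2 * Real.log (1 / δ) + S ^ 2 + 1 / 16)
            * Real.log (Z T).det := by
  obtain ⟨hδ0, hδ1⟩ := hδ
  have hlogδ : 0 < Real.log (1 / δ) := Real.log_pos (by rw [lt_div_iff₀ hδ0]; linarith)
  set w : ℕ → ℝ := fun t => φ t ⬝ᵥ (Z t)⁻¹ *ᵥ φ t with hwdef
  -- key induction: positive definiteness and the determinant telescoping formula
  have key : ∀ t, t ≤ T → (Z t).PosDef ∧
      Real.log (Z t).det = ∑ s ∈ Finset.range t, I s * Real.log (1 + w s) := by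
    intro t
    induction t with
    | zero => intro _; rw [hZ0]; simp [Matrix.PosDef.one]
    | succ t ih =>
      intro h
      have htT : t < T := h
      obtain ⟨hPD, hdet⟩ := ih htT.le
      have hw0 : 0 ≤ w t := aux_quad_nonneg hPD.inv.posSemidef _
      by_cases hq : Δhat t ≤ B t
      · have hIt : I t = 1 := by rw [hI t htT, if_pos hq]
        have hZs : Z (t + 1) = Z t + vecMulVec (φ t) (φ t) := by
          rw [hZ t htT, hIt, one_smul]
        refine ⟨by rw [hZs]; exact hPD.add_posSemidef (aux_vecMulVec_posSemidef _), ?_⟩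
        rw [hZs, aux_detLemma hPD, Real.log_mul hPD.det_pos.ne' (by positivity),
          Finset.sum_range_succ, hIt, one_mul, hdet]
      · have hIt : I t = 0 := by rw [hI t htT, if_neg hq]
        have hZs : Z (t + 1) = Z t := by rw [hZ t htT, hIt, zero_smul, add_zero]
        rw [hZs, Finset.sum_range_succ, hIt]
        exact ⟨hPD, by rw [hdet]; ring⟩
  have hI01 : ∀ t, t < T → I t = 0 ∨ I t = 1 := by
    intro t ht; rw [hI t ht]; split <;> simp
  have hwnn : ∀ t, t < T → 0 ≤ w t := fun t ht =>
    aux_quad_nonneg ((key t ht.le).1).inv.posSemidef _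
  have hlognn : ∀ t, t < T → 0 ≤ Real.log (1 + w t) := fun t ht =>
    Real.log_nonneg (by linarith [hwnn t ht])
  have htermnn : ∀ t, t < T → 0 ≤ I t * Real.log (1 + w t) := by
    intro t ht
    rcases hI01 t ht with h | h <;> rw [h]
    · simp
    · simpa using hlognn t ht
  have hlogZT : Real.log (Z T).det = ∑ s ∈ Finset.range T, I s * Real.log (1 + w s) :=
    (key T le_rfl).2
  have hZTnn : 0 ≤ Real.log (Z T).det := by
    rw [hlogZT]
    exact Finset.sum_nonneg fun s hs => htermnn s (Finset.mem_range.mp hs)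
  have hmono : ∀ t, t < T → Real.log (Z t).det ≤ Real.log (Z T).det := by
    intro t ht
    rw [(key t ht.le).2, hlogZT]
    exact Finset.sum_le_sum_of_subset_of_nonneg (Finset.range_subset_range.mpr ht.le)
      (fun s hs _ => htermnn s (Finset.mem_range.mp hs))
  set L : ℝ := Real.log (Z T).det + 2 * Real.log (1 / δ) with hLdef
  have hL0 : 0 ≤ L := by rw [hLdef]; linarith
  -- pointwise bound on large-margin rounds
  have hbig : ∀ t ∈ (Finset.range T).filter (fun t => ¬|Δ t| ≤ ε),
      I t * |Δ t| ≤ ((8 * L + 8 * S ^ 2 + 1 / 4) / ε) * (I t * Real.log (1 + w t)) := by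
    intro t htm
    rw [Finset.mem_filter, Finset.mem_range] at htm
    obtain ⟨htT, hεΔ⟩ := htm
    push_neg at hεΔ
    by_cases hq : Δhat t ≤ B t
    · have hIt : I t = 1 := by rw [hI t htT, if_pos hq]
      rw [hIt, one_mul, one_mul]
      have hw0 := hwnn t htT
      have hℓ0 : 0 ≤ Real.log (Z t).det + 2 * Real.log (1 / δ) := by
        have h1 : 0 ≤ Real.log (Z t).det := by
          rw [(key t htT.le).2]
          exact Finset.sum_nonneg fun s hs =>
            htermnn s (lt_of_lt_of_le (Finset.mem_range.mp hs) htT.le)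
        linarith
      have hγt := hγ t htT
      have hγ0 : 0 ≤ γ t := by rw [hγt]; positivity
      have hB2 : B t ^ 2 = 4 * γ t ^ 2 * w t := by
        rw [hB t htT, mul_pow, mul_pow, Real.sq_sqrt hw0]; ring
      have hB0 : 0 ≤ B t := by rw [hB t htT]; positivity
      have hΔle : |Δ t| ≤ B t := by
        have h1 := hΔl t htT
        have h2 := hΔu t htT
        have h3 := hΔhat t htT
        rw [abs_le]; constructor <;> linarith
      set m : ℝ := min (1 / 2) (B t) with hmdef
      have hΔm : |Δ t| ≤ m := le_min (hΔbd t htT) hΔle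
      have hεm : ε < m := lt_of_lt_of_le hεΔ hΔm
      have hm0 : 0 < m := lt_trans hε hεm
      have hmB : m ≤ B t := min_le_right _ _
      have hmh : m ≤ 1 / 2 := min_le_left _ _
      have h1 : |Δ t| ≤ m ^ 2 / ε := by
        rw [le_div_iff₀ hε]
        have := mul_le_mul hΔm hεm.le hε.le hm0.le
        calc |Δ t| * ε ≤ m * m := this
          _ = m ^ 2 := (pow_two m).symm
      have h1w : (0 : ℝ) < 1 + w t := by linarith
      have hm2 : m ^ 2 ≤ (4 * γ t ^ 2 + 1 / 4) * (w t / (1 + w t)) := by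
        rw [← mul_div_assoc, le_div_iff₀ h1w]
        have hmB2 : m ^ 2 ≤ 4 * γ t ^ 2 * w t := by
          rw [← hB2]; exact pow_le_pow_left₀ hm0.le hmB 2
        have hm14 : m ^ 2 ≤ 1 / 4 := by
          calc m ^ 2 ≤ (1 / 2 : ℝ) ^ 2 := pow_le_pow_left₀ hm0.le hmh 2
            _ = 1 / 4 := by norm_num
        have hmw : m ^ 2 * w t ≤ 1 / 4 * w t := mul_le_mul_of_nonneg_right hm14 hw0
        rcases le_total (4 * γ t ^ 2 * w t) (1 / 4) with hc | hc
        · nlinarith [hmB2, hmw]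
        · nlinarith [hm14, hmw, hc]
      have hlogw : w t / (1 + w t) ≤ Real.log (1 + w t) := by
        have h2 := Real.log_le_sub_one_of_pos (show (0 : ℝ) < (1 + w t)⁻¹ by positivity)
        rw [Real.log_inv] at h2
        have h3 : (1 + w t)⁻¹ - 1 = -(w t / (1 + w t)) := by field_simp; ring
        linarith
      have hγsq : γ t ^ 2 ≤ 2 * L + 2 * S ^ 2 := by
        rw [hγt, hLdef]
        have hs := Real.sq_sqrt hℓ0
        have hmon := hmono t htT
        nlinarith [sq_nonneg (Real.sqrt (Real.log (Z t).det + 2 * Real.log (1 / δ)) - S),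
          Real.sqrt_nonneg (Real.log (Z t).det + 2 * Real.log (1 / δ))]
      calc |Δ t| ≤ m ^ 2 / ε := h1
        _ ≤ ((4 * γ t ^ 2 + 1 / 4) * Real.log (1 + w t)) / ε := by
            gcongr
            calc m ^ 2 ≤ (4 * γ t ^ 2 + 1 / 4) * (w t / (1 + w t)) := hm2
              _ ≤ (4 * γ t ^ 2 + 1 / 4) * Real.log (1 + w t) := by
                  apply mul_le_mul_of_nonneg_left hlogw
                  positivity
        _ ≤ ((8 * L + 8 * S ^ 2 + 1 / 4) / ε) * Real.log (1 + w t) := by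
            rw [div_mul_eq_mul_div]
            gcongr
            · exact hlognn t htT
            · linarith
    · have hIt : I t = 0 := by rw [hI t htT, if_neg hq]
      simp [hIt]
  -- sum over small-margin rounds
  have hsmall : ∑ t ∈ (Finset.range T).filter (fun t => |Δ t| ≤ ε), I t * |Δ t|
      ≤ ε * ((Finset.range T).filter (fun t => |Δ t| ≤ ε)).card := by
    rw [mul_comm]
    refine le_trans (Finset.sum_le_card_nsmul _ _ ε ?_) (le_of_eq (nsmul_eq_mul _ _))
    intro t htm
    rw [Finset.mem_filter, Finset.mem_range] at htm
    rcases hI01 t htm.1 with h | h <;> rw [h]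
    · simpa using hε.le
    · simpa using htm.2
  -- sum over large-margin rounds
  have hcoeff : 0 ≤ (8 * L + 8 * S ^ 2 + 1 / 4) / ε := by
    apply div_nonneg _ hε.le
    nlinarith [sq_nonneg S]
  have hbigsum : ∑ t ∈ (Finset.range T).filter (fun t => ¬|Δ t| ≤ ε), I t * |Δ t|
      ≤ ((8 * L + 8 * S ^ 2 + 1 / 4) / ε) * Real.log (Z T).det := by
    calc ∑ t ∈ (Finset.range T).filter (fun t => ¬|Δ t| ≤ ε), I t * |Δ t|
        ≤ ∑ t ∈ (Finset.range T).filter (fun t => ¬|Δ t| ≤ ε),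
            ((8 * L + 8 * S ^ 2 + 1 / 4) / ε) * (I t * Real.log (1 + w t)) :=
          Finset.sum_le_sum hbig
      _ = ((8 * L + 8 * S ^ 2 + 1 / 4) / ε) *
            ∑ t ∈ (Finset.range T).filter (fun t => ¬|Δ t| ≤ ε), I t * Real.log (1 + w t) := by
          rw [Finset.mul_sum]
      _ ≤ ((8 * L + 8 * S ^ 2 + 1 / 4) / ε) *
            ∑ t ∈ Finset.range T, I t * Real.log (1 + w t) := by
          apply mul_le_mul_of_nonneg_left _ hcoeff
          exact Finset.sum_le_sum_of_subset_of_nonneg (Finset.filter_subset _ _)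
            (fun s hs _ => htermnn s (Finset.mem_range.mp hs))
      _ = ((8 * L + 8 * S ^ 2 + 1 / 4) / ε) * Real.log (Z T).det := by rw [hlogZT]
  have hco : 2 * (((8 * L + 8 * S ^ 2 + 1 / 4) / ε) * Real.log (Z T).det)
      ≤ (16 / ε) * (L + S ^ 2 + 1 / 16) * Real.log (Z T).det := by
    have h1 : 2 * ((8 * L + 8 * S ^ 2 + 1 / 4) / ε) ≤ (16 / ε) * (L + S ^ 2 + 1 / 16) := by
      rw [show (16 : ℝ) / ε * (L + S ^ 2 + 1 / 16) = (16 * (L + S ^ 2 + 1 / 16)) / ε by ring,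
        show (2 : ℝ) * ((8 * L + 8 * S ^ 2 + 1 / 4) / ε) = (2 * (8 * L + 8 * S ^ 2 + 1 / 4)) / ε
          by ring]
      exact (div_le_div_iff_of_pos_right hε).mpr (by linarith)
    calc 2 * (((8 * L + 8 * S ^ 2 + 1 / 4) / ε) * Real.log (Z T).det)
        = (2 * ((8 * L + 8 * S ^ 2 + 1 / 4) / ε)) * Real.log (Z T).det := by ring
      _ ≤ (16 / ε) * (L + S ^ 2 + 1 / 16) * Real.log (Z T).det :=
          mul_le_mul_of_nonneg_right h1 hZTnn
  rw [← Finset.sum_filter_add_sum_filter_not (Finset.range T) (fun t => |Δ t| ≤ ε)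
    (fun t => I t * |Δ t|)]
  linarith [hsmall, hbigsum, hco]
end

section
/- Let (Ω, 𝓕, P) be a probability space with a filtration (𝓕_t)_{t≥0}, and let (Y_t)_{t≥1} be a martingale difference sequence, i.e., Y_t is 𝓕_t-measurable and E[Y_t | 𝓕_{t−1}] = 0 almost surely. Let (G_t)_{t≥1} and (H_t)_{t≥1} be predictable sequences (G_t, H_t are 𝓕_{t−1}-measurable) with −G_t ≤ Y_t ≤ H_t almost surely. Fix m > 0 and δ ∈ (0, 1), and set W_t = (1/4) Σ_{i=1}^t (G_i + H_i)². Then with probability at least 1 − δ, simultaneously for all t ∈ ℕ: Σ_{i=1}^t Y_i ≤ 1.44 · √( max(W_t, m) · ( 1.4 · log log( 2 · max(W_t/m, 1) ) + log(5.2/δ) ) ). -/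
open MeasureTheory Finset

section Scalar

open Real


lemma hoeff_log (p : ℝ) (hp0 : 0 ≤ p) (hp1 : p ≤ 1) :
    ∀ u : ℝ, 0 ≤ u → Real.log (1 - p + p * Real.exp u) - p * u ≤ u ^ 2 / 8 := by
  have hD : ∀ u : ℝ, 0 < 1 - p + p * Real.exp u := by
    intro u
    rcases eq_or_lt_of_le hp0 with h | h
    · simp [← h]
    · nlinarith [Real.exp_pos u, h]
  set D : ℝ → ℝ := fun u => 1 - p + p * Real.exp u with hDdef
  have hD' : ∀ u, HasDerivAt D (p * Real.exp u) u := by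
    intro u
    exact ((Real.hasDerivAt_exp u).const_mul p).const_add (1 - p)
  set f : ℝ → ℝ := fun u => u ^ 2 / 8 + p * u - Real.log (D u) with hfdef
  set f' : ℝ → ℝ := fun u => u / 4 + p - p * Real.exp u / D u with hf'def
  have hf : ∀ u, HasDerivAt f (f' u) u := by
    intro u
    have h1 : HasDerivAt (fun u : ℝ => u ^ 2 / 8 + p * u) (u / 4 + p) u := by
      have := ((hasDerivAt_pow 2 u).div_const 8).add ((hasDerivAt_id u).const_mul p)
      exact this.congr_deriv (by ring)
    exact h1.sub ((hD' u).log (hD u).ne')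
  have hf' : ∀ u, HasDerivAt f' (1 / 4 - p * Real.exp u * (1 - p) / (D u) ^ 2) u := by
    intro u
    have h1 : HasDerivAt (fun u : ℝ => u / 4 + p) (1 / 4) u := by
      simpa using ((hasDerivAt_id u).div_const 4).add_const p
    have h2 : HasDerivAt (fun u => p * Real.exp u / D u)
        ((p * Real.exp u * D u - p * Real.exp u * (p * Real.exp u)) / (D u) ^ 2) u :=
      ((Real.hasDerivAt_exp u).const_mul p).div (hD' u) (hD u).ne'
    have := h1.sub h2
    refine this.congr_deriv ?_
    have hd := (hD u).ne'
    simp only [hDdef]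
    field_simp
    ring
  have hf'nonneg : ∀ u : ℝ, 0 ≤ u → 0 ≤ f' u := by
    have hmono : MonotoneOn f' (Set.Ici (0:ℝ)) := by
      apply monotoneOn_of_deriv_nonneg (convex_Ici 0)
      · exact fun x _ => ((hf' x).continuousAt).continuousWithinAt
      · exact fun x _ => ((hf' x).differentiableAt).differentiableWithinAt
      · intro x _
        rw [(hf' x).deriv]
        have h := hD x
        have hex := Real.exp_pos x
        rw [sub_nonneg, div_le_iff₀ (by positivity)]
        nlinarith [sq_nonneg (1 - p - p * Real.exp x)]
    intro u hu
    have h0 : f' 0 = 0 := by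
      simp only [hf'def, hDdef]
      simp
    have := hmono (Set.mem_Ici.2 le_rfl) (Set.mem_Ici.2 hu) hu
    rwa [h0] at this
  have hfnonneg : ∀ u : ℝ, 0 ≤ u → 0 ≤ f u := by
    have hmono : MonotoneOn f (Set.Ici (0:ℝ)) := by
      apply monotoneOn_of_deriv_nonneg (convex_Ici 0)
      · exact fun x _ => ((hf x).continuousAt).continuousWithinAt
      · exact fun x _ => ((hf x).differentiableAt).differentiableWithinAt
      · intro x hx
        rw [(hf x).deriv]
        exact hf'nonneg x (le_of_lt (by simpa using hx))
    intro u hu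
    have h0 : f 0 = 0 := by
      simp only [hfdef, hDdef]
      simp
    have := hmono (Set.mem_Ici.2 le_rfl) (Set.mem_Ici.2 hu) hu
    rwa [h0] at this
  intro u hu
  have := hfnonneg u hu
  simp only [hfdef] at this
  linarith


lemma hoeff_two_point (g h lam : ℝ) (hg : 0 ≤ g) (hh : 0 ≤ h) (hlam : 0 ≤ lam) :
    h * Real.exp (lam * (-g)) + g * Real.exp (lam * h) ≤
      (g + h) * Real.exp (lam ^ 2 * (g + h) ^ 2 / 8) := by
  rcases eq_or_lt_of_le (by positivity : (0:ℝ) ≤ g + h) with hgh | hgh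
  · have hg0 : g = 0 := by linarith
    have hh0 : h = 0 := by linarith
    simp [hg0, hh0]
  · set p : ℝ := g / (g + h) with hp
    set u : ℝ := lam * (g + h) with hu
    have hp0 : 0 ≤ p := by positivity
    have hp1 : p ≤ 1 := by rw [hp, div_le_one hgh]; linarith
    have hu0 : 0 ≤ u := by positivity
    have key := hoeff_log p hp0 hp1 u hu0
    -- exponentiate
    have hDpos : 0 < 1 - p + p * Real.exp u := by
      rcases eq_or_lt_of_le hp0 with h' | h'
      · simp [← h']
      · nlinarith [Real.exp_pos u, h']
    have h2 : (1 - p + p * Real.exp u) * Real.exp (-(p*u)) ≤ Real.exp (u ^ 2 / 8) := by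
      have := Real.exp_le_exp.2 key
      rw [Real.exp_sub, Real.exp_log hDpos, div_le_iff₀ (Real.exp_pos _)] at this
      calc (1 - p + p * Real.exp u) * Real.exp (-(p*u))
          = (1 - p + p * Real.exp u) / Real.exp (p * u) := by
            rw [Real.exp_neg]; ring
        _ ≤ Real.exp (u ^ 2 / 8) := by
            rw [div_le_iff₀ (Real.exp_pos _)]; exact this
    -- translate back
    have e1 : 1 - p = h / (g + h) := by
      rw [hp]; field_simp; ring
    have e2 : -(p * u) = lam * (-g) := by
      rw [hp, hu]; field_simp
    have e3 : u - p * u = lam * h := by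
      have : (1 - p) * u = lam * h := by
        rw [e1, hu]; field_simp
      linarith [this]
    have e4 : u ^ 2 / 8 = lam ^ 2 * (g + h) ^ 2 / 8 := by rw [hu]; ring
    have hxa : Real.exp (-(p*u)) = Real.exp (lam * (-g)) := by rw [e2]
    have hxb : Real.exp (-(p*u)) * Real.exp u = Real.exp (lam * h) := by
      rw [← Real.exp_add, show -(p*u) + u = lam * h by linarith [e3]]
    have expand : (1 - p + p * Real.exp u) * Real.exp (-(p*u))
        = (h * Real.exp (lam * (-g)) + g * Real.exp (lam * h)) / (g + h) := by
      have step : (1 - p + p * Real.exp u) * Real.exp (-(p*u))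
          = (1 - p) * Real.exp (lam*(-g)) + p * Real.exp (lam*h) := by
        rw [← hxa, ← hxb]; ring
      rw [step, e1, hp]
      field_simp
    rw [expand, e4, div_le_iff₀ hgh] at h2
    linarith [h2]


lemma exp_interp (g h y lam : ℝ) (hgy : -g ≤ y) (hyh : y ≤ h) :
    (g + h) * Real.exp (lam * y) ≤
      (h - y) * Real.exp (lam * (-g)) + (y + g) * Real.exp (lam * h) := by
  rcases eq_or_lt_of_le (by linarith : (0:ℝ) ≤ g + h) with hgh | hgh
  · rw [← hgh, zero_mul]
    nlinarith [Real.exp_pos (lam * -g), Real.exp_pos (lam * h)]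
  · have key := convexOn_exp.2 (Set.mem_univ (lam * (-g))) (Set.mem_univ (lam * h))
      (show (0:ℝ) ≤ (h - y)/(g + h) by apply div_nonneg <;> linarith)
      (show (0:ℝ) ≤ (y + g)/(g + h) by apply div_nonneg <;> linarith)
      (show (h - y)/(g + h) + (y + g)/(g + h) = 1 by field_simp; ring)
    simp only [smul_eq_mul] at key
    have harg : (h - y)/(g + h) * (lam * (-g)) + (y + g)/(g + h) * (lam * h) = lam * y := by
      field_simp
      ring
    rw [harg] at key
    have := mul_le_mul_of_nonneg_left key (le_of_lt hgh)
    calc (g + h) * Real.exp (lam * y) ≤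
        (g + h) * ((h - y)/(g + h) * Real.exp (lam * (-g)) + (y + g)/(g + h) * Real.exp (lam * h)) :=
          this
      _ = (h - y) * Real.exp (lam * (-g)) + (y + g) * Real.exp (lam * h) := by
          field_simp

lemma exp_term_le (g h y lam : ℝ) (hg : 0 ≤ g) (hh : 0 ≤ h) (hyh : y ≤ h) (hlam : 0 ≤ lam) :
    lam * y - lam ^ 2 * (g + h) ^ 2 / 8 ≤ 2 := by
  have h1 : lam * y ≤ lam * (g + h) := by
    apply mul_le_mul_of_nonneg_left _ hlam
    linarith
  nlinarith [sq_nonneg (lam * (g + h) - 4)]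


lemma rpow75_lower (a q : ℝ) (ha : 0 ≤ a) (hq : 0 ≤ q) (h : q^5 ≤ a^7) : q ≤ a ^ (1.4:ℝ) := by
  have h14 : (1.4:ℝ) = (7:ℕ) * ((1:ℝ)/5) := by norm_num
  have hqe : q = (q^5) ^ ((1:ℝ)/5) := by
    rw [← Real.rpow_natCast q 5, ← Real.rpow_mul hq]
    norm_num
  rw [hqe, h14, Real.rpow_natCast_mul ha]
  exact Real.rpow_le_rpow (by positivity) h (by norm_num)

lemma term_upper (x q : ℝ) (hx : 1 ≤ x) (hq : 0 < q) (h : 1 ≤ q^5 * x^7) : x ^ (-(1.4:ℝ)) ≤ q := by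
  have hx0 : (0:ℝ) < x := lt_of_lt_of_le one_pos hx
  have h5 : (q⁻¹)^5 ≤ x^7 := by
    rw [inv_pow]
    rw [inv_le_comm₀ (by positivity) (by positivity)]
    rw [← one_div, div_le_iff₀ (by positivity)]
    nlinarith [h]
  have h1 : q⁻¹ ≤ x ^ (1.4:ℝ) := rpow75_lower x q⁻¹ hx0.le (by positivity) h5
  rw [Real.rpow_neg hx0.le]
  exact inv_le_of_inv_le₀ hq h1

lemma term_upper04 (x q : ℝ) (hx : 1 ≤ x) (hq : 0 < q) (h : 1 ≤ q^5 * x^2) : x ^ (-(0.4:ℝ)) ≤ q := by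
  have hx0 : (0:ℝ) < x := lt_of_lt_of_le one_pos hx
  have h5 : (q⁻¹)^5 ≤ x^2 := by
    rw [inv_pow]
    rw [inv_le_comm₀ (by positivity) (by positivity)]
    rw [← one_div, div_le_iff₀ (by positivity)]
    nlinarith [h]
  have h04 : (0.4:ℝ) = (2:ℕ) * ((1:ℝ)/5) := by norm_num
  have hqe : q⁻¹ = ((q⁻¹)^5) ^ ((1:ℝ)/5) := by
    rw [← Real.rpow_natCast q⁻¹ 5, ← Real.rpow_mul (by positivity)]
    norm_num
  have h1 : q⁻¹ ≤ x ^ (0.4:ℝ) := by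
    rw [hqe, h04, Real.rpow_natCast_mul hx0.le]
    exact Real.rpow_le_rpow (by positivity) h5 (by norm_num)
  rw [Real.rpow_neg hx0.le]
  exact inv_le_of_inv_le₀ hq h1

lemma partial_sum_bound :
    ∑ k ∈ Finset.range 40, (((k:ℝ)+1) ^ (-(1.4:ℝ))) ≤ 2.53678 := by
  have t1 : (((1:ℕ):ℝ)) ^ (-(1.4:ℝ)) ≤ 1/1 :=
    term_upper _ _ (by norm_num) (by norm_num) (by norm_num)
  have t2 : (((2:ℕ):ℝ)) ^ (-(1.4:ℝ)) ≤ 37893/100000 :=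
    term_upper _ _ (by norm_num) (by norm_num) (by norm_num)
  have t3 : (((3:ℕ):ℝ)) ^ (-(1.4:ℝ)) ≤ 214799/1000000 :=
    term_upper _ _ (by norm_num) (by norm_num) (by norm_num)
  have t4 : (((4:ℕ):ℝ)) ^ (-(1.4:ℝ)) ≤ 35897/250000 :=
    term_upper _ _ (by norm_num) (by norm_num) (by norm_num)
  have t5 : (((5:ℕ):ℝ)) ^ (-(1.4:ℝ)) ≤ 52531/500000 :=
    term_upper _ _ (by norm_num) (by norm_num) (by norm_num)
  have t6 : (((6:ℕ):ℝ)) ^ (-(1.4:ℝ)) ≤ 40697/500000 :=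
    term_upper _ _ (by norm_num) (by norm_num) (by norm_num)
  have t7 : (((7:ℕ):ℝ)) ^ (-(1.4:ℝ)) ≤ 32797/500000 :=
    term_upper _ _ (by norm_num) (by norm_num) (by norm_num)
  have t8 : (((8:ℕ):ℝ)) ^ (-(1.4:ℝ)) ≤ 5441/100000 :=
    term_upper _ _ (by norm_num) (by norm_num) (by norm_num)
  have t9 : (((9:ℕ):ℝ)) ^ (-(1.4:ℝ)) ≤ 46139/1000000 :=
    term_upper _ _ (by norm_num) (by norm_num) (by norm_num)
  have t10 : (((10:ℕ):ℝ)) ^ (-(1.4:ℝ)) ≤ 39811/1000000 :=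
    term_upper _ _ (by norm_num) (by norm_num) (by norm_num)
  have t11 : (((11:ℕ):ℝ)) ^ (-(1.4:ℝ)) ≤ 17419/500000 :=
    term_upper _ _ (by norm_num) (by norm_num) (by norm_num)
  have t12 : (((12:ℕ):ℝ)) ^ (-(1.4:ℝ)) ≤ 30843/1000000 :=
    term_upper _ _ (by norm_num) (by norm_num) (by norm_num)
  have t13 : (((13:ℕ):ℝ)) ^ (-(1.4:ℝ)) ≤ 27573/1000000 :=
    term_upper _ _ (by norm_num) (by norm_num) (by norm_num)
  have t14 : (((14:ℕ):ℝ)) ^ (-(1.4:ℝ)) ≤ 3107/125000 :=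
    term_upper _ _ (by norm_num) (by norm_num) (by norm_num)
  have t15 : (((15:ℕ):ℝ)) ^ (-(1.4:ℝ)) ≤ 22567/1000000 :=
    term_upper _ _ (by norm_num) (by norm_num) (by norm_num)
  have t16 : (((16:ℕ):ℝ)) ^ (-(1.4:ℝ)) ≤ 10309/500000 :=
    term_upper _ _ (by norm_num) (by norm_num) (by norm_num)
  have t17 : (((17:ℕ):ℝ)) ^ (-(1.4:ℝ)) ≤ 947/50000 :=
    term_upper _ _ (by norm_num) (by norm_num) (by norm_num)
  have t18 : (((18:ℕ):ℝ)) ^ (-(1.4:ℝ)) ≤ 4371/250000 :=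
    term_upper _ _ (by norm_num) (by norm_num) (by norm_num)
  have t19 : (((19:ℕ):ℝ)) ^ (-(1.4:ℝ)) ≤ 16209/1000000 :=
    term_upper _ _ (by norm_num) (by norm_num) (by norm_num)
  have t20 : (((20:ℕ):ℝ)) ^ (-(1.4:ℝ)) ≤ 7543/500000 :=
    term_upper _ _ (by norm_num) (by norm_num) (by norm_num)
  have t21 : (((21:ℕ):ℝ)) ^ (-(1.4:ℝ)) ≤ 1409/100000 :=
    term_upper _ _ (by norm_num) (by norm_num) (by norm_num)
  have t22 : (((22:ℕ):ℝ)) ^ (-(1.4:ℝ)) ≤ 6601/500000 :=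
    term_upper _ _ (by norm_num) (by norm_num) (by norm_num)
  have t23 : (((23:ℕ):ℝ)) ^ (-(1.4:ℝ)) ≤ 2481/200000 :=
    term_upper _ _ (by norm_num) (by norm_num) (by norm_num)
  have t24 : (((24:ℕ):ℝ)) ^ (-(1.4:ℝ)) ≤ 1461/125000 :=
    term_upper _ _ (by norm_num) (by norm_num) (by norm_num)
  have t25 : (((25:ℕ):ℝ)) ^ (-(1.4:ℝ)) ≤ 5519/500000 :=
    term_upper _ _ (by norm_num) (by norm_num) (by norm_num)
  have t26 : (((26:ℕ):ℝ)) ^ (-(1.4:ℝ)) ≤ 10449/1000000 :=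
    term_upper _ _ (by norm_num) (by norm_num) (by norm_num)
  have t27 : (((27:ℕ):ℝ)) ^ (-(1.4:ℝ)) ≤ 9911/1000000 :=
    term_upper _ _ (by norm_num) (by norm_num) (by norm_num)
  have t28 : (((28:ℕ):ℝ)) ^ (-(1.4:ℝ)) ≤ 9419/1000000 :=
    term_upper _ _ (by norm_num) (by norm_num) (by norm_num)
  have t29 : (((29:ℕ):ℝ)) ^ (-(1.4:ℝ)) ≤ 8967/1000000 :=
    term_upper _ _ (by norm_num) (by norm_num) (by norm_num)
  have t30 : (((30:ℕ):ℝ)) ^ (-(1.4:ℝ)) ≤ 1069/125000 :=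
    term_upper _ _ (by norm_num) (by norm_num) (by norm_num)
  have t31 : (((31:ℕ):ℝ)) ^ (-(1.4:ℝ)) ≤ 1021/125000 :=
    term_upper _ _ (by norm_num) (by norm_num) (by norm_num)
  have t32 : (((32:ℕ):ℝ)) ^ (-(1.4:ℝ)) ≤ 7813/1000000 :=
    term_upper _ _ (by norm_num) (by norm_num) (by norm_num)
  have t33 : (((33:ℕ):ℝ)) ^ (-(1.4:ℝ)) ≤ 1871/250000 :=
    term_upper _ _ (by norm_num) (by norm_num) (by norm_num)
  have t34 : (((34:ℕ):ℝ)) ^ (-(1.4:ℝ)) ≤ 7177/1000000 :=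
    term_upper _ _ (by norm_num) (by norm_num) (by norm_num)
  have t35 : (((35:ℕ):ℝ)) ^ (-(1.4:ℝ)) ≤ 1723/250000 :=
    term_upper _ _ (by norm_num) (by norm_num) (by norm_num)
  have t36 : (((36:ℕ):ℝ)) ^ (-(1.4:ℝ)) ≤ 53/8000 :=
    term_upper _ _ (by norm_num) (by norm_num) (by norm_num)
  have t37 : (((37:ℕ):ℝ)) ^ (-(1.4:ℝ)) ≤ 797/125000 :=
    term_upper _ _ (by norm_num) (by norm_num) (by norm_num)
  have t38 : (((38:ℕ):ℝ)) ^ (-(1.4:ℝ)) ≤ 3071/500000 :=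
    term_upper _ _ (by norm_num) (by norm_num) (by norm_num)
  have t39 : (((39:ℕ):ℝ)) ^ (-(1.4:ℝ)) ≤ 5923/1000000 :=
    term_upper _ _ (by norm_num) (by norm_num) (by norm_num)
  have t40 : (((40:ℕ):ℝ)) ^ (-(1.4:ℝ)) ≤ 5717/1000000 :=
    term_upper _ _ (by norm_num) (by norm_num) (by norm_num)
  have hexp : ∑ k ∈ Finset.range 40, (((k:ℝ)+1) ^ (-(1.4:ℝ)))
      = ∑ k ∈ Finset.range 40, ((((k+1:ℕ)):ℝ) ^ (-(1.4:ℝ))) := by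
    apply Finset.sum_congr rfl
    intro k _
    push_cast
    ring_nf
  rw [hexp]
  rw [show (40:ℕ) = 39+1 from rfl]
  repeat rw [Finset.sum_range_succ]
  rw [Finset.sum_range_zero]
  norm_num only
  linarith [t1,t2,t3,t4,t5,t6,t7,t8,t9,t10,t11,t12,t13,t14,t15,t16,t17,t18,t19,t20,
    t21,t22,t23,t24,t25,t26,t27,t28,t29,t30,t31,t32,t33,t34,t35,t36,t37,t38,t39,t40]


lemma summable_f : Summable (fun k : ℕ => ((k:ℝ)+1) ^ (-(1.4:ℝ))) := by
  have h : Summable (fun n : ℕ => (n:ℝ) ^ (-(1.4:ℝ))) :=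
    Real.summable_nat_rpow.2 (by norm_num)
  have := (summable_nat_add_iff 1).2 h
  refine this.congr fun n => ?_
  push_cast
  ring_nf

lemma tail_bound : ∑' k : ℕ, (((k+40:ℕ):ℝ)+1) ^ (-(1.4:ℝ)) ≤ 0.572 := by
  apply Real.tsum_le_of_sum_range_le (fun n => by positivity)
  intro n
  have hanti : AntitoneOn (fun x : ℝ => x ^ (-(1.4:ℝ))) (Set.Icc (40:ℝ) (40 + n)) := by
    intro x hx y hy hxy
    exact Real.rpow_le_rpow_of_nonpos (by linarith [hx.1]) hxy (by norm_num)
  have hsum := hanti.sum_le_integral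
  have hInt : ∫ x in (40:ℝ)..(40 + n), x ^ (-(1.4:ℝ))
      = (((40:ℝ)+n) ^ (-(0.4:ℝ)) - (40:ℝ) ^ (-(0.4:ℝ))) / (-(0.4:ℝ)) := by
    rw [integral_rpow]
    · norm_num
    · right
      constructor
      · norm_num
      · intro hmem
        rw [Set.mem_uIcc] at hmem
        rcases hmem with ⟨h1, _⟩ | ⟨h1, _⟩ <;> nlinarith [Nat.cast_nonneg (α := ℝ) n]
  have h40 : ((40:ℝ)) ^ (-(0.4:ℝ)) ≤ 0.2288 :=
    term_upper04 40 0.2288 (by norm_num) (by norm_num) (by norm_num)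
  have hb : (0:ℝ) ≤ ((40:ℝ)+n) ^ (-(0.4:ℝ)) := by positivity
  calc ∑ i ∈ Finset.range n, (((i+40:ℕ):ℝ)+1) ^ (-(1.4:ℝ))
      = ∑ i ∈ Finset.range n, ((40:ℝ) + ((i+1:ℕ):ℝ)) ^ (-(1.4:ℝ)) := by
        apply Finset.sum_congr rfl
        intro k _
        push_cast
        ring_nf
    _ ≤ ∫ x in (40:ℝ)..(40 + n), x ^ (-(1.4:ℝ)) := hsum
    _ = (((40:ℝ)+n) ^ (-(0.4:ℝ)) - (40:ℝ) ^ (-(0.4:ℝ))) / (-(0.4:ℝ)) := hInt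
    _ = ((40:ℝ) ^ (-(0.4:ℝ)) - ((40:ℝ)+n) ^ (-(0.4:ℝ))) / 0.4 := by ring
    _ ≤ (0.2288 - 0) / 0.4 := by
        apply div_le_div_of_nonneg_right ?_ (by norm_num)
        linarith
    _ = 0.572 := by norm_num

lemma zeta_bound : ∑' k : ℕ, (((k:ℝ)+1) ^ (-(1.4:ℝ))) ≤ 3.1088 := by
  rw [← Summable.sum_add_tsum_nat_add 40 summable_f]
  have := tail_bound
  have := partial_sum_bound
  push_cast at *
  linarith


lemma delta_sum (δ : ℝ) (hδ0 : 0 < δ) :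
    Summable (fun k : ℕ => δ / (5.2 * (((k:ℝ)+1) * Real.log 2) ^ (1.4:ℝ))) ∧
    ∑' k : ℕ, δ / (5.2 * (((k:ℝ)+1) * Real.log 2) ^ (1.4:ℝ)) ≤ δ := by
  have hlog2 : (0:ℝ) < Real.log 2 := Real.log_pos (by norm_num)
  have hc : (0.5986:ℝ) ≤ (Real.log 2) ^ (1.4:ℝ) := by
    apply rpow75_lower _ _ hlog2.le (by norm_num)
    have h1 : (0.6931471803:ℝ) ≤ Real.log 2 := Real.log_two_gt_d9.le
    calc (0.5986:ℝ)^5 ≤ (0.6931471803:ℝ)^7 := by norm_num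
      _ ≤ (Real.log 2)^7 := pow_le_pow_left₀ (by norm_num) h1 7
  have hcpos : (0:ℝ) < (Real.log 2) ^ (1.4:ℝ) := by positivity
  have hrw : ∀ k : ℕ, δ / (5.2 * (((k:ℝ)+1) * Real.log 2) ^ (1.4:ℝ))
      = (δ / (5.2 * (Real.log 2) ^ (1.4:ℝ))) * (((k:ℝ)+1) ^ (-(1.4:ℝ))) := by
    intro k
    rw [Real.mul_rpow (by positivity) hlog2.le, Real.rpow_neg (by positivity)]
    rw [div_mul_eq_mul_div, div_eq_div_iff (by positivity) (by positivity)]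
    have hne : (((k:ℝ)+1) ^ ((1.4:ℝ))) ≠ 0 := by positivity
    field_simp
  have hsummable : Summable (fun k : ℕ => δ / (5.2 * (((k:ℝ)+1) * Real.log 2) ^ (1.4:ℝ))) := by
    apply Summable.congr (summable_f.mul_left (δ / (5.2 * (Real.log 2) ^ (1.4:ℝ))))
    intro k
    exact (hrw k).symm
  refine ⟨hsummable, ?_⟩
  have ht : ∑' k : ℕ, δ / (5.2 * (((k:ℝ)+1) * Real.log 2) ^ (1.4:ℝ))
      = (δ / (5.2 * (Real.log 2) ^ (1.4:ℝ))) * ∑' k : ℕ, (((k:ℝ)+1) ^ (-(1.4:ℝ))) := by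
    rw [← tsum_mul_left]
    exact tsum_congr hrw
  rw [ht]
  have h52 : (3.1088:ℝ) ≤ 5.2 * (Real.log 2) ^ (1.4:ℝ) := by nlinarith
  rw [div_mul_eq_mul_div, div_le_iff₀ (by positivity)]
  have := zeta_bound
  have htsum_nonneg : (0:ℝ) ≤ ∑' k : ℕ, (((k:ℝ)+1) ^ (-(1.4:ℝ))) :=
    tsum_nonneg fun k => by positivity
  nlinarith


lemma exists_epoch (x : ℝ) (hx : 1 ≤ x) : ∃ k : ℕ, (2:ℝ)^k ≤ x ∧ x < (2:ℝ)^(k+1) := by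
  have hx0 : (0:ℝ) < x := lt_of_lt_of_le one_pos hx
  have hlb : 0 ≤ Real.logb 2 x := Real.logb_nonneg one_lt_two hx
  refine ⟨Nat.floor (Real.logb 2 x), ?_, ?_⟩
  · have h1 : (Nat.floor (Real.logb 2 x) : ℝ) ≤ Real.logb 2 x := Nat.floor_le hlb
    calc (2:ℝ)^(Nat.floor (Real.logb 2 x)) = (2:ℝ) ^ ((Nat.floor (Real.logb 2 x) : ℝ)) :=
          (Real.rpow_natCast 2 _).symm
      _ ≤ (2:ℝ) ^ (Real.logb 2 x) := Real.rpow_le_rpow_of_exponent_le one_le_two h1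
      _ = x := Real.rpow_logb (by norm_num) (by norm_num) hx0
  · have h2 : Real.logb 2 x < (Nat.floor (Real.logb 2 x) : ℝ) + 1 := Nat.lt_floor_add_one _
    calc x = (2:ℝ) ^ (Real.logb 2 x) := (Real.rpow_logb (by norm_num) (by norm_num) hx0).symm
      _ < (2:ℝ) ^ (((Nat.floor (Real.logb 2 x) : ℝ)) + 1) :=
          Real.rpow_lt_rpow_of_exponent_lt one_lt_two h2
      _ = (2:ℝ) ^ (Nat.floor (Real.logb 2 x) + 1) := by
          rw [← Real.rpow_natCast 2 (Nat.floor (Real.logb 2 x) + 1)]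
          push_cast
          ring_nf

lemma key_alg (V v L : ℝ) (hv : 0 < v) (hL : 0 < L)
    (h1 : v ≤ Real.sqrt 2 * V) (h2 : V ≤ Real.sqrt 2 * v) :
    Real.sqrt (2*L/v) * V / 2 + L / Real.sqrt (2*L/v) ≤ 1.44 * Real.sqrt (V * L) := by
  have hs2 : Real.sqrt 2 ^ 2 = 2 := Real.sq_sqrt (by norm_num)
  have hs2pos : 0 < Real.sqrt 2 := Real.sqrt_pos.2 (by norm_num)
  have hs2b : 1.414213 ≤ Real.sqrt 2 ∧ Real.sqrt 2 ≤ 1.414214 := by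
    constructor
    · nlinarith [Real.sq_sqrt (show (0:ℝ) ≤ 2 by norm_num), Real.sqrt_nonneg 2]
    · nlinarith [Real.sq_sqrt (show (0:ℝ) ≤ 2 by norm_num), Real.sqrt_nonneg 2]
  have hV : 0 < V := by nlinarith
  set lam := Real.sqrt (2*L/v) with hlam
  have hlampos : 0 < lam := Real.sqrt_pos.2 (by positivity)
  have hlamsq : lam^2 = 2*L/v := Real.sq_sqrt (by positivity)
  -- express rhs sqrt product
  have hr : Real.sqrt (V*L) * lam = L * Real.sqrt (2*V/v) := by
    rw [hlam, ← Real.sqrt_mul (by positivity)]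
    have : V * L * (2*L/v) = L^2 * (2*V/v) := by field_simp
    rw [this, Real.sqrt_mul (by positivity), Real.sqrt_sq hL.le]
  set ρ := Real.sqrt (2*V/v) with hρ
  have hρpos : 0 < ρ := Real.sqrt_pos.2 (by positivity)
  have hρsq : ρ^2 = 2*V/v := Real.sq_sqrt (by positivity)
  -- bounds on ρ²
  have hρlb : Real.sqrt 2 ≤ ρ^2 := by
    rw [hρsq, le_div_iff₀ hv]
    nlinarith
  have hρub : ρ^2 ≤ 2 * Real.sqrt 2 := by
    rw [hρsq, div_le_iff₀ hv]
    nlinarith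
  -- main scalar inequality: ρ²/2 + 1 ≤ 1.44 ρ
  have hmain : ρ^2/2 + 1 ≤ 1.44 * ρ := by
    have hprod : (ρ^2 - Real.sqrt 2) * (2*Real.sqrt 2 - ρ^2) ≥ 0 :=
      mul_nonneg (by linarith) (by linarith)
    nlinarith [hprod, hs2b.1, hs2b.2, hρpos, sq_nonneg (ρ^2 + 2 - 2.88*ρ), sq_nonneg ρ]
  -- multiply out
  have hgoal : (lam * V / 2 + L / lam) * lam ≤
      (1.44 * Real.sqrt (V*L)) * lam := by
    have hlhs : (lam * V / 2 + L / lam) * lam = lam^2 * V / 2 + L := by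
      field_simp
    rw [hlhs, hlamsq]
    rw [mul_assoc, hr]
    have : 2*L/v * V / 2 + L = L * (ρ^2/2 + 1) := by
      rw [hρsq]; field_simp
    rw [this]
    calc L * (ρ^2/2 + 1) ≤ L * (1.44 * ρ) := by
          apply mul_le_mul_of_nonneg_left _ hL.le
          linarith [hmain]
      _ = 1.44 * (L * ρ) := by ring
  exact le_of_mul_le_mul_right hgoal hlampos


lemma Lk_eq (δ : ℝ) (hδ0 : 0 < δ) (k : ℕ) :
    Real.log (1 / (δ / (5.2 * (((k:ℝ)+1) * Real.log 2) ^ (1.4:ℝ))))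
      = Real.log 5.2 + 1.4 * Real.log (((k:ℝ)+1) * Real.log 2) - Real.log δ := by
  have hlog2 : (0:ℝ) < Real.log 2 := Real.log_pos (by norm_num)
  have hz : (0:ℝ) < ((k:ℝ)+1) * Real.log 2 := by positivity
  rw [one_div, Real.log_inv, Real.log_div hδ0.ne' (by positivity),
    Real.log_mul (by norm_num) (by positivity), Real.log_rpow hz]
  ring

lemma log_log_two_lb : -0.4427 ≤ Real.log (Real.log 2) := by
  have h1 : (0.6931471803:ℝ) < Real.log 2 := Real.log_two_gt_d9
  have h2 : Real.log (0.6931471803:ℝ) ≤ Real.log (Real.log 2) :=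
    Real.log_le_log (by norm_num) h1.le
  have h3 : Real.log ((0.6931471803:ℝ)⁻¹) ≤ (0.6931471803:ℝ)⁻¹ - 1 :=
    Real.log_le_sub_one_of_pos (by norm_num)
  rw [Real.log_inv] at h3
  have h4 : ((0.6931471803:ℝ)⁻¹ - 1) ≤ 0.4427 := by
    have : (0.6931471803:ℝ)⁻¹ ≤ 1.4427 := by
      rw [inv_le_comm₀ (by norm_num) (by norm_num)]
      norm_num
    linarith
  linarith

lemma log_52_lb : 1.386 ≤ Real.log 5.2 := by
  have h1 : Real.log 4 ≤ Real.log 5.2 := Real.log_le_log (by norm_num) (by norm_num)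
  have h2 : Real.log 4 = 2 * Real.log 2 := by
    rw [show (4:ℝ) = 2^2 by norm_num, Real.log_pow]
    push_cast; ring
  have := Real.log_two_gt_d9
  linarith


end Scalar

section Helpers

open Real

variable {Ω : Type*} {m0 : MeasurableSpace Ω} {μ : Measure Ω} [IsProbabilityMeasure μ]
  {ℱ : Filtration ℕ m0}




lemma upper_bound_nonneg (i : ℕ) {Y H : Ω → ℝ}
    (hYint : Integrable Y μ) (hY0 : μ[Y | ℱ i] =ᵐ[μ] 0)
    (hH : StronglyMeasurable[ℱ i] H) (hb : ∀ᵐ ω ∂μ, Y ω ≤ H ω) :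
    ∀ᵐ ω ∂μ, 0 ≤ H ω := by
  set A : Set Ω := {ω | H ω < 0} with hA
  have hAm : MeasurableSet[ℱ i] A := hH.measurable measurableSet_Iio
  have hA0 : MeasurableSet[m0] A := ℱ.le i _ hAm
  have hint : ∫ ω in A, Y ω ∂μ = 0 := by
    rw [← setIntegral_condExp (ℱ.le i) hYint hAm]
    have hcongr : ∫ x in A, (μ[Y|ℱ i]) x ∂μ = ∫ x in A, (0 : Ω → ℝ) x ∂μ :=
      setIntegral_congr_ae hA0 (hY0.mono fun ω hω _ => hω)
    rw [hcongr]
    simp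
  have hneg : ∀ᵐ ω ∂μ.restrict A, Y ω < 0 := by
    have h1 : ∀ᵐ ω ∂μ.restrict A, Y ω ≤ H ω := ae_restrict_of_ae hb
    have h2 : ∀ᵐ ω ∂μ.restrict A, H ω < 0 :=
      (ae_restrict_iff' hA0).2 (Filter.Eventually.of_forall fun ω hω => hω)
    filter_upwards [h1, h2] with ω e1 e2 using lt_of_le_of_lt e1 e2
  have hzero : (-Y) =ᵐ[μ.restrict A] 0 := by
    rw [← setIntegral_eq_zero_iff_of_nonneg_ae (hneg.mono fun ω hω => by simp; linarith)
      (hYint.neg.integrableOn)]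
    have : ∫ x in A, (-Y) x ∂μ = - ∫ x in A, Y x ∂μ := by
      simp only [Pi.neg_apply]
      exact integral_neg Y
    rw [this, hint, neg_zero]
  have hfalse : ∀ᵐ ω ∂μ.restrict A, False := by
    filter_upwards [hneg, hzero] with ω e1 e2
    simp only [Pi.zero_apply, Pi.neg_apply] at e2
    linarith
  have hAzero : μ A = 0 := by
    have := hfalse
    rw [ae_iff] at this
    simpa [Measure.restrict_apply_univ] using this
  rw [ae_iff]
  convert hAzero using 2
  ext ω
  simp [hA]




lemma cond_step (i : ℕ) {Y G H : Ω → ℝ} (lam : ℝ) (hlam : 0 ≤ lam)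
    (hYm : AEStronglyMeasurable Y μ)
    (hYint : Integrable Y μ) (hY0 : μ[Y | ℱ i] =ᵐ[μ] 0)
    (hG : StronglyMeasurable[ℱ i] G) (hH : StronglyMeasurable[ℱ i] H)
    (hb : ∀ᵐ ω ∂μ, -G ω ≤ Y ω ∧ Y ω ≤ H ω) :
    Integrable (fun ω => Real.exp (lam * Y ω - lam ^ 2 * (G ω + H ω) ^ 2 / 8)) μ ∧
      μ[fun ω => Real.exp (lam * Y ω - lam ^ 2 * (G ω + H ω) ^ 2 / 8) | ℱ i] ≤ᵐ[μ]
        fun _ => (1 : ℝ) := by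
  have hY0' : μ[(-Y) | ℱ i] =ᵐ[μ] 0 := by
    refine (condExp_neg Y _).trans (hY0.mono fun ω h => ?_)
    simp only [Pi.neg_apply, Pi.zero_apply] at h ⊢
    simp [h]
  have hG0 : ∀ᵐ ω ∂μ, 0 ≤ G ω :=
    upper_bound_nonneg i hYint.neg hY0' hG (hb.mono fun ω h => by
      simp only [Pi.neg_apply]; linarith [h.1])
  have hH0 : ∀ᵐ ω ∂μ, 0 ≤ H ω :=
    upper_bound_nonneg i hYint hY0 hH (hb.mono fun ω h => h.2)
  set X : Ω → ℝ := fun ω => Real.exp (lam * Y ω - lam ^ 2 * (G ω + H ω) ^ 2 / 8) with hXdef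
  have hGm : AEStronglyMeasurable G μ := (hG.mono (ℱ.le i)).aestronglyMeasurable
  have hHm : AEStronglyMeasurable H μ := (hH.mono (ℱ.le i)).aestronglyMeasurable
  have hXm : AEStronglyMeasurable X μ := by
    apply Real.continuous_exp.comp_aestronglyMeasurable
    have : AEStronglyMeasurable (fun ω => lam * Y ω - lam ^ 2 * (G ω + H ω) ^ 2 / 8) μ := by
      apply AEStronglyMeasurable.sub (hYm.const_mul lam)
      exact (((hGm.add hHm).pow 2).const_mul (lam ^ 2)).mul (aestronglyMeasurable_const (b := (8:ℝ)⁻¹)) |>.congr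
        (Filter.Eventually.of_forall fun ω => by simp [div_eq_mul_inv])
    exact this
  have hXbound : ∀ᵐ ω ∂μ, ‖X ω‖ ≤ Real.exp 2 := by
    filter_upwards [hb, hG0, hH0] with ω h1 h2 h3
    rw [Real.norm_eq_abs, abs_of_pos (Real.exp_pos _)]
    exact Real.exp_le_exp.2 (exp_term_le (G ω) (H ω) (Y ω) lam h2 h3 h1.2 hlam)
  have hXint : Integrable X μ := Integrable.mono' (integrable_const (Real.exp 2)) hXm hXbound
  refine ⟨hXint, ?_⟩
  -- define predictable coefficients
  set c : Ω → ℝ := fun ω => lam ^ 2 * (G ω + H ω) ^ 2 / 8 with hcdef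
  set A : Ω → ℝ := fun ω => if G ω + H ω = 0 then (1:ℝ) else
      (H ω * Real.exp (lam * (-G ω)) + G ω * Real.exp (lam * H ω)) / (G ω + H ω) *
        Real.exp (-(c ω)) with hAdef
  set B : Ω → ℝ := fun ω => if G ω + H ω = 0 then (0:ℝ) else
      (Real.exp (lam * H ω) - Real.exp (lam * (-G ω))) / (G ω + H ω) *
        Real.exp (-(c ω)) with hBdef
  have hGi : Measurable[ℱ i] G := hG.measurable
  have hHi : Measurable[ℱ i] H := hH.measurable
  have hset : MeasurableSet[ℱ i] {ω | G ω + H ω = 0} :=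
    (hGi.add hHi) (measurableSet_singleton 0)
  have hcm : Measurable[ℱ i] c := by
    apply Measurable.div_const
    exact ((hGi.add hHi).pow_const 2).const_mul (lam ^ 2)
  have hAsm : StronglyMeasurable[ℱ i] A := by
    apply Measurable.stronglyMeasurable
    apply Measurable.ite hset measurable_const
    apply Measurable.mul
    · apply Measurable.div
      · exact ((hHi.mul (Real.measurable_exp.comp (hGi.neg.const_mul lam)))).add
          (hGi.mul (Real.measurable_exp.comp (hHi.const_mul lam)))
      · exact hGi.add hHi
    · exact Real.measurable_exp.comp hcm.neg
  have hBsm : StronglyMeasurable[ℱ i] B := by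
    apply Measurable.stronglyMeasurable
    apply Measurable.ite hset measurable_const
    apply Measurable.mul
    · apply Measurable.div
      · exact (Real.measurable_exp.comp (hHi.const_mul lam)).sub
          (Real.measurable_exp.comp (hGi.neg.const_mul lam))
      · exact hGi.add hHi
    · exact Real.measurable_exp.comp hcm.neg
  -- a.e. inequalities
  have hA01 : ∀ᵐ ω ∂μ, 0 ≤ A ω ∧ A ω ≤ 1 := by
    filter_upwards [hG0, hH0] with ω h2 h3
    by_cases hz : G ω + H ω = 0
    · simp only [hAdef, hz, if_true]
      norm_num
    · have hgh : 0 < G ω + H ω := lt_of_le_of_ne (by linarith) (Ne.symm hz)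
      simp only [hAdef, hz, if_false]
      constructor
      · have : 0 ≤ H ω * Real.exp (lam * (-G ω)) + G ω * Real.exp (lam * H ω) := by
          positivity
        positivity
      · have hkey := hoeff_two_point (G ω) (H ω) lam h2 h3 hlam
        rw [div_mul_eq_mul_div, div_le_one hgh]
        calc (H ω * Real.exp (lam * (-G ω)) + G ω * Real.exp (lam * H ω)) * Real.exp (-(c ω))
            ≤ (G ω + H ω) * Real.exp (lam ^ 2 * (G ω + H ω) ^ 2 / 8) * Real.exp (-(c ω)) := by
              apply mul_le_mul_of_nonneg_right hkey (Real.exp_pos _).le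
          _ = G ω + H ω := by
              rw [mul_assoc, ← Real.exp_add, hcdef]
              simp
  have hXle : ∀ᵐ ω ∂μ, X ω ≤ A ω + B ω * Y ω := by
    filter_upwards [hb, hG0, hH0] with ω h1 h2 h3
    have hXsplit : X ω = Real.exp (lam * Y ω) * Real.exp (-(c ω)) := by
      rw [hXdef, ← Real.exp_add]
      simp [hcdef]
      ring_nf
    by_cases hz : G ω + H ω = 0
    · have hg : G ω = 0 := by linarith
      have hh : H ω = 0 := by linarith
      have hy : Y ω = 0 := by
        have := h1.1; have := h1.2
        rw [hg] at *; rw [hh] at *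
        linarith [h1.1, h1.2]
      simp only [hAdef, hBdef, hz, if_true]
      rw [hXsplit, hy, hcdef]
      simp [hg, hh]
    · have hgh : 0 < G ω + H ω := lt_of_le_of_ne (by linarith) (Ne.symm hz)
      simp only [hAdef, hBdef, hz, if_false]
      have hkey := exp_interp (G ω) (H ω) (Y ω) lam h1.1 h1.2
      have hkey2 := mul_le_mul_of_nonneg_right hkey (Real.exp_pos (-(c ω))).le
      rw [hXsplit]
      have hrhs : A ω + B ω * Y ω =
          ((H ω - Y ω) * Real.exp (lam * (-G ω)) + (Y ω + G ω) * Real.exp (lam * H ω)) *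
            Real.exp (-(c ω)) / (G ω + H ω) := by
        simp only [hAdef, hBdef, hz, if_false]
        field_simp
        ring
      simp only [hAdef, hBdef, hz, if_false] at hrhs ⊢
      rw [hrhs, le_div_iff₀ hgh]
      calc Real.exp (lam * Y ω) * Real.exp (-(c ω)) * (G ω + H ω)
          = (G ω + H ω) * Real.exp (lam * Y ω) * Real.exp (-(c ω)) := by ring
        _ ≤ ((H ω - Y ω) * Real.exp (lam * (-G ω)) + (Y ω + G ω) * Real.exp (lam * H ω)) *
            Real.exp (-(c ω)) := hkey2
  have hBbound : ∀ᵐ ω ∂μ, ‖B ω‖ ≤ lam * Real.exp 2 := by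
    filter_upwards [hb, hG0, hH0] with ω h1 h2 h3
    by_cases hz : G ω + H ω = 0
    · simp only [hBdef, hz, if_true]
      simp
      positivity
    · have hgh : 0 < G ω + H ω := lt_of_le_of_ne (by linarith) (Ne.symm hz)
      simp only [hBdef, hz, if_false]
      have hmono : Real.exp (lam * (-G ω)) ≤ Real.exp (lam * H ω) := by
        apply Real.exp_le_exp.2
        have : -G ω ≤ H ω := by linarith
        nlinarith
      have hB0 : 0 ≤ (Real.exp (lam * H ω) - Real.exp (lam * (-G ω))) / (G ω + H ω) *
          Real.exp (-(c ω)) := by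
        apply mul_nonneg (div_nonneg (by linarith) hgh.le) (Real.exp_pos _).le
      rw [Real.norm_eq_abs, abs_of_nonneg hB0]
      -- e^{λH} - e^{-λG} ≤ e^{λH} * λ(G+H)
      have hdiff : Real.exp (lam * H ω) - Real.exp (lam * (-G ω)) ≤
          Real.exp (lam * H ω) * (lam * (G ω + H ω)) := by
        have hexp : Real.exp (lam * (-G ω)) =
            Real.exp (lam * H ω) * Real.exp (-(lam * (G ω + H ω))) := by
          rw [← Real.exp_add]; ring_nf
        have hb1 : 1 - lam * (G ω + H ω) ≤ Real.exp (-(lam * (G ω + H ω))) := by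
          have := Real.add_one_le_exp (-(lam * (G ω + H ω)))
          linarith
        have hb2 : Real.exp (lam * H ω) * (1 - lam * (G ω + H ω)) ≤ Real.exp (lam * (-G ω)) := by
          rw [hexp]
          apply mul_le_mul_of_nonneg_left hb1 (Real.exp_pos _).le
        nlinarith [Real.exp_pos (lam * H ω)]
      have hstep : (Real.exp (lam * H ω) - Real.exp (lam * (-G ω))) / (G ω + H ω) ≤
          lam * Real.exp (lam * H ω) := by
        rw [div_le_iff₀ hgh]
        calc Real.exp (lam * H ω) - Real.exp (lam * (-G ω))
            ≤ Real.exp (lam * H ω) * (lam * (G ω + H ω)) := hdiff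
          _ = lam * Real.exp (lam * H ω) * (G ω + H ω) := by ring
      calc (Real.exp (lam * H ω) - Real.exp (lam * (-G ω))) / (G ω + H ω) * Real.exp (-(c ω))
          ≤ lam * Real.exp (lam * H ω) * Real.exp (-(c ω)) := by
            apply mul_le_mul_of_nonneg_right hstep (Real.exp_pos _).le
        _ = lam * Real.exp (lam * H ω - c ω) := by rw [mul_assoc, ← Real.exp_add]; ring_nf
        _ ≤ lam * Real.exp 2 := by
            apply mul_le_mul_of_nonneg_left _ hlam
            apply Real.exp_le_exp.2
            have := exp_term_le (G ω) (H ω) (H ω) lam h2 h3 le_rfl hlam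
            simp only [hcdef]
            linarith
  have hAint : Integrable A μ := by
    apply Integrable.mono' (integrable_const (1:ℝ))
      ((hAsm.mono (ℱ.le i)).aestronglyMeasurable)
    filter_upwards [hA01] with ω h
    rw [Real.norm_eq_abs, abs_of_nonneg h.1]
    exact h.2
  have hBYint : Integrable (fun ω => B ω * Y ω) μ :=
    hYint.bdd_mul ((hBsm.mono (ℱ.le i)).aestronglyMeasurable) hBbound
  have h1 : μ[X | ℱ i] ≤ᵐ[μ] μ[fun ω => A ω + B ω * Y ω | ℱ i] :=
    condExp_mono hXint (hAint.add hBYint) hXle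
  have h2 : μ[fun ω => A ω + B ω * Y ω | ℱ i] =ᵐ[μ] μ[A | ℱ i] + μ[fun ω => B ω * Y ω | ℱ i] :=
    condExp_add hAint hBYint _
  have h3 : μ[A | ℱ i] =ᵐ[μ] A :=
    Filter.EventuallyEq.of_eq (condExp_of_stronglyMeasurable (ℱ.le i) hAsm hAint)
  have h4 : μ[fun ω => B ω * Y ω | ℱ i] =ᵐ[μ] fun ω => B ω * (μ[Y | ℱ i]) ω :=
    condExp_mul_of_stronglyMeasurable_left hBsm hBYint hYint
  have h5 : (fun ω => B ω * (μ[Y | ℱ i]) ω) =ᵐ[μ] fun _ => (0:ℝ) := by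
    filter_upwards [hY0] with ω h
    simp only [h, Pi.zero_apply]
    ring
  calc μ[X | ℱ i] ≤ᵐ[μ] μ[fun ω => A ω + B ω * Y ω | ℱ i] := h1
    _ =ᵐ[μ] fun ω => A ω + (0:ℝ) := by
        filter_upwards [h2, h3, h4, h5] with ω e2 e3 e4 e5
        rw [e2]
        simp only [Pi.add_apply]
        rw [e3, e4, e5]
    _ ≤ᵐ[μ] fun _ => (1:ℝ) := by
        filter_upwards [hA01] with ω h
        simpa using h.2




lemma ville {M : ℕ → Ω → ℝ} (hM : Supermartingale M ℱ μ) (hpos : ∀ t ω, 0 < M t ω)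
    (h0 : ∀ ω, M 0 ω = 1) {ε : ℝ} (hε : 0 < ε) :
    μ {ω | ∃ t, ε ≤ M t ω} ≤ ENNReal.ofReal (1 / ε) := by
  have hmeas : ∀ k, MeasurableSet {ω | ε ≤ M k ω} := fun k =>
    measurableSet_le measurable_const ((hM.stronglyAdapted k).mono (ℱ.le k)).measurable
  set A : ℕ → Set Ω := fun n => ⋃ k ∈ Finset.range (n + 1), {ω | ε ≤ M k ω} with hAdef
  have hAmeas : ∀ n, MeasurableSet (A n) := fun n =>
    (Finset.range (n+1)).measurableSet_biUnion fun k _ => hmeas k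
  have hsub : Submartingale (-M) ℱ μ := hM.neg
  have hAn : ∀ n, μ (A n) ≤ ENNReal.ofReal (1 / ε) := by
    intro n
    set τ : Ω → WithTop ℕ := fun ω => ((hittingBtwn M (Set.Ici ε) 0 n ω : ℕ) : WithTop ℕ) with hτdef
    have hτ : IsStoppingTime ℱ τ :=
      hM.stronglyAdapted.adapted.isStoppingTime_hittingBtwn measurableSet_Ici
    have hτle : ∀ ω, τ ω ≤ n := fun ω => WithTop.coe_le_coe.2 (hittingBtwn_le ω)
    have hstop_int : Integrable (stoppedValue M τ) μ := by
      have := (hsub.integrable_stoppedValue hτ hτle).neg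
      refine this.congr (Filter.Eventually.of_forall fun ω => ?_)
      simp [stoppedValue]
    have hopt : ∫ ω, stoppedValue M τ ω ∂μ ≤ 1 := by
      have h := hsub.expected_stoppedValue_mono (isStoppingTime_const ℱ (0:ℕ)) hτ
        (fun ω => WithTop.coe_le_coe.2 (Nat.zero_le _)) hτle
      have e1 : ∫ x, (-M) 0 x ∂μ = - ∫ ω, M 0 ω ∂μ := by
        rw [← integral_neg]
        apply integral_congr_ae (Filter.Eventually.of_forall fun ω => ?_)
        simp [stoppedValue]
      have e2 : ∫ x, stoppedValue (-M) τ x ∂μ = - ∫ ω, stoppedValue M τ ω ∂μ := by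
        rw [← integral_neg]
        apply integral_congr_ae (Filter.Eventually.of_forall fun ω => ?_)
        simp [stoppedValue]
      rw [stoppedValue_const] at h
      rw [e1, e2] at h
      have e3 : ∫ ω, M 0 ω ∂μ = 1 := by
        rw [show (fun ω => M 0 ω) = fun _ => (1:ℝ) from funext h0]
        simp
      rw [e3] at h
      linarith
    have hconst : ∀ ω ∈ A n, ε ≤ stoppedValue M τ ω := by
      intro ω hω
      simp only [hAdef, Set.mem_iUnion, Finset.mem_range] at hω
      obtain ⟨k, hk, hεk⟩ := hω
      exact stoppedValue_hittingBtwn_mem ⟨k, ⟨Nat.zero_le _, Nat.lt_succ_iff.1 hk⟩, hεk⟩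
    have h1 : ε * (μ (A n)).toReal ≤ ∫ ω in A n, stoppedValue M τ ω ∂μ :=
      by
        have := setIntegral_ge_of_const_le (hAmeas n) (measure_ne_top μ _) hconst
          hstop_int.integrableOn
        rw [smul_eq_mul, mul_comm] at this
        exact this
    have h2 : ∫ ω in A n, stoppedValue M τ ω ∂μ ≤ ∫ ω, stoppedValue M τ ω ∂μ :=
      setIntegral_le_integral hstop_int
        (Filter.Eventually.of_forall fun ω => (hpos _ ω).le)
    have h3 : (μ (A n)).toReal ≤ 1 / ε := by
      rw [le_div_iff₀ hε]
      linarith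
    calc μ (A n) = ENNReal.ofReal ((μ (A n)).toReal) := by
          rw [ENNReal.ofReal_toReal (measure_ne_top μ _)]
      _ ≤ ENNReal.ofReal (1 / ε) := ENNReal.ofReal_le_ofReal h3
  have hU : {ω | ∃ t, ε ≤ M t ω} = ⋃ n, A n := by
    ext ω
    simp only [hAdef, Set.mem_setOf_eq, Set.mem_iUnion, Finset.mem_range]
    constructor
    · rintro ⟨t, ht⟩; exact ⟨t, t, Nat.lt_succ_self t, ht⟩
    · rintro ⟨n, k, _, hk⟩; exact ⟨k, hk⟩
  rw [hU]
  have hmono : Monotone A := by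
    intro a b hab ω hω
    simp only [hAdef, Set.mem_iUnion, Finset.mem_range] at hω ⊢
    obtain ⟨k, hk, h⟩ := hω
    exact ⟨k, by omega, h⟩
  have hdir : Directed (· ⊆ ·) A := hmono.directed_le
  rw [Directed.measure_iUnion hdir]
  exact iSup_le hAn




lemma mart (Y G H : ℕ → Ω → ℝ)
    (hY_meas : ∀ t, 1 ≤ t → StronglyMeasurable[ℱ t] (Y t))
    (hY_int : ∀ t, 1 ≤ t → Integrable (Y t) μ)
    (hY_mds : ∀ t, 1 ≤ t → μ[Y t | ℱ (t - 1)] =ᵐ[μ] 0)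
    (hG : ∀ t, 1 ≤ t → StronglyMeasurable[ℱ (t - 1)] (G t))
    (hH : ∀ t, 1 ≤ t → StronglyMeasurable[ℱ (t - 1)] (H t))
    (hbound : ∀ t, 1 ≤ t → ∀ᵐ ω ∂μ, -G t ω ≤ Y t ω ∧ Y t ω ≤ H t ω)
    (lam : ℝ) (hlam : 0 ≤ lam) :
    Supermartingale (fun t ω => Real.exp (lam * (∑ i ∈ Finset.Icc 1 t, Y i ω)
      - lam ^ 2 * (∑ i ∈ Finset.Icc 1 t, (G i ω + H i ω) ^ 2) / 8)) ℱ μ := by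
  have hGH0 : ∀ i : ℕ, 1 ≤ i → ∀ᵐ ω ∂μ, 0 ≤ G i ω ∧ 0 ≤ H i ω := by
    intro i hi
    have hY0' : μ[(-(Y i)) | ℱ (i-1)] =ᵐ[μ] 0 := by
      refine (condExp_neg (Y i) _).trans ((hY_mds i hi).mono fun ω h => ?_)
      simp only [Pi.neg_apply, Pi.zero_apply] at h ⊢
      simp [h]
    have h1 : ∀ᵐ ω ∂μ, 0 ≤ G i ω :=
      upper_bound_nonneg (i-1) (hY_int i hi).neg hY0' (hG i hi)
        ((hbound i hi).mono fun ω h => by simp only [Pi.neg_apply]; linarith [h.1])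
    have h2 : ∀ᵐ ω ∂μ, 0 ≤ H i ω :=
      upper_bound_nonneg (i-1) (hY_int i hi) (hY_mds i hi) (hH i hi)
        ((hbound i hi).mono fun ω h => h.2)
    filter_upwards [h1, h2] with ω e1 e2 using ⟨e1, e2⟩
  -- measurability of each component at time t
  have hmeas : ∀ t : ℕ, Measurable[ℱ t] fun ω => lam * (∑ i ∈ Finset.Icc 1 t, Y i ω)
      - lam ^ 2 * (∑ i ∈ Finset.Icc 1 t, (G i ω + H i ω) ^ 2) / 8 := by
    intro t
    have hYsum : Measurable[ℱ t] fun ω => ∑ i ∈ Finset.Icc 1 t, Y i ω := by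
      apply Finset.measurable_sum
      intro i hi
      rw [Finset.mem_Icc] at hi
      exact ((hY_meas i hi.1).mono (ℱ.mono hi.2)).measurable
    have hQsum : Measurable[ℱ t] fun ω => ∑ i ∈ Finset.Icc 1 t, (G i ω + H i ω) ^ 2 := by
      apply Finset.measurable_sum
      intro i hi
      rw [Finset.mem_Icc] at hi
      have hle : i - 1 ≤ t := by omega
      exact ((((hG i hi.1).mono (ℱ.mono hle)).measurable.add
        (((hH i hi.1).mono (ℱ.mono hle))).measurable).pow_const 2)
    exact (hYsum.const_mul lam).sub ((hQsum.const_mul (lam ^ 2)).div_const 8)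
  have hadp : StronglyAdapted ℱ (fun t ω => Real.exp (lam * (∑ i ∈ Finset.Icc 1 t, Y i ω)
      - lam ^ 2 * (∑ i ∈ Finset.Icc 1 t, (G i ω + H i ω) ^ 2) / 8)) := fun t =>
    (Real.measurable_exp.comp (hmeas t)).stronglyMeasurable
  -- integrability
  have hexp_bound : ∀ t : ℕ, ∀ᵐ ω ∂μ, lam * (∑ i ∈ Finset.Icc 1 t, Y i ω)
      - lam ^ 2 * (∑ i ∈ Finset.Icc 1 t, (G i ω + H i ω) ^ 2) / 8 ≤ 2 * t := by
    intro t
    have hae : ∀ᵐ ω ∂μ, ∀ i ∈ Finset.Icc 1 t,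
        (-G i ω ≤ Y i ω ∧ Y i ω ≤ H i ω) ∧ 0 ≤ G i ω ∧ 0 ≤ H i ω := by
      rw [Filter.eventually_all_finset]
      intro i hi
      rw [Finset.mem_Icc] at hi
      filter_upwards [hbound i hi.1, hGH0 i hi.1] with ω e1 e2 using ⟨e1, e2⟩
    filter_upwards [hae] with ω h
    have : lam * (∑ i ∈ Finset.Icc 1 t, Y i ω)
        - lam ^ 2 * (∑ i ∈ Finset.Icc 1 t, (G i ω + H i ω) ^ 2) / 8
        = ∑ i ∈ Finset.Icc 1 t, (lam * Y i ω - lam ^ 2 * (G i ω + H i ω) ^ 2 / 8) := by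
      rw [Finset.sum_sub_distrib, ← Finset.mul_sum, ← Finset.sum_div, ← Finset.mul_sum]
    rw [this]
    calc ∑ i ∈ Finset.Icc 1 t, (lam * Y i ω - lam ^ 2 * (G i ω + H i ω) ^ 2 / 8)
        ≤ ∑ _i ∈ Finset.Icc 1 t, (2:ℝ) := by
          apply Finset.sum_le_sum
          intro i hi
          obtain ⟨h1, h2, h3⟩ := h i hi
          exact exp_term_le _ _ _ _ h2 h3 h1.2 hlam
      _ ≤ 2 * t := by
          have he : t + 1 - 1 = t := by omega
          rw [Finset.sum_const, Nat.card_Icc, he, nsmul_eq_mul]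
          exact le_of_eq (by ring)
  have hint : ∀ t : ℕ, Integrable (fun ω => Real.exp (lam * (∑ i ∈ Finset.Icc 1 t, Y i ω)
      - lam ^ 2 * (∑ i ∈ Finset.Icc 1 t, (G i ω + H i ω) ^ 2) / 8)) μ := by
    intro t
    apply Integrable.mono' (integrable_const (Real.exp (2 * t)))
      ((hadp t).mono (ℱ.le t)).aestronglyMeasurable
    filter_upwards [hexp_bound t] with ω h
    rw [Real.norm_eq_abs, abs_of_pos (Real.exp_pos _)]
    exact Real.exp_le_exp.2 h
  apply supermartingale_nat hadp hint
  intro t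
  show μ[(fun ω => Real.exp (lam * (∑ i ∈ Finset.Icc 1 (t+1), Y i ω)
      - lam ^ 2 * (∑ i ∈ Finset.Icc 1 (t+1), (G i ω + H i ω) ^ 2) / 8)) | ℱ t] ≤ᵐ[μ]
    fun ω => Real.exp (lam * (∑ i ∈ Finset.Icc 1 t, Y i ω)
      - lam ^ 2 * (∑ i ∈ Finset.Icc 1 t, (G i ω + H i ω) ^ 2) / 8)
  -- single-step inequality
  have hstep := cond_step (ℱ := ℱ) (μ := μ) t (Y := Y (t+1)) (G := G (t+1)) (H := H (t+1))
    lam hlam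
    (((hY_meas (t+1) (by omega)).mono (ℱ.le (t+1))).aestronglyMeasurable)
    (hY_int (t+1) (by omega))
    (by simpa using hY_mds (t+1) (by omega))
    (by simpa using hG (t+1) (by omega))
    (by simpa using hH (t+1) (by omega))
    (hbound (t+1) (by omega))
  set X : Ω → ℝ := fun ω => Real.exp (lam * Y (t+1) ω - lam ^ 2 * (G (t+1) ω + H (t+1) ω) ^ 2 / 8)
    with hXdef
  set Mt : Ω → ℝ := fun ω => Real.exp (lam * (∑ i ∈ Finset.Icc 1 t, Y i ω)
      - lam ^ 2 * (∑ i ∈ Finset.Icc 1 t, (G i ω + H i ω) ^ 2) / 8) with hMtdef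
  have hsplit : (fun ω => Real.exp (lam * (∑ i ∈ Finset.Icc 1 (t+1), Y i ω)
      - lam ^ 2 * (∑ i ∈ Finset.Icc 1 (t+1), (G i ω + H i ω) ^ 2) / 8))
      = fun ω => Mt ω * X ω := by
    funext ω
    rw [hMtdef, hXdef, ← Real.exp_add]
    congr 1
    rw [Finset.sum_Icc_succ_top (by omega : 1 ≤ t+1),
      Finset.sum_Icc_succ_top (by omega : 1 ≤ t+1)]
    ring
  rw [hsplit]
  have hmul : μ[fun ω => Mt ω * X ω | ℱ t] =ᵐ[μ] fun ω => Mt ω * (μ[X | ℱ t]) ω :=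
    condExp_mul_of_stronglyMeasurable_left (hadp t) (by have := hint (t+1); rwa [hsplit] at this) hstep.1
  calc μ[fun ω => Mt ω * X ω | ℱ t] =ᵐ[μ] fun ω => Mt ω * (μ[X | ℱ t]) ω := hmul
    _ ≤ᵐ[μ] Mt := by
        filter_upwards [hstep.2] with ω h
        calc Mt ω * (μ[X | ℱ t]) ω ≤ Mt ω * 1 :=
              mul_le_mul_of_nonneg_left h (Real.exp_pos _).le
          _ = Mt ω := mul_one _



end Helpers

set_option maxHeartbeats 2000000 in
/-- Time-uniform Hoeffding bound for martingale difference sequences with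
predictable bounds `-G t ≤ Y t ≤ H t`. -/
theorem stmt_12 {Ω : Type*} {m0 : MeasurableSpace Ω} (μ : Measure Ω) [IsProbabilityMeasure μ]
    (ℱ : Filtration ℕ m0) (Y G H : ℕ → Ω → ℝ)
    (hY_meas : ∀ t, 1 ≤ t → StronglyMeasurable[ℱ t] (Y t))
    (hY_int : ∀ t, 1 ≤ t → Integrable (Y t) μ)
    (hY_mds : ∀ t, 1 ≤ t → μ[Y t | ℱ (t - 1)] =ᵐ[μ] 0)
    (hG : ∀ t, 1 ≤ t → StronglyMeasurable[ℱ (t - 1)] (G t))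
    (hH : ∀ t, 1 ≤ t → StronglyMeasurable[ℱ (t - 1)] (H t))
    (hbound : ∀ t, 1 ≤ t → ∀ᵐ ω ∂μ, -G t ω ≤ Y t ω ∧ Y t ω ≤ H t ω)
    (m δ : ℝ) (hm : 0 < m) (hδ : δ ∈ Set.Ioo (0 : ℝ) 1) :
    ENNReal.ofReal (1 - δ) ≤
      μ {ω | ∀ t : ℕ, 1 ≤ t →
        ∑ i ∈ Finset.Icc 1 t, Y i ω ≤
          1.44 * Real.sqrt
            (max ((1 / 4) * ∑ i ∈ Finset.Icc 1 t, (G i ω + H i ω) ^ 2) m *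
              (1.4 * Real.log (Real.log
                  (2 * max (((1 / 4) * ∑ i ∈ Finset.Icc 1 t, (G i ω + H i ω) ^ 2) / m) 1))
                + Real.log (5.2 / δ)))} := by
  obtain ⟨hδ0, hδ1⟩ := hδ
  have hlog2 : (0:ℝ) < Real.log 2 := Real.log_pos (by norm_num)
  set dk : ℕ → ℝ := fun k => δ / (5.2 * (((k:ℝ)+1) * Real.log 2) ^ (1.4:ℝ)) with hdk
  have hzpos : ∀ k : ℕ, (0:ℝ) < ((k:ℝ)+1) * Real.log 2 := fun k => by positivity
  have hdkpos : ∀ k, 0 < dk k := fun k => by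
    simp only [hdk]
    positivity
  have hLeq : ∀ k, Real.log (1 / dk k)
      = Real.log 5.2 + 1.4 * Real.log (((k:ℝ)+1) * Real.log 2) - Real.log δ := fun k => by
    simp only [hdk]
    exact Lk_eq δ hδ0 k
  have hlogz : ∀ k : ℕ, Real.log (Real.log 2) ≤ Real.log (((k:ℝ)+1) * Real.log 2) := by
    intro k
    apply Real.log_le_log hlog2
    nlinarith [Nat.cast_nonneg (α := ℝ) k, hlog2]
  have hLpos : ∀ k, 0 < Real.log (1 / dk k) := by
    intro k
    rw [hLeq k]
    have h2 := log_log_two_lb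
    have h3 := log_52_lb
    have h4 : Real.log δ < 0 := Real.log_neg hδ0 hδ1
    have h5 := hlogz k
    linarith
  set lam : ℕ → ℝ := fun k =>
    Real.sqrt (2 * Real.log (1 / dk k) / (m * 2^k * Real.sqrt 2)) with hlamdef
  have hs2pos : (0:ℝ) < Real.sqrt 2 := Real.sqrt_pos.2 (by norm_num)
  have hvpos : ∀ k : ℕ, (0:ℝ) < m * 2^k * Real.sqrt 2 := fun k => by positivity
  have hlampos : ∀ k, 0 < lam k := fun k =>
    Real.sqrt_pos.2 (div_pos (by linarith [hLpos k]) (hvpos k))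
  set Mp : ℕ → ℕ → Ω → ℝ := fun k t ω =>
    Real.exp (lam k * (∑ i ∈ Finset.Icc 1 t, Y i ω)
      - (lam k)^2 * (∑ i ∈ Finset.Icc 1 t, (G i ω + H i ω)^2) / 8) with hMp
  have hsuper : ∀ k, Supermartingale (Mp k) ℱ μ := fun k =>
    mart Y G H hY_meas hY_int hY_mds hG hH hbound (lam k) (hlampos k).le
  set B : ℕ → Set Ω := fun k => {ω | ∃ t, 1 / dk k ≤ Mp k t ω} with hBdef
  have hBmeas : ∀ k, MeasurableSet (B k) := by
    intro k
    have : B k = ⋃ t, {ω | 1 / dk k ≤ Mp k t ω} := by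
      ext ω
      simp [hBdef]
    rw [this]
    exact MeasurableSet.iUnion fun t => measurableSet_le measurable_const
      (((hsuper k).stronglyAdapted t).mono (ℱ.le t)).measurable
  have hBk : ∀ k, μ (B k) ≤ ENNReal.ofReal (dk k) := by
    intro k
    have h0 : ∀ ω, Mp k 0 ω = 1 := by
      intro ω
      simp [hMp, Finset.Icc_eq_empty (by omega : ¬ (1:ℕ) ≤ 0)]
    have := ville (hsuper k) (fun t ω => Real.exp_pos _) h0 (one_div_pos.2 (hdkpos k))
    calc μ (B k) ≤ ENNReal.ofReal (1 / (1 / dk k)) := this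
      _ = ENNReal.ofReal (dk k) := by rw [one_div_one_div]
  have hsummable := delta_sum δ hδ0
  have hUnion : μ (⋃ k, B k) ≤ ENNReal.ofReal δ := by
    calc μ (⋃ k, B k) ≤ ∑' k, μ (B k) := measure_iUnion_le B
      _ ≤ ∑' k, ENNReal.ofReal (dk k) := ENNReal.tsum_le_tsum hBk
      _ = ENNReal.ofReal (∑' k, dk k) :=
          (ENNReal.ofReal_tsum_of_nonneg (fun k => (hdkpos k).le) hsummable.1).symm
      _ ≤ ENNReal.ofReal δ := ENNReal.ofReal_le_ofReal hsummable.2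
  have hincl : (⋃ k, B k)ᶜ ⊆ {ω | ∀ t : ℕ, 1 ≤ t →
      ∑ i ∈ Finset.Icc 1 t, Y i ω ≤
        1.44 * Real.sqrt
          (max ((1 / 4) * ∑ i ∈ Finset.Icc 1 t, (G i ω + H i ω) ^ 2) m *
            (1.4 * Real.log (Real.log
                (2 * max (((1 / 4) * ∑ i ∈ Finset.Icc 1 t, (G i ω + H i ω) ^ 2) / m) 1))
              + Real.log (5.2 / δ)))} := by
    intro ω hω
    simp only [Set.mem_compl_iff, Set.mem_iUnion, not_exists] at hω
    have hωk : ∀ k t', Mp k t' ω < 1 / dk k := by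
      intro k t'
      by_contra hcon
      push_neg at hcon
      exact hω k (by exact ⟨t', hcon⟩)
    intro t _
    set W : ℝ := 1 / 4 * ∑ i ∈ Finset.Icc 1 t, (G i ω + H i ω) ^ 2 with hWdef
    have hQ0 : (0:ℝ) ≤ ∑ i ∈ Finset.Icc 1 t, (G i ω + H i ω)^2 :=
      Finset.sum_nonneg fun i _ => sq_nonneg _
    have hW0 : 0 ≤ W := by rw [hWdef]; positivity
    set V : ℝ := max W m with hVdef
    have hmV : m ≤ V := le_max_right _ _
    have hWV : W ≤ V := le_max_left _ _
    have hV0 : 0 < V := lt_of_lt_of_le hm hmV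
    obtain ⟨k, hk1, hk2⟩ := exists_epoch (V/m) ((one_le_div hm).2 hmV)
    have hk1' : m * 2^k ≤ V := by
      have := (le_div_iff₀ hm).1 hk1
      linarith [this]
    have hk2' : V < m * 2^(k+1) := by
      have := (div_lt_iff₀ hm).1 hk2
      linarith [this]
    set L : ℝ := Real.log (1 / dk k) with hLdef
    have hL0 : 0 < L := hLpos k
    -- from the supermartingale bound
    have hlog : lam k * (∑ i ∈ Finset.Icc 1 t, Y i ω)
        - (lam k)^2 * (∑ i ∈ Finset.Icc 1 t, (G i ω + H i ω)^2) / 8 < L := by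
      have h1 : Real.log (Mp k t ω) < Real.log (1 / dk k) :=
        Real.log_lt_log (by simp only [hMp]; exact Real.exp_pos _) (hωk k t)
      rw [hLdef]
      simpa [hMp, Real.log_exp] using h1
    have hS : (∑ i ∈ Finset.Icc 1 t, Y i ω) < lam k * V / 2 + L / lam k := by
      have hl := hlampos k
      have hQW : (∑ i ∈ Finset.Icc 1 t, (G i ω + H i ω)^2) = 4 * W := by
        rw [hWdef]; ring
      rw [hQW] at hlog
      have h2 : lam k * (∑ i ∈ Finset.Icc 1 t, Y i ω) < L + (lam k)^2 * (V/2) := by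
        nlinarith [sq_nonneg (lam k)]
      have h3 : (∑ i ∈ Finset.Icc 1 t, Y i ω) < (L + (lam k)^2 * (V/2)) / lam k := by
        rw [lt_div_iff₀ hl]
        linarith [h2]
      have h4 : (L + (lam k)^2 * (V/2)) / lam k = lam k * V / 2 + L / lam k := by
        field_simp
        ring
      linarith [h3, h4.symm.le]
    have hss : Real.sqrt 2 * Real.sqrt 2 = 2 := Real.mul_self_sqrt (by norm_num)
    have hkey : lam k * V / 2 + L / lam k ≤ 1.44 * Real.sqrt (V * L) := by
      have hlamk : lam k = Real.sqrt (2 * L / (m * 2^k * Real.sqrt 2)) := by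
        rw [hlamdef, hLdef]
      rw [hlamk]
      apply key_alg V (m * 2^k * Real.sqrt 2) L (hvpos k) hL0
      · have : m * 2^k ≤ V := hk1'
        nlinarith [hs2pos]
      · have he : Real.sqrt 2 * (m * 2^k * Real.sqrt 2) = m * 2^(k+1) := by
          rw [pow_succ]
          nlinarith [hss]
        rw [he]
        exact hk2'.le
    -- the log-term comparison
    have hmax : max (W/m) 1 = V/m := by
      rcases le_total W m with hc | hc
      · have h1 : W/m ≤ 1 := (div_le_one hm).2 hc
        have h2 : V = m := max_eq_right hc
        rw [max_eq_right h1, h2, div_self hm.ne']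
      · have h1 : (1:ℝ) ≤ W/m := (one_le_div hm).2 hc
        have h2 : V = W := max_eq_left hc
        rw [max_eq_left h1, h2]
    have hLle : L ≤ 1.4 * Real.log (Real.log (2 * (V/m))) + Real.log (5.2 / δ) := by
      rw [hLdef, hLeq k, Real.log_div (by norm_num) hδ0.ne']
      have h2k : (2:ℝ)^(k+1) ≤ 2 * (V/m) := by
        have := hk1
        rw [pow_succ]
        linarith [hk1]
      have hlb : ((k:ℝ)+1) * Real.log 2 ≤ Real.log (2 * (V/m)) := by
        have h1 : Real.log ((2:ℝ)^(k+1)) ≤ Real.log (2 * (V/m)) :=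
          Real.log_le_log (by positivity) h2k
        rw [Real.log_pow] at h1
        push_cast at h1
        linarith [h1]
      have h3 : Real.log (((k:ℝ)+1) * Real.log 2) ≤ Real.log (Real.log (2 * (V/m))) :=
        Real.log_le_log (hzpos k) hlb
      linarith [h3]
    have hfinal : 1.44 * Real.sqrt (V * L) ≤ 1.44 * Real.sqrt (V *
        (1.4 * Real.log (Real.log (2 * max (W/m) 1)) + Real.log (5.2 / δ))) := by
      apply mul_le_mul_of_nonneg_left _ (by norm_num)
      apply Real.sqrt_le_sqrt
      rw [hmax]
      exact mul_le_mul_of_nonneg_left hLle hV0.le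
    calc ∑ i ∈ Finset.Icc 1 t, Y i ω ≤ lam k * V / 2 + L / lam k := hS.le
      _ ≤ 1.44 * Real.sqrt (V * L) := hkey
      _ ≤ 1.44 * Real.sqrt (V *
          (1.4 * Real.log (Real.log (2 * max (W/m) 1)) + Real.log (5.2 / δ))) := hfinal
  have hcompl : ENNReal.ofReal (1 - δ) ≤ μ ((⋃ k, B k)ᶜ) := by
    have h1 : ENNReal.ofReal (1 - δ) = 1 - ENNReal.ofReal δ := by
      rw [← ENNReal.ofReal_one, ← ENNReal.ofReal_sub _ hδ0.le]
    rw [h1, prob_compl_eq_one_sub (MeasurableSet.iUnion hBmeas)]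
    exact tsub_le_tsub_left hUnion 1
  exact le_trans hcompl (measure_mono hincl)
end

section
/- Let (Ω, 𝓕, P) be a probability space with a filtration (𝓕_k)_{k≥0}, and let (X_k)_{k≥1} be {0,1}-valued random variables with X_k 𝓕_k-measurable and P(X_k = 1 | 𝓕_{k−1}) = p_k almost surely, where each p_k is 𝓕_{k−1}-measurable with values in [0, 1], p_1 > 0 is deterministic, and Σ_{k=1}^t p_k (1 − p_k) ≤ p_1 · t almost surely for every t. Then for every δ ∈ (0, 1), with probability at least 1 − δ, simultaneously for all t ∈ ℕ: Σ_{k=1}^t X_k ≤ (3/2) Σ_{k=1}^t p_k + 1.45 · L(t, δ), where L(t, δ) = log( 5.2 · (log(2t))^{1.4} / δ ). -/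
open MeasureTheory Finset

/-- Ville's inequality for nonnegative supermartingales indexed by `ℕ`. -/
lemma ville_ineq {Ω : Type*} {m0 : MeasurableSpace Ω} {μ : Measure Ω} [IsProbabilityMeasure μ]
    {ℱ : Filtration ℕ m0} {f : ℕ → Ω → ℝ} (hsup : Supermartingale f ℱ μ)
    (hnonneg : ∀ n ω, 0 ≤ f n ω) {ε : ℝ} (hε : 0 < ε) :
    μ {ω | ∃ n, ε ≤ f n ω} ≤ ENNReal.ofReal ((∫ ω, f 0 ω ∂μ) / ε) := by
  have hI0 : 0 ≤ ∫ ω, f 0 ω ∂μ := integral_nonneg fun ω => hnonneg 0 ω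
  have hkey : ∀ N : ℕ, μ {ω | ∃ n ≤ N, ε ≤ f n ω} ≤ ENNReal.ofReal ((∫ ω, f 0 ω ∂μ) / ε) := by
    intro N
    set τ : Ω → WithTop ℕ := fun ω => ((hittingBtwn f (Set.Ici ε) 0 N ω : ℕ) : WithTop ℕ) with hτdef
    have hτ : IsStoppingTime ℱ τ := hsup.stronglyAdapted.adapted.isStoppingTime_hittingBtwn measurableSet_Ici
    have hτle : ∀ ω, τ ω ≤ N := fun ω => WithTop.coe_le_coe.2 (hittingBtwn_le ω)
    have hsvint : Integrable (stoppedValue f τ) μ :=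
      integrable_stoppedValue ℕ hτ hsup.integrable hτle
    -- optional stopping for the supermartingale
    have hos : ∫ ω, stoppedValue f τ ω ∂μ ≤ ∫ ω, f 0 ω ∂μ := by
      have h := hsup.neg.expected_stoppedValue_mono (isStoppingTime_const ℱ 0) hτ
        (fun ω => WithTop.coe_le_coe.2 (Nat.zero_le _)) hτle
      have h1 : stoppedValue (-f) (fun _ => WithTop.some (0 : ℕ)) = fun ω => -(f 0 ω) := rfl
      have h2 : stoppedValue (-f) τ = fun ω => -(stoppedValue f τ ω) := rfl
      rw [h1, h2, integral_neg, integral_neg, neg_le_neg_iff] at h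
      exact h
    -- measurability of the event
    have hAeq : {ω | ∃ n ≤ N, ε ≤ f n ω} = ⋃ n ≤ N, {ω | ε ≤ f n ω} := by
      ext ω; simp
    have hA : MeasurableSet {ω | ∃ n ≤ N, ε ≤ f n ω} := by
      rw [hAeq]
      exact MeasurableSet.iUnion fun n => MeasurableSet.iUnion fun _ =>
        measurableSet_le measurable_const
          ((hsup.stronglyMeasurable n).measurable.le (ℱ.le n))
    -- on the event, the stopped value is at least ε
    have hge : ∀ ω ∈ {ω | ∃ n ≤ N, ε ≤ f n ω}, ε ≤ stoppedValue f τ ω := by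
      intro ω hω
      obtain ⟨n, hn, hfn⟩ := hω
      have : stoppedValue f τ ω ∈ Set.Ici ε :=
        stoppedValue_hittingBtwn_mem ⟨n, ⟨Nat.zero_le _, hn⟩, hfn⟩
      exact this
    have h1 : ε * (μ {ω | ∃ n ≤ N, ε ≤ f n ω}).toReal ≤
        ∫ ω in {ω | ∃ n ≤ N, ε ≤ f n ω}, stoppedValue f τ ω ∂μ :=
      by have := setIntegral_ge_of_const_le hA (measure_ne_top _ _) hge hsvint.integrableOn
         rw [smul_eq_mul, mul_comm] at this; exact this
    have h2 : ∫ ω in {ω | ∃ n ≤ N, ε ≤ f n ω}, stoppedValue f τ ω ∂μ ≤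
        ∫ ω, stoppedValue f τ ω ∂μ :=
      setIntegral_le_integral hsvint (Filter.Eventually.of_forall fun ω => by
        simpa [stoppedValue] using hnonneg ((τ ω).untopA) ω)
    have h3 : (μ {ω | ∃ n ≤ N, ε ≤ f n ω}).toReal ≤ (∫ ω, f 0 ω ∂μ) / ε := by
      rw [le_div_iff₀ hε, mul_comm]
      exact h1.trans (h2.trans hos)
    rw [ENNReal.le_ofReal_iff_toReal_le (measure_ne_top _ _) (div_nonneg hI0 hε.le)]
    exact h3
  have hUnion : {ω | ∃ n, ε ≤ f n ω} = ⋃ N : ℕ, {ω | ∃ n ≤ N, ε ≤ f n ω} := by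
    ext ω
    simp only [Set.mem_setOf_eq, Set.mem_iUnion]
    exact ⟨fun ⟨n, hn⟩ => ⟨n, n, le_rfl, hn⟩, fun ⟨N, n, _, hn⟩ => ⟨n, hn⟩⟩
  rw [hUnion]
  have hmono : Monotone fun N : ℕ => {ω | ∃ n ≤ N, ε ≤ f n ω} := by
    intro a b hab ω ⟨n, hn, h⟩
    exact ⟨n, hn.trans hab, h⟩
  rw [hmono.measure_iUnion]
  exact iSup_le hkey

/-- Time-uniform control of the number of rounds a base learner is played in
terms of the sum of its (predictable) selection probabilities. -/
theorem stmt_15 {Ω : Type*} {m0 : MeasurableSpace Ω} (μ : Measure Ω) [IsProbabilityMeasure μ]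
    (ℱ : Filtration ℕ m0) (X : ℕ → Ω → ℝ) (p : ℕ → Ω → ℝ) (p₁ : ℝ)
    (hX01 : ∀ k, 1 ≤ k → ∀ ω, X k ω = 0 ∨ X k ω = 1)
    (hXmeas : ∀ k, 1 ≤ k → StronglyMeasurable[ℱ k] (X k))
    (hpmeas : ∀ k, 1 ≤ k → StronglyMeasurable[ℱ (k - 1)] (p k))
    (hp01 : ∀ k, 1 ≤ k → ∀ ω, p k ω ∈ Set.Icc (0 : ℝ) 1)
    (hcond : ∀ k, 1 ≤ k → μ[X k | ℱ (k - 1)] =ᵐ[μ] p k)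
    (hp₁ : ∀ ω, p 1 ω = p₁) (hp₁pos : 0 < p₁)
    (hvar : ∀ t : ℕ, ∀ᵐ ω ∂μ, ∑ k ∈ Finset.Icc 1 t, p k ω * (1 - p k ω) ≤ p₁ * t)
    (δ : ℝ) (hδ : δ ∈ Set.Ioo (0 : ℝ) 1) :
    ENNReal.ofReal (1 - δ) ≤
      μ {ω | ∀ t : ℕ, 1 ≤ t →
        ∑ k ∈ Finset.Icc 1 t, X k ω ≤
          (3 / 2) * ∑ k ∈ Finset.Icc 1 t, p k ω
            + 1.45 * Real.log (5.2 * Real.log (2 * t) ^ (1.4 : ℝ) / δ)} := by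
  classical
  set c : ℝ := Real.log 2 with hc
  have hcpos : 0 < c := Real.log_pos one_lt_two
  set f : ℕ → Ω → ℝ := fun t ω =>
    Real.exp (c * (∑ k ∈ Finset.Icc 1 t, X k ω - 3/2 * ∑ k ∈ Finset.Icc 1 t, p k ω)) with hf
  -- adaptedness
  have hadp : ∀ t, StronglyMeasurable[ℱ t] (f t) := by
    intro t
    apply Real.continuous_exp.comp_stronglyMeasurable
    apply StronglyMeasurable.const_mul
    apply StronglyMeasurable.sub
    · exact Finset.stronglyMeasurable_fun_sum _ (fun k hk => by
        rw [Finset.mem_Icc] at hk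
        exact (hXmeas k hk.1).mono (ℱ.mono hk.2))
    · apply StronglyMeasurable.const_mul
      exact Finset.stronglyMeasurable_fun_sum _ (fun k hk => by
        rw [Finset.mem_Icc] at hk
        exact (hpmeas k hk.1).mono (ℱ.mono ((Nat.sub_le k 1).trans hk.2)))
  -- bounds on f
  have hfpos : ∀ t ω, 0 < f t ω := fun t ω => Real.exp_pos _
  have hfbdd : ∀ t ω, f t ω ≤ Real.exp (c * t) := by
    intro t ω
    apply Real.exp_le_exp.2
    apply mul_le_mul_of_nonneg_left _ hcpos.le
    have h1 : ∑ k ∈ Finset.Icc 1 t, X k ω ≤ t := by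
      calc ∑ k ∈ Finset.Icc 1 t, X k ω ≤ ∑ k ∈ Finset.Icc 1 t, 1 := by
            apply Finset.sum_le_sum
            intro k hk
            rcases hX01 k (Finset.mem_Icc.1 hk).1 ω with h | h <;> simp [h]
        _ = t := by simp [Nat.card_Icc]
    have h2 : 0 ≤ ∑ k ∈ Finset.Icc 1 t, p k ω :=
      Finset.sum_nonneg fun k hk => (hp01 k (Finset.mem_Icc.1 hk).1 ω).1
    linarith
  have hint : ∀ t, Integrable (f t) μ := by
    intro t
    refine (integrable_const (Real.exp (c * t))).mono'
      (((hadp t).mono (ℱ.le t)).aestronglyMeasurable) ?_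
    exact Filter.Eventually.of_forall fun ω => by
      rw [Real.norm_eq_abs, abs_of_pos (hfpos t ω)]; exact hfbdd t ω
  -- supermartingale step
  have hstep : ∀ t : ℕ, μ[f (t+1) | ℱ t] ≤ᵐ[μ] f t := by
    intro t
    set h : Ω → ℝ := fun ω => f t ω * Real.exp (-(3/2 * c) * p (t+1) ω) with hh
    have hpm : StronglyMeasurable[ℱ t] (p (t+1)) := by
      have := hpmeas (t+1) (Nat.le_add_left 1 t)
      simpa using this
    have hhm : StronglyMeasurable[ℱ t] h :=
      (hadp t).mul (Real.continuous_exp.comp_stronglyMeasurable (hpm.const_mul _))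
    have hhbd : ∀ ω, 0 ≤ h ω ∧ h ω ≤ Real.exp (c * t) := by
      intro ω
      constructor
      · exact mul_nonneg (hfpos t ω).le (Real.exp_pos _).le
      · calc h ω ≤ f t ω * 1 := by
              apply mul_le_mul_of_nonneg_left _ (hfpos t ω).le
              rw [← Real.exp_zero]
              apply Real.exp_le_exp.2
              have := (hp01 (t+1) (Nat.le_add_left 1 t) ω).1
              nlinarith [hcpos.le]
          _ = f t ω := mul_one _
          _ ≤ Real.exp (c * t) := hfbdd t ω
    have hhint : Integrable h μ := by
      refine (integrable_const (Real.exp (c * t))).mono'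
        ((hhm.mono (ℱ.le t)).aestronglyMeasurable) ?_
      exact Filter.Eventually.of_forall fun ω => by
        rw [Real.norm_eq_abs, abs_of_nonneg (hhbd ω).1]; exact (hhbd ω).2
    -- decomposition f (t+1) = h + h * X (t+1)
    have hdecomp : f (t+1) = h + h * X (t+1) := by
      funext ω
      have hsum : ∀ g : ℕ → Ω → ℝ, ∑ k ∈ Finset.Icc 1 (t+1), g k ω
          = ∑ k ∈ Finset.Icc 1 t, g k ω + g (t+1) ω := fun g =>
        Finset.sum_Icc_succ_top (Nat.le_add_left 1 t) _
      have hX : Real.exp (c * X (t+1) ω) = 1 + X (t+1) ω := by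
        rcases hX01 (t+1) (Nat.le_add_left 1 t) ω with hx | hx
        · simp [hx]
        · simp [hx, hc, Real.exp_log two_pos]
          norm_num
      simp only [hf, Pi.add_apply, Pi.mul_apply, hsum]
      rw [show c * (∑ k ∈ Finset.Icc 1 t, X k ω + X (t+1) ω
          - 3/2 * (∑ k ∈ Finset.Icc 1 t, p k ω + p (t+1) ω))
        = c * (∑ k ∈ Finset.Icc 1 t, X k ω - 3/2 * ∑ k ∈ Finset.Icc 1 t, p k ω)
          + (-(3/2 * c) * p (t+1) ω) + c * X (t+1) ω by ring]
      rw [Real.exp_add, Real.exp_add, hX, hh]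
      ring
    have hXint : Integrable (X (t+1)) μ := by
      refine (integrable_const (1:ℝ)).mono'
        (((hXmeas (t+1) (Nat.le_add_left 1 t)).mono (ℱ.le _)).aestronglyMeasurable) ?_
      exact Filter.Eventually.of_forall fun ω => by
        rcases hX01 (t+1) (Nat.le_add_left 1 t) ω with hx | hx <;> simp [hx]
    have hhXint : Integrable (h * X (t+1)) μ := by
      refine (integrable_const (Real.exp (c * t))).mono'
        (((hhm.mono (ℱ.le t)).aestronglyMeasurable).mul
          (((hXmeas (t+1) (Nat.le_add_left 1 t)).mono (ℱ.le _)).aestronglyMeasurable)) ?_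
      exact Filter.Eventually.of_forall fun ω => by
        rcases hX01 (t+1) (Nat.le_add_left 1 t) ω with hx | hx
        · simp [hx]
          exact (Real.exp_pos _).le
        · simp [hx, Real.norm_eq_abs, abs_of_nonneg (hhbd ω).1]
          exact (hhbd ω).2
    have hcondX : μ[X (t+1) | ℱ t] =ᵐ[μ] p (t+1) := by
      have := hcond (t+1) (Nat.le_add_left 1 t)
      simpa using this
    calc μ[f (t+1) | ℱ t] =ᵐ[μ] μ[h | ℱ t] + μ[h * X (t+1) | ℱ t] := by
          rw [hdecomp]; exact condExp_add hhint hhXint _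
      _ =ᵐ[μ] h + h * p (t+1) := by
          apply Filter.EventuallyEq.add
          · exact (condExp_of_stronglyMeasurable (ℱ.le t) hhm hhint).symm ▸
              Filter.EventuallyEq.refl _ _
          · calc μ[h * X (t+1) | ℱ t]
                =ᵐ[μ] h * μ[X (t+1) | ℱ t] := condExp_mul_of_stronglyMeasurable_left hhm hhXint hXint
              _ =ᵐ[μ] h * p (t+1) := by
                  filter_upwards [hcondX] with ω hω
                  simp [hω]
      _ ≤ᵐ[μ] f t := by
          apply Filter.Eventually.of_forall
          intro ω
          have hp0 := (hp01 (t+1) (Nat.le_add_left 1 t) ω).1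
          have key : (1 + p (t+1) ω) * Real.exp (-(3/2 * c) * p (t+1) ω) ≤ 1 := by
            have hc23 : (1:ℝ) ≤ 3/2 * c := by
              have := Real.log_two_gt_d9
              rw [hc]; linarith
            have h1 : 1 + p (t+1) ω ≤ Real.exp (3/2 * c * p (t+1) ω) := by
              have h2 : 3/2 * c * p (t+1) ω + 1 ≤ Real.exp (3/2 * c * p (t+1) ω) :=
                Real.add_one_le_exp _
              nlinarith
            calc (1 + p (t+1) ω) * Real.exp (-(3/2 * c) * p (t+1) ω)
                ≤ Real.exp (3/2 * c * p (t+1) ω) * Real.exp (-(3/2 * c) * p (t+1) ω) :=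
                  mul_le_mul_of_nonneg_right h1 (Real.exp_pos _).le
              _ = 1 := by rw [← Real.exp_add]; ring_nf; exact Real.exp_zero
          have : h ω * (1 + p (t+1) ω) ≤ f t ω := by
            rw [hh]
            calc f t ω * Real.exp (-(3/2*c) * p (t+1) ω) * (1 + p (t+1) ω)
                = f t ω * ((1 + p (t+1) ω) * Real.exp (-(3/2*c) * p (t+1) ω)) := by ring
              _ ≤ f t ω * 1 := mul_le_mul_of_nonneg_left key (hfpos t ω).le
              _ = f t ω := mul_one _
          simp only [Pi.add_apply, Pi.mul_apply]
          linarith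
  have hsup : Supermartingale f ℱ μ := supermartingale_nat hadp hint hstep
  -- Ville's inequality with threshold 1/δ
  have hδ0 := hδ.1
  have hδ1 := hδ.2
  have hf0 : ∫ ω, f 0 ω ∂μ = 1 := by
    have : f 0 = fun _ => 1 := funext fun ω => by simp [hf]
    rw [this]
    simp
  have hεpos : (0:ℝ) < 1/δ := by positivity
  have hville := ville_ineq hsup (fun n ω => (hfpos n ω).le) hεpos
  rw [hf0, one_div_one_div] at hville
  set A := {ω | ∃ n, 1/δ ≤ f n ω} with hA
  have hAmeas : MeasurableSet A := by
    have : A = ⋃ n, {ω | 1/δ ≤ f n ω} := by ext ω; simp [hA]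
    rw [this]
    exact MeasurableSet.iUnion fun n =>
      measurableSet_le measurable_const (((hadp n).mono (ℱ.le n)).measurable)
  have hsubset : Aᶜ ⊆ {ω | ∀ t : ℕ, 1 ≤ t →
      ∑ k ∈ Finset.Icc 1 t, X k ω ≤
        (3 / 2) * ∑ k ∈ Finset.Icc 1 t, p k ω
          + 1.45 * Real.log (5.2 * Real.log (2 * t) ^ (1.4 : ℝ) / δ)} := by
    intro ω hω t ht
    have hlt : f t ω < 1/δ := by
      by_contra hcon
      exact hω ⟨t, le_of_not_gt hcon⟩
    set D : ℝ := ∑ k ∈ Finset.Icc 1 t, X k ω - 3/2 * ∑ k ∈ Finset.Icc 1 t, p k ω with hD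
    have hcD : c * D < Real.log (1/δ) := (Real.lt_log_iff_exp_lt hεpos).2 hlt
    have hL0 : 0 ≤ Real.log (1/δ) := Real.log_nonneg (by rw [le_div_iff₀ hδ0]; linarith)
    have hlog2 := Real.log_two_gt_d9
    have hD145 : D ≤ 1.45 * Real.log (1/δ) := by
      nlinarith [hL0, hcD, hcpos]
    have hBineq : (1:ℝ) ≤ 5.2 * Real.log (2 * t) ^ (1.4 : ℝ) := by
      have ht1 : (1:ℝ) ≤ t := by exact_mod_cast ht
      have h2t : Real.log 2 ≤ Real.log (2 * t) :=
        Real.log_le_log two_pos (by linarith)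
      have hb1 : Real.log 2 ^ (1.4:ℝ) ≤ Real.log (2*t) ^ (1.4:ℝ) :=
        Real.rpow_le_rpow hcpos.le h2t (by norm_num)
      have hb2 : Real.log 2 ^ (2:ℝ) ≤ Real.log 2 ^ (1.4:ℝ) :=
        Real.rpow_le_rpow_of_exponent_ge hcpos
          (by nlinarith [Real.log_two_lt_d9]) (by norm_num)
      have hb3 : Real.log 2 ^ (2:ℝ) = Real.log 2 * Real.log 2 := by
        rw [show (2:ℝ) = ((2:ℕ):ℝ) by norm_num, Real.rpow_natCast]; ring
      have k1 : (0.48:ℝ) ≤ Real.log 2 ^ (2:ℝ) := by rw [hb3]; nlinarith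
      have k3 : (0.48:ℝ) ≤ Real.log (2 * t) ^ (1.4:ℝ) := (k1.trans hb2).trans hb1
      linarith
    have hlogmono : Real.log (1/δ) ≤ Real.log (5.2 * Real.log (2 * t) ^ (1.4:ℝ) / δ) := by
      apply Real.log_le_log hεpos
      rw [div_le_div_iff₀ hδ0 hδ0]
      nlinarith
    have : D ≤ 1.45 * Real.log (5.2 * Real.log (2 * t) ^ (1.4:ℝ) / δ) := by
      calc D ≤ 1.45 * Real.log (1/δ) := hD145
        _ ≤ _ := by nlinarith
    simp only [hD] at this
    linarith
  calc ENNReal.ofReal (1 - δ) = 1 - ENNReal.ofReal δ := by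
        rw [ENNReal.ofReal_sub _ hδ0.le, ENNReal.ofReal_one]
    _ ≤ 1 - μ A := tsub_le_tsub_left hville 1
    _ = μ Aᶜ := (prob_compl_eq_one_sub hAmeas).symm
    _ ≤ _ := measure_mono hsubset
end

section
/- Let α ≥ 0, δ ∈ (0, 1), and T a positive integer. Let (Ω, 𝓕, P) be a probability space with a filtration (𝓕_k)_{k≥0}, and for each k let W_k ∈ {0,1} and Δ_k be 𝓕_k-measurable random variables and p_k an 𝓕_{k−1}-measurable random variable with values in [0, 1], such that for every ε ∈ (0, 1/2], P( W_k = 1 and |Δ_k| ≤ ε | 𝓕_{k−1} ) ≤ p_k · ε^α almost surely. Then with probability at least 1 − log₂(12T) · δ, simultaneously for all t ∈ [T] and all ε ∈ (0, 1/2): Σ_{k=1}^t W_k · 1{|Δ_k| ≤ ε} ≤ 3 ε^α · Σ_{k=1}^t p_k + 2 · L(t, δ), where L(t, δ) = log( 5.2 · (log(2t))^{1.4} / δ ). -/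
open MeasureTheory Finset

lemma ville_finite {Ω : Type*} {m0 : MeasurableSpace Ω} (μ : Measure Ω) [IsProbabilityMeasure μ]
    (ℱ : Filtration ℕ m0) (f : ℕ → Ω → ℝ) (hf : Supermartingale f ℱ μ)
    (hpos : ∀ t ω, 0 ≤ f t ω) (hf0 : ∀ ω, f 0 ω ≤ 1) (c : ℝ) (hc : 0 < c) (T : ℕ) :
    μ {ω | ∃ t ∈ Set.Icc 0 T, c ≤ f t ω} ≤ ENNReal.ofReal (1 / c) := by
  set τ : Ω → WithTop ℕ := fun ω => ((hittingBtwn f (Set.Ici c) 0 T ω : ℕ) : WithTop ℕ) with hτdef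
  have hτ : IsStoppingTime ℱ τ :=
    hf.stronglyAdapted.adapted.isStoppingTime_hittingBtwn measurableSet_Ici
  have hτle : ∀ ω, τ ω ≤ T := fun ω => WithTop.coe_le_coe.mpr (hittingBtwn_le (u := f) (s := Set.Ici c) (n := 0) ω)
  have hsvint : Integrable (stoppedValue f τ) μ :=
    integrable_stoppedValue ℕ hτ hf.integrable hτle
  -- expected stopped value ≤ 1
  have h1 : ∫ ω, stoppedValue f τ ω ∂μ ≤ 1 := by
    have hmono := (hf.neg.expected_stoppedValue_mono (isStoppingTime_const ℱ 0) hτ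
      (fun ω => WithTop.coe_le_coe.mpr (Nat.zero_le _)) hτle)
    have hneg : stoppedValue (-f) τ = fun ω => - stoppedValue f τ ω := rfl
    have hzero : stoppedValue (-f) (fun _ => WithTop.some (0:ℕ)) = fun ω => - f 0 ω := rfl
    rw [hneg, hzero, integral_neg, integral_neg, neg_le_neg_iff] at hmono
    refine hmono.trans ?_
    calc ∫ ω, f 0 ω ∂μ ≤ ∫ _ω, (1:ℝ) ∂μ :=
      integral_mono (hf.integrable 0) (integrable_const 1) hf0
    _ = 1 := by simp
  -- the event
  set A : Set Ω := {ω | ∃ t ∈ Set.Icc 0 T, c ≤ f t ω} with hA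
  have hAmeas : MeasurableSet A := by
    have : A = ⋃ t ∈ Finset.Icc 0 T, {ω | c ≤ f t ω} := by
      ext ω; simp [hA]
    rw [this]
    refine MeasurableSet.biUnion (Finset.Icc 0 T).countable_toSet (fun t _ => ?_)
    exact measurableSet_le measurable_const
      (((hf.stronglyAdapted t).measurable).mono (ℱ.le t) le_rfl)
  have hge : ∀ ω ∈ A, c ≤ stoppedValue f τ ω := by
    intro ω hω
    have : stoppedValue f τ ω ∈ Set.Ici c := stoppedValue_hittingBtwn_mem hω
    exact this
  have h2 : c * (μ A).toReal ≤ ∫ ω, stoppedValue f τ ω ∂μ := by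
    have hA1 : c * (μ A).toReal = ∫ _ω in A, c ∂μ := by
      rw [setIntegral_const, smul_eq_mul, mul_comm]; rfl
    rw [hA1]
    refine le_trans (setIntegral_mono_on (integrable_const c).integrableOn
      hsvint.integrableOn hAmeas hge) ?_
    refine setIntegral_le_integral hsvint ?_
    filter_upwards with ω
    exact le_of_le_of_eq (hpos _ ω) rfl
  have h3 : (μ A).toReal ≤ 1 / c := by
    rw [le_div_iff₀ hc, mul_comm]
    exact h2.trans h1
  calc μ A = ENNReal.ofReal ((μ A).toReal) := (ENNReal.ofReal_toReal (measure_ne_top μ A)).symm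
  _ ≤ ENNReal.ofReal (1 / c) := ENNReal.ofReal_le_ofReal h3

lemma super_bound {Ω : Type*} {m0 : MeasurableSpace Ω} (μ : Measure Ω) [IsProbabilityMeasure μ]
    (α δ : ℝ) (hα : 0 ≤ α) (hδ0 : 0 < δ) (T : ℕ)
    (ℱ : Filtration ℕ m0) (W Δ p : ℕ → Ω → ℝ)
    (hWmeas : ∀ k, 1 ≤ k → StronglyMeasurable[ℱ k] (W k))
    (hΔmeas : ∀ k, 1 ≤ k → StronglyMeasurable[ℱ k] (Δ k))
    (hpmeas : ∀ k, 1 ≤ k → StronglyMeasurable[ℱ (k - 1)] (p k))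
    (hp01 : ∀ k, 1 ≤ k → ∀ ω, p k ω ∈ Set.Icc (0 : ℝ) 1)
    (hcond : ∀ k, 1 ≤ k → ∀ ε : ℝ, 0 < ε → ε ≤ 1 / 2 →
      ∀ᵐ ω ∂μ,
        (μ[fun ω' => if W k ω' = 1 ∧ |Δ k ω'| ≤ ε then (1 : ℝ) else 0 | ℱ (k - 1)]) ω
          ≤ p k ω * ε ^ α)
    (η : ℝ) (hη0 : 0 < η) (hη2 : η ≤ 1 / 2) :
    μ {ω | ∃ t ∈ Set.Icc 0 T, 1 / δ ≤ Real.exp ((1/2) *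
        (∑ k ∈ Finset.Icc 1 t, if W k ω = 1 ∧ |Δ k ω| ≤ η then (1:ℝ) else 0)
        - (Real.exp (1/2) - 1) * η ^ α * (∑ k ∈ Finset.Icc 1 t, p k ω))} ≤
      ENNReal.ofReal δ := by
  set c1 : ℝ := Real.exp (1/2) - 1 with hc1def
  have hc1pos : 0 < c1 := by
    have h := Real.exp_lt_exp.mpr (show (0:ℝ) < 1/2 by norm_num)
    rw [Real.exp_zero] at h
    simp only [hc1def]; linarith
  set b : ℝ := η ^ α with hbdef
  have hηα : (0:ℝ) ≤ b := Real.rpow_nonneg hη0.le α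
  set X : ℕ → Ω → ℝ := fun k ω => if W k ω = 1 ∧ |Δ k ω| ≤ η then (1:ℝ) else 0 with hXdef
  set S : ℕ → Ω → ℝ := fun t ω => ∑ k ∈ Finset.Icc 1 t, X k ω with hSdef
  set V : ℕ → Ω → ℝ := fun t ω => ∑ k ∈ Finset.Icc 1 t, p k ω with hVdef
  set M : ℕ → Ω → ℝ := fun t ω => Real.exp ((1/2) * S t ω - c1 * b * V t ω) with hMdef
  -- basic bounds
  have hX01 : ∀ k ω, 0 ≤ X k ω ∧ X k ω ≤ 1 := by
    intro k ω; simp only [hXdef]; split <;> norm_num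
  have hS01 : ∀ t ω, 0 ≤ S t ω ∧ S t ω ≤ t := by
    intro t ω
    constructor
    · exact Finset.sum_nonneg fun k _ => (hX01 k ω).1
    · calc S t ω ≤ ∑ k ∈ Finset.Icc 1 t, (1:ℝ) :=
        Finset.sum_le_sum fun k _ => (hX01 k ω).2
      _ = t := by simp
  have hV01 : ∀ t ω, 0 ≤ V t ω ∧ V t ω ≤ t := by
    intro t ω
    constructor
    · exact Finset.sum_nonneg fun k hk => ((hp01 k (Finset.mem_Icc.mp hk).1 ω)).1
    · calc V t ω ≤ ∑ k ∈ Finset.Icc 1 t, (1:ℝ) :=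
        Finset.sum_le_sum fun k hk => ((hp01 k (Finset.mem_Icc.mp hk).1 ω)).2
      _ = t := by simp
  -- measurability
  have hXmeas : ∀ k, 1 ≤ k → StronglyMeasurable[ℱ k] (X k) := by
    intro k hk
    have hset : MeasurableSet[ℱ k] {ω | W k ω = 1 ∧ |Δ k ω| ≤ η} := by
      have h1 : MeasurableSet[ℱ k] {ω | W k ω = 1} :=
        (hWmeas k hk).measurable (measurableSet_singleton 1)
      have h2 : MeasurableSet[ℱ k] {ω | |Δ k ω| ≤ η} := by
        letI : MeasurableSpace Ω := ℱ k
        exact measurableSet_le (hΔmeas k hk).measurable.abs measurable_const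
      exact h1.inter h2
    have : X k = Set.indicator {ω | W k ω = 1 ∧ |Δ k ω| ≤ η} (fun _ => (1:ℝ)) := by
      funext ω; simp [hXdef, Set.indicator_apply, Set.mem_setOf_eq]
    rw [this]
    exact stronglyMeasurable_const.indicator hset
  have hSmeas : ∀ t, StronglyMeasurable[ℱ t] (S t) := by
    intro t
    apply Finset.stronglyMeasurable_fun_sum
    intro k hk
    exact (hXmeas k (Finset.mem_Icc.mp hk).1).mono (ℱ.mono (Finset.mem_Icc.mp hk).2)
  have hVmeas' : ∀ t s, t ≤ s + 1 → StronglyMeasurable[ℱ s] (V t) := by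
    intro t s hts
    apply Finset.stronglyMeasurable_fun_sum
    intro k hk
    have hk2 := (Finset.mem_Icc.mp hk).2
    exact (hpmeas k (Finset.mem_Icc.mp hk).1).mono (ℱ.mono (by omega))
  have hMmeas : ∀ t, StronglyMeasurable[ℱ t] (M t) := by
    intro t
    exact Real.continuous_exp.comp_stronglyMeasurable
      (((hSmeas t).const_mul (1/2)).sub (((hVmeas' t t (by omega))).const_mul (c1 * b)))
  have hMpos : ∀ t ω, 0 < M t ω := fun t ω => Real.exp_pos _
  have hMbdd : ∀ t ω, M t ω ≤ Real.exp ((1/2) * t) := by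
    intro t ω
    apply Real.exp_le_exp.mpr
    have h1 := (hS01 t ω).2
    have h2 := (hV01 t ω).1
    have h3 : 0 ≤ c1 * b * V t ω := mul_nonneg (mul_nonneg hc1pos.le hηα) h2
    exact (sub_le_self _ h3).trans (mul_le_mul_of_nonneg_left h1 (by norm_num))
  have hMint : ∀ t, Integrable (M t) μ := by
    intro t
    refine Integrable.mono' (integrable_const (Real.exp ((1/2) * t)))
      (((hMmeas t).mono (ℱ.le t)).aestronglyMeasurable) ?_
    filter_upwards with ω
    rw [Real.norm_eq_abs, abs_of_pos (hMpos t ω)]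
    exact hMbdd t ω
  -- the supermartingale step
  -- integrability of the indicator
  have hXint : ∀ k, 1 ≤ k → Integrable (X k) μ := by
    intro k hk
    refine Integrable.mono' (integrable_const (1:ℝ))
      (((hXmeas k hk).mono (ℱ.le k)).aestronglyMeasurable) ?_
    filter_upwards with ω
    rw [Real.norm_eq_abs, abs_of_nonneg (hX01 k ω).1]
    exact (hX01 k ω).2
  have hstep : ∀ t : ℕ, μ[M (t+1) | ℱ t] ≤ᵐ[μ] M t := by
    intro t
    set G : Ω → ℝ := fun ω => Real.exp ((1/2) * S t ω - c1 * b * V (t+1) ω) with hGdef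
    set E : Ω → ℝ := fun ω => 1 + c1 * X (t+1) ω with hEdef
    have hGmeas : StronglyMeasurable[ℱ t] G :=
      Real.continuous_exp.comp_stronglyMeasurable
        (((hSmeas t).const_mul (1/2)).sub
          ((hVmeas' (t+1) t (by omega)).const_mul (c1 * b)))
    have hS1 : ∀ ω, S (t+1) ω = S t ω + X (t+1) ω := by
      intro ω
      exact Finset.sum_Icc_succ_top (Nat.succ_le_succ (Nat.zero_le t)) _
    have hV1 : ∀ ω, V (t+1) ω = V t ω + p (t+1) ω := by
      intro ω
      exact Finset.sum_Icc_succ_top (Nat.succ_le_succ (Nat.zero_le t)) _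
    have hfun : M (t+1) = G * E := by
      funext ω
      have hE : E ω = Real.exp ((1/2) * X (t+1) ω) := by
        simp only [hEdef, hXdef]
        by_cases h : W (t+1) ω = 1 ∧ |Δ (t+1) ω| ≤ η
        · simp only [if_pos h, mul_one, hc1def]
          ring
        · simp [if_neg h]
      show M (t+1) ω = G ω * E ω
      simp only [hMdef, hGdef]
      rw [hE, ← Real.exp_add, hS1 ω]
      congr 1
      ring
    have hEbdd : ∀ ω, 1 ≤ E ω ∧ E ω ≤ 1 + c1 := by
      intro ω
      constructor
      · simp only [hEdef]
        nlinarith [(hX01 (t+1) ω).1, hc1pos]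
      · simp only [hEdef]
        nlinarith [(hX01 (t+1) ω).2, hc1pos]
    have hEmeas : StronglyMeasurable[ℱ (t+1)] E :=
      stronglyMeasurable_const.add ((hXmeas (t+1) (by omega)).const_mul c1)
    have hEint : Integrable E μ :=
      (integrable_const 1).add ((hXint (t+1) (by omega)).const_mul c1)
    have hGpos : ∀ ω, 0 < G ω := fun ω => Real.exp_pos _
    have hGbdd : ∀ ω, G ω ≤ Real.exp ((1/2) * t) := by
      intro ω
      apply Real.exp_le_exp.mpr
      have h1 := (hS01 t ω).2
      have h2 := (hV01 (t+1) ω).1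
      have h3 : 0 ≤ c1 * b * V (t+1) ω := mul_nonneg (mul_nonneg hc1pos.le hηα) h2
      exact (sub_le_self _ h3).trans (mul_le_mul_of_nonneg_left h1 (by norm_num))
    have hGEint : Integrable (G * E) μ := by
      refine Integrable.mono' (integrable_const (Real.exp ((1/2) * t) * (1 + c1)))
        ?_ ?_
      · exact ((hGmeas.mono (ℱ.le t)).mul (hEmeas.mono (ℱ.le (t+1)))).aestronglyMeasurable
      · filter_upwards with ω
        have h1 := hGpos ω
        have h2 := (hEbdd ω).1
        have h3 := (hEbdd ω).2
        have h4 := hGbdd ω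
        rw [Pi.mul_apply, Real.norm_eq_abs,
          abs_of_pos (mul_pos h1 (lt_of_lt_of_le zero_lt_one h2))]
        exact mul_le_mul h4 h3 (zero_le_one.trans h2) (Real.exp_pos _).le
    have hmul : μ[G * E | ℱ t] =ᵐ[μ] G * μ[E | ℱ t] :=
      condExp_mul_of_stronglyMeasurable_left hGmeas hGEint hEint
    have hcondE : μ[E | ℱ t] =ᵐ[μ] fun ω => 1 + c1 * (μ[X (t+1) | ℱ t]) ω := by
      have h1 : E = (fun _ => (1:ℝ)) + (c1 • X (t+1)) := by
        funext ω
        simp [hEdef]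
      rw [h1]
      refine (condExp_add (integrable_const 1) ((hXint (t+1) (by omega)).smul c1) (ℱ t)).trans ?_
      have h2 : μ[fun _ : Ω => (1:ℝ) | ℱ t] = fun _ => (1:ℝ) := condExp_const (ℱ.le t) 1
      have h3 := condExp_smul (μ := μ) (m := ℱ t) c1 (X (t+1))
      filter_upwards [h3] with ω h3ω
      simp only [Pi.add_apply, Pi.smul_apply, smul_eq_mul] at *
      rw [h2, h3ω]
    have hXcond : ∀ᵐ ω ∂μ, (μ[X (t+1) | ℱ t]) ω ≤ p (t+1) ω * b := by
      have h0 := hcond (t+1) (by omega) η hη0 hη2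
      simp only [Nat.add_sub_cancel] at h0
      have heq : (fun ω' => if W (t+1) ω' = 1 ∧ |Δ (t+1) ω'| ≤ η then (1:ℝ) else 0)
          = X (t+1) := rfl
      rw [heq] at h0
      rw [hbdef]
      exact h0
    have hXge : ∀ᵐ ω ∂μ, 0 ≤ (μ[X (t+1) | ℱ t]) ω := by
      have := condExp_nonneg (m := ℱ t) (μ := μ) (f := X (t+1))
        (Filter.Eventually.of_forall (fun ω => (hX01 (t+1) ω).1))
      filter_upwards [this] with ω hω
      simpa using hω
    rw [hfun]
    filter_upwards [hmul, hcondE, hXcond, hXge] with ω h1 h2 h3 h4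
    have hppos := (hp01 (t+1) (by omega) ω).1
    calc (μ[G * E | ℱ t]) ω = G ω * (μ[E | ℱ t]) ω := by rw [h1]; rfl
    _ = G ω * (1 + c1 * (μ[X (t+1) | ℱ t]) ω) := by rw [h2]
    _ ≤ G ω * (1 + c1 * (p (t+1) ω * b)) := by
        refine mul_le_mul_of_nonneg_left ?_ (hGpos ω).le
        have := mul_le_mul_of_nonneg_left h3 hc1pos.le
        linarith
    _ ≤ G ω * Real.exp (c1 * (p (t+1) ω * b)) := by
        refine mul_le_mul_of_nonneg_left ?_ (hGpos ω).le
        have := Real.add_one_le_exp (c1 * (p (t+1) ω * b))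
        linarith
    _ = M t ω := by
        simp only [hGdef, hMdef, ← Real.exp_add]
        congr 1
        rw [hV1 ω]
        ring
  have hsuper : Supermartingale M ℱ μ :=
    supermartingale_nat (fun t => hMmeas t) hMint hstep
  have hM0 : ∀ ω, M 0 ω ≤ 1 := by
    intro ω
    have : S 0 ω = 0 := by simp [hSdef, Finset.Icc_eq_empty (by norm_num : ¬ (1:ℕ) ≤ 0)]
    have hV0 : V 0 ω = 0 := by simp [hVdef, Finset.Icc_eq_empty (by norm_num : ¬ (1:ℕ) ≤ 0)]
    simp [hMdef, this, hV0]
  have := ville_finite μ ℱ M hsuper (fun t ω => (hMpos t ω).le) hM0 (1/δ)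
    (by positivity) T
  rw [one_div_one_div] at this
  exact this

set_option maxHeartbeats 1000000 in
lemma det_part (α δ : ℝ) (hα : 0 ≤ α) (hδ0 : 0 < δ) (hδ1 : δ < 1)
    (T : ℕ) (hT : 0 < T) (w d q : ℕ → ℝ)
    (hw : ∀ k, 1 ≤ k → w k = 0 ∨ w k = 1)
    (hq : ∀ k, 1 ≤ k → q k ∈ Set.Icc (0:ℝ) 1)
    (η : ℕ → ℝ)
    (hηd : η = fun i : ℕ => if α = 0 then 1/2 else min (1/2) ((2:ℝ) ^ (-(i:ℝ)/α)))
    (hη0 : ∀ i, 0 < η i)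
    (I : ℕ) (hI2T : (2:ℝ)*T ≤ 2^I)
    (hkey : ∀ i, i ≤ I → ∀ t, t ≤ T →
      (1/2) * (∑ k ∈ Finset.Icc 1 t, if w k = 1 ∧ |d k| ≤ η i then (1:ℝ) else 0)
        - (Real.exp (1/2) - 1) * (η i)^α * (∑ k ∈ Finset.Icc 1 t, q k)
        < Real.log (1/δ))
    (hexph : Real.exp (1/2) ≤ 1.75) :
    ∀ t ∈ Finset.Icc 1 T, ∀ ε : ℝ, 0 < ε → ε < 1/2 →
      ∑ k ∈ Finset.Icc 1 t, w k * (if |d k| ≤ ε then (1:ℝ) else 0) ≤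
        3 * ε ^ α * ∑ k ∈ Finset.Icc 1 t, q k
          + 2 * Real.log (5.2 * Real.log (2 * t) ^ (1.4 : ℝ) / δ) := by
  intro t ht ε hε0 hεhalf
  obtain ⟨ht1, ht2⟩ := Finset.mem_Icc.mp ht
  have hVt0 : (0:ℝ) ≤ ∑ k ∈ Finset.Icc 1 t, q k :=
    Finset.sum_nonneg fun k hk => (hq k (Finset.mem_Icc.mp hk).1).1
  have hVtle : ∑ k ∈ Finset.Icc 1 t, q k ≤ (t:ℝ) := by
    calc ∑ k ∈ Finset.Icc 1 t, q k ≤ ∑ _k ∈ Finset.Icc 1 t, (1:ℝ) :=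
      Finset.sum_le_sum fun k hk => (hq k (Finset.mem_Icc.mp hk).1).2
    _ = t := by simp
  have htT : (t:ℝ) ≤ T := by exact_mod_cast ht2
  have ht1R : (1:ℝ) ≤ t := by exact_mod_cast ht1
  have hD : 0 < Real.log (1/δ) := Real.log_pos (by rw [lt_div_iff₀ hδ0]; linarith)
  have hlog2t : Real.log 2 ≤ Real.log (2*(t:ℝ)) :=
    Real.log_le_log (by norm_num) (by linarith)
  have hl2pos : 0 < Real.log 2 := Real.log_pos (by norm_num)
  have hl2lt : Real.log 2 ≤ 1 := by nlinarith [Real.log_two_lt_d9]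
  have hxlb : (0.48:ℝ) ≤ Real.log (2*(t:ℝ)) ^ (1.4:ℝ) := by
    have h1 : Real.log 2 ^ (2:ℝ) ≤ Real.log 2 ^ (1.4:ℝ) :=
      Real.rpow_le_rpow_of_exponent_ge hl2pos hl2lt (by norm_num)
    have h2 : (0.48:ℝ) ≤ Real.log 2 ^ (2:ℝ) := by
      rw [show (2:ℝ) = ((2:ℕ):ℝ) by norm_num, Real.rpow_natCast]
      nlinarith [Real.log_two_gt_d9]
    have h3 : Real.log 2 ^ (1.4:ℝ) ≤ Real.log (2*(t:ℝ)) ^ (1.4:ℝ) :=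
      Real.rpow_le_rpow hl2pos.le hlog2t (by norm_num)
    linarith
  have hxpos : (0:ℝ) < 5.2 * (Real.log (2*(t:ℝ)) ^ (1.4:ℝ)) := by nlinarith
  have hC : Real.log 2 ≤ Real.log (5.2 * (Real.log (2*(t:ℝ)) ^ (1.4:ℝ))) :=
    Real.log_le_log (by norm_num) (by nlinarith)
  have hLsplit : Real.log (5.2 * (Real.log (2*(t:ℝ)) ^ (1.4:ℝ)) / δ)
      = Real.log (5.2 * (Real.log (2*(t:ℝ)) ^ (1.4:ℝ))) + Real.log (1/δ) := by
    rw [div_eq_mul_one_div, Real.log_mul (ne_of_gt hxpos) (by positivity)]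
  -- choose the grid index
  have hclaim : ∃ i, i ≤ I ∧ ε ≤ η i ∧
      ((η i)^α ≤ 2 * ε^α ∨ (η i)^α ≤ 1/(2*(T:ℝ))) := by
    by_cases hα0 : α = 0
    · refine ⟨0, Nat.zero_le _, ?_, Or.inl ?_⟩
      · have h : η 0 = 1/2 := by simp [hηd, hα0]
        rw [h]; linarith
      · rw [hα0, Real.rpow_zero, Real.rpow_zero]; norm_num
    · have hαpos : 0 < α := lt_of_le_of_ne hα (Ne.symm hα0)
      have hy0 : 0 < ε ^ α := Real.rpow_pos_of_pos hε0 α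
      have hy1 : ε ^ α < 1 := Real.rpow_lt_one hε0.le (by linarith) hαpos
      set y := ε ^ α with hydef
      set n : ℕ := ⌊Real.logb 2 (1/y)⌋₊ with hndef
      have h1y : 1 < 1/y := by rw [lt_div_iff₀ hy0]; linarith
      have hlogy0 : 0 ≤ Real.logb 2 (1/y) := Real.logb_nonneg (by norm_num) h1y.le
      have h2n : (2:ℝ)^(n:ℝ) ≤ 1/y := by
        calc (2:ℝ)^(n:ℝ) ≤ (2:ℝ)^(Real.logb 2 (1/y)) :=
          Real.rpow_le_rpow_of_exponent_le (by norm_num) (Nat.floor_le hlogy0)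
        _ = 1/y := Real.rpow_logb (by norm_num) (by norm_num) (by positivity)
      have h2n1 : 1/y < (2:ℝ)^((n:ℝ)+1) := by
        calc (1:ℝ)/y = (2:ℝ)^(Real.logb 2 (1/y)) :=
          (Real.rpow_logb (by norm_num) (by norm_num) (by positivity)).symm
        _ < (2:ℝ)^((n:ℝ)+1) :=
          Real.rpow_lt_rpow_of_exponent_lt (by norm_num) (Nat.lt_floor_add_one _)
      have hyn : y ≤ (2:ℝ)^(-(n:ℝ)) := by
        rw [Real.rpow_neg (by norm_num)]
        rw [one_div] at h2n
        exact (le_inv_comm₀ hy0 (Real.rpow_pos_of_pos (by norm_num) _)).mpr h2n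
      have hy2n1 : (2:ℝ)^(-((n:ℝ)+1)) < y := by
        rw [Real.rpow_neg (by norm_num)]
        rw [one_div] at h2n1
        exact (inv_lt_comm₀ (Real.rpow_pos_of_pos (by norm_num) _) hy0).mpr h2n1
      have hηgen : ∀ j : ℕ, (η j)^α ≤ (2:ℝ)^(-(j:ℝ)) := by
        intro j
        have h1 : η j ≤ (2:ℝ)^(-(j:ℝ)/α) := by
          simp only [hηd, if_neg hα0]
          exact min_le_right _ _
        calc (η j)^α ≤ ((2:ℝ)^(-(j:ℝ)/α))^α :=
          Real.rpow_le_rpow (hη0 j).le h1 hα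
        _ = (2:ℝ)^(-(j:ℝ)) := by
          rw [← Real.rpow_mul (by norm_num), div_mul_cancel₀ _ hα0]
      have himin : ((min n I : ℕ):ℝ) ≤ (n:ℝ) := by exact_mod_cast min_le_left n I
      have hymin : y ≤ (2:ℝ)^(-((min n I : ℕ):ℝ)) :=
        hyn.trans (Real.rpow_le_rpow_of_exponent_le (by norm_num) (by linarith))
      have hεmin : ε ≤ (2:ℝ)^(-((min n I : ℕ):ℝ)/α) := by
        by_contra hlt
        push_neg at hlt
        have h2 := Real.rpow_lt_rpow (Real.rpow_nonneg (by norm_num) _) hlt hαpos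
        rw [← Real.rpow_mul (by norm_num), div_mul_cancel₀ _ hα0] at h2
        rw [← hydef] at h2
        linarith
      refine ⟨min n I, min_le_right _ _, ?_, ?_⟩
      · have hη' : η (min n I) = min (1/2) ((2:ℝ)^(-((min n I : ℕ):ℝ)/α)) := by
          simp only [hηd, if_neg hα0]
        rw [hη']
        exact le_min (le_of_lt hεhalf) hεmin
      · rcases le_or_gt n I with hnI | hnI
        · left
          rw [min_eq_left hnI]
          have h2 : (2:ℝ)^(-(n:ℝ)) = 2 * (2:ℝ)^(-((n:ℝ)+1)) := by
            rw [show -(n:ℝ) = 1 + (-((n:ℝ)+1)) by ring,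
              Real.rpow_add (by norm_num), Real.rpow_one]
          have h3 := hηgen n
          rw [h2] at h3
          linarith
        · right
          rw [min_eq_right hnI.le]
          have h2I : (2:ℝ)^(-(I:ℝ)) ≤ 1/(2*(T:ℝ)) := by
            rw [Real.rpow_neg (by norm_num), Real.rpow_natCast, inv_eq_one_div]
            exact one_div_le_one_div_of_le (by positivity) hI2T
          exact (hηgen I).trans h2I
  obtain ⟨i, hiI, hεη, hcases⟩ := hclaim
  have hkey' := hkey i hiI t ht2
  have hsum : ∑ k ∈ Finset.Icc 1 t, w k * (if |d k| ≤ ε then (1:ℝ) else 0) ≤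
      ∑ k ∈ Finset.Icc 1 t, (if w k = 1 ∧ |d k| ≤ η i then (1:ℝ) else 0) := by
    refine Finset.sum_le_sum fun k hk => ?_
    rcases hw k (Finset.mem_Icc.mp hk).1 with h0 | h1
    · rw [h0, zero_mul]
      split <;> norm_num
    · by_cases hd : |d k| ≤ ε
      · have e2 : (if w k = 1 ∧ |d k| ≤ η i then (1:ℝ) else 0) = 1 :=
          if_pos ⟨h1, le_trans hd hεη⟩
        rw [e2, h1, one_mul, if_pos hd]
      · rw [if_neg hd, mul_zero]
        split <;> norm_num
  have hA0 : (0:ℝ) ≤ (η i)^α := Real.rpow_nonneg (hη0 i).le α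
  have hY0 : (0:ℝ) ≤ ε^α := Real.rpow_nonneg hε0.le α
  have hAV0 : (0:ℝ) ≤ (η i)^α * ∑ k ∈ Finset.Icc 1 t, q k := mul_nonneg hA0 hVt0
  have hkey2 : ∑ k ∈ Finset.Icc 1 t, (if w k = 1 ∧ |d k| ≤ η i then (1:ℝ) else 0)
      ≤ (3/2) * ((η i)^α * ∑ k ∈ Finset.Icc 1 t, q k) + 2 * Real.log (1/δ) := by
    have hcc : 2*(Real.exp (1/2) - 1) ≤ 3/2 := by linarith
    nlinarith [hkey', mul_le_mul_of_nonneg_right hcc hAV0]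
  rw [hLsplit]
  rcases hcases with hcase | hcase
  · have k1 : (η i)^α * ∑ k ∈ Finset.Icc 1 t, q k
        ≤ (2 * ε^α) * ∑ k ∈ Finset.Icc 1 t, q k :=
      mul_le_mul_of_nonneg_right hcase hVt0
    calc ∑ k ∈ Finset.Icc 1 t, w k * (if |d k| ≤ ε then (1:ℝ) else 0)
        ≤ ∑ k ∈ Finset.Icc 1 t, (if w k = 1 ∧ |d k| ≤ η i then (1:ℝ) else 0) := hsum
    _ ≤ (3/2) * ((η i)^α * ∑ k ∈ Finset.Icc 1 t, q k) + 2 * Real.log (1/δ) := hkey2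
    _ ≤ 3 * ε^α * ∑ k ∈ Finset.Icc 1 t, q k + 2 * Real.log (1/δ) := by nlinarith [k1]
    _ ≤ _ := by nlinarith [hC, hl2pos]
  · have k1 : (η i)^α * ∑ k ∈ Finset.Icc 1 t, q k ≤ (1/2:ℝ) := by
      have hTpos : (0:ℝ) < T := by exact_mod_cast hT
      have s1 : (η i)^α * ∑ k ∈ Finset.Icc 1 t, q k
          ≤ (1/(2*(T:ℝ))) * ∑ k ∈ Finset.Icc 1 t, q k :=
        mul_le_mul_of_nonneg_right hcase hVt0
      have s2 : (1/(2*(T:ℝ))) * ∑ k ∈ Finset.Icc 1 t, q k ≤ (1/(2*(T:ℝ))) * T :=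
        mul_le_mul_of_nonneg_left (hVtle.trans htT) (by positivity)
      have s3 : (1/(2*(T:ℝ))) * T = 1/2 := by field_simp
      linarith
    calc ∑ k ∈ Finset.Icc 1 t, w k * (if |d k| ≤ ε then (1:ℝ) else 0)
        ≤ ∑ k ∈ Finset.Icc 1 t, (if w k = 1 ∧ |d k| ≤ η i then (1:ℝ) else 0) := hsum
    _ ≤ (3/2) * ((η i)^α * ∑ k ∈ Finset.Icc 1 t, q k) + 2 * Real.log (1/δ) := hkey2
    _ ≤ 3/4 + 2 * Real.log (1/δ) := by nlinarith [k1]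
    _ ≤ _ := by nlinarith [hC, hl2pos, Real.log_two_gt_d9,
        mul_nonneg (mul_nonneg (by norm_num : (0:ℝ) ≤ 3) hY0) hVt0]

set_option maxHeartbeats 1000000 in
/-- Time- and level-uniform bound on the number of small-margin rounds on which
a given base learner is selected, under the Mammen–Tsybakov low-noise
condition with exponent `α`. -/
theorem stmt_16 {Ω : Type*} {m0 : MeasurableSpace Ω} (μ : Measure Ω) [IsProbabilityMeasure μ]
    (α δ : ℝ) (hα : 0 ≤ α) (hδ : δ ∈ Set.Ioo (0 : ℝ) 1) (T : ℕ) (hT : 0 < T)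
    (ℱ : Filtration ℕ m0) (W Δ p : ℕ → Ω → ℝ)
    (hW01 : ∀ k, 1 ≤ k → ∀ ω, W k ω = 0 ∨ W k ω = 1)
    (hWmeas : ∀ k, 1 ≤ k → StronglyMeasurable[ℱ k] (W k))
    (hΔmeas : ∀ k, 1 ≤ k → StronglyMeasurable[ℱ k] (Δ k))
    (hpmeas : ∀ k, 1 ≤ k → StronglyMeasurable[ℱ (k - 1)] (p k))
    (hp01 : ∀ k, 1 ≤ k → ∀ ω, p k ω ∈ Set.Icc (0 : ℝ) 1)
    (hcond : ∀ k, 1 ≤ k → ∀ ε : ℝ, 0 < ε → ε ≤ 1 / 2 →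
      ∀ᵐ ω ∂μ,
        (μ[fun ω' => if W k ω' = 1 ∧ |Δ k ω'| ≤ ε then (1 : ℝ) else 0 | ℱ (k - 1)]) ω
          ≤ p k ω * ε ^ α) :
    ENNReal.ofReal (1 - Real.logb 2 (12 * T) * δ) ≤
      μ {ω | ∀ t ∈ Finset.Icc 1 T, ∀ ε : ℝ, 0 < ε → ε < 1 / 2 →
        ∑ k ∈ Finset.Icc 1 t, W k ω * (if |Δ k ω| ≤ ε then (1 : ℝ) else 0) ≤
          3 * ε ^ α * ∑ k ∈ Finset.Icc 1 t, p k ω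
            + 2 * Real.log (5.2 * Real.log (2 * t) ^ (1.4 : ℝ) / δ)} := by
  obtain ⟨hδ0, hδ1⟩ := hδ
  have hT1 : (1:ℝ) ≤ T := by exact_mod_cast hT
  -- numeric facts about exp(1/2)
  have hexph : Real.exp (1/2) ≤ 1.75 := by
    have h2 : Real.exp 1 = Real.exp (1/2) * Real.exp (1/2) := by
      rw [← Real.exp_add]; norm_num
    nlinarith [Real.exp_one_lt_d9, Real.exp_pos (1/2)]
  have hc1pos : 0 < Real.exp (1/2) - 1 := by
    have h := Real.exp_lt_exp.mpr (show (0:ℝ) < 1/2 by norm_num)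
    rw [Real.exp_zero] at h; linarith
  -- grid size
  set I : ℕ := Nat.clog 2 (2*T) with hIdef
  have hI2T : (2*T : ℕ) ≤ 2^I := Nat.le_pow_clog one_lt_two _
  have hI2TR : (2:ℝ) * T ≤ 2^I := by exact_mod_cast hI2T
  have hIpos : 1 ≤ I := Nat.clog_pos one_lt_two (by omega)
  have hcount : (I : ℝ) + 1 ≤ Real.logb 2 (12 * T) := by
    have hlt : (2:ℕ)^(I-1) < 2*T := Nat.pow_pred_clog_lt_self one_lt_two (by omega)
    have hltR : (2:ℝ)^(I-1) < 2*T := by exact_mod_cast hlt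
    have h1 : ((I:ℝ) - 1) ≤ Real.logb 2 (2*T) := by
      have h0 : (0:ℝ) < (2:ℝ)^(I-1) := by positivity
      have := Real.logb_le_logb_of_le (show (1:ℝ) < 2 by norm_num) h0 hltR.le
      rwa [Real.logb_pow, Real.logb_self_eq_one (show (1:ℝ) < 2 by norm_num),
        mul_one, Nat.cast_sub hIpos, Nat.cast_one] at this
    have h2 : Real.logb 2 (12*T) = Real.logb 2 6 + Real.logb 2 (2*T) := by
      rw [show (12:ℝ)*T = 6*(2*T) by ring, Real.logb_mul (by norm_num) (by positivity)]
    have h3 : (2:ℝ) ≤ Real.logb 2 6 := by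
      have h4 : Real.logb 2 ((2:ℝ)^(2:ℕ)) ≤ Real.logb 2 6 :=
        Real.logb_le_logb_of_le (show (1:ℝ) < 2 by norm_num) (by norm_num) (by norm_num)
      rwa [Real.logb_pow, Real.logb_self_eq_one (show (1:ℝ) < 2 by norm_num),
        mul_one, Nat.cast_ofNat] at h4
    linarith
  -- the grid
  set η : ℕ → ℝ := fun i => if α = 0 then 1/2 else min (1/2) ((2:ℝ) ^ (-(i:ℝ)/α)) with hηdef
  have hη0 : ∀ i, 0 < η i := by
    intro i
    simp only [hηdef]
    split
    · norm_num
    · exact lt_min (by norm_num) (Real.rpow_pos_of_pos (by norm_num) _)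
  have hη2 : ∀ i, η i ≤ 1/2 := by
    intro i
    simp only [hηdef]
    split
    · norm_num
    · exact min_le_left _ _
  -- bad events
  set B : ℕ → Set Ω := fun i => {ω | ∃ t ∈ Set.Icc 0 T, 1 / δ ≤ Real.exp ((1/2) *
      (∑ k ∈ Finset.Icc 1 t, if W k ω = 1 ∧ |Δ k ω| ≤ η i then (1:ℝ) else 0)
      - (Real.exp (1/2) - 1) * (η i) ^ α * (∑ k ∈ Finset.Icc 1 t, p k ω))} with hBdef
  have hB : ∀ i, μ (B i) ≤ ENNReal.ofReal δ := by
    intro i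
    exact super_bound μ α δ hα hδ0 T ℱ W Δ p hWmeas hΔmeas hpmeas hp01 hcond
      (η i) (hη0 i) (hη2 i)
  -- measurability of bad events
  have hBmeas : ∀ i, MeasurableSet (B i) := by
    intro i
    have : B i = ⋃ t ∈ Set.Icc 0 T, {ω | 1 / δ ≤ Real.exp ((1/2) *
        (∑ k ∈ Finset.Icc 1 t, if W k ω = 1 ∧ |Δ k ω| ≤ η i then (1:ℝ) else 0)
        - (Real.exp (1/2) - 1) * (η i) ^ α * (∑ k ∈ Finset.Icc 1 t, p k ω))} := by
      ext ω; simp [hBdef]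
    rw [this]
    refine MeasurableSet.biUnion (Set.to_countable _) (fun t _ => ?_)
    refine measurableSet_le measurable_const (Measurable.exp ?_)
    refine Measurable.sub (Measurable.const_mul ?_ _) (Measurable.const_mul ?_ _)
    · refine Finset.measurable_sum _ (fun k hk => ?_)
      have hk1 := (Finset.mem_Icc.mp hk).1
      have hset : MeasurableSet {ω | W k ω = 1 ∧ |Δ k ω| ≤ η i} := by
        have h1 : MeasurableSet {ω | W k ω = 1} :=
          ((hWmeas k hk1).mono (ℱ.le k)).measurable (measurableSet_singleton 1)
        have h2 : MeasurableSet {ω | |Δ k ω| ≤ η i} :=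
          measurableSet_le ((hΔmeas k hk1).mono (ℱ.le k)).measurable.abs measurable_const
        exact h1.inter h2
      exact Measurable.ite hset measurable_const measurable_const
    · refine Finset.measurable_sum _ (fun k hk => ?_)
      exact ((hpmeas k (Finset.mem_Icc.mp hk).1).mono (ℱ.le _)).measurable
  -- union bound
  set U : Set Ω := ⋃ i ∈ Finset.range (I+1), B i with hUdef
  have hUmeas : MeasurableSet U :=
    MeasurableSet.biUnion (Finset.range (I+1)).countable_toSet (fun i _ => hBmeas i)
  have hμU : μ U ≤ ENNReal.ofReal (((I:ℝ) + 1) * δ) := by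
    calc μ U ≤ ∑ i ∈ Finset.range (I+1), μ (B i) := measure_biUnion_finset_le _ _
    _ ≤ ∑ _i ∈ Finset.range (I+1), ENNReal.ofReal δ :=
      Finset.sum_le_sum (fun i _ => hB i)
    _ = (I+1 : ℕ) * ENNReal.ofReal δ := by
      rw [Finset.sum_const, Finset.card_range, nsmul_eq_mul]
    _ = ENNReal.ofReal (((I:ℝ) + 1) * δ) := by
      rw [ENNReal.ofReal_mul (by positivity)]
      congr 1
      rw [show ((I:ℝ) + 1) = ((I+1 : ℕ) : ℝ) by push_cast; ring, ENNReal.ofReal_natCast]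
  -- the inclusion
  have hsub : Uᶜ ⊆ {ω | ∀ t ∈ Finset.Icc 1 T, ∀ ε : ℝ, 0 < ε → ε < 1 / 2 →
      ∑ k ∈ Finset.Icc 1 t, W k ω * (if |Δ k ω| ≤ ε then (1 : ℝ) else 0) ≤
        3 * ε ^ α * ∑ k ∈ Finset.Icc 1 t, p k ω
          + 2 * Real.log (5.2 * Real.log (2 * t) ^ (1.4 : ℝ) / δ)} := by
    intro ω hω
    simp only [hUdef, Set.mem_compl_iff, Set.mem_iUnion, not_exists] at hω
    have hkey : ∀ i, i ≤ I → ∀ t, t ≤ T →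
        (1/2) * (∑ k ∈ Finset.Icc 1 t, if W k ω = 1 ∧ |Δ k ω| ≤ η i then (1:ℝ) else 0)
          - (Real.exp (1/2) - 1) * (η i)^α * (∑ k ∈ Finset.Icc 1 t, p k ω)
          < Real.log (1/δ) := by
      intro i hi t ht
      have hnin : ω ∉ B i := hω i (Finset.mem_range.mpr (by omega))
      simp only [hBdef, Set.mem_setOf_eq, not_exists, not_and, not_le] at hnin
      have h2 := hnin t (Set.mem_Icc.mpr ⟨Nat.zero_le _, ht⟩)
      exact (Real.lt_log_iff_exp_lt (by positivity)).mpr h2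
    exact det_part α δ hα hδ0 hδ1 T hT (fun k => W k ω) (fun k => Δ k ω) (fun k => p k ω)
      (fun k hk => hW01 k hk ω) (fun k hk => hp01 k hk ω) η hηdef hη0 I hI2TR hkey hexph
  calc ENNReal.ofReal (1 - Real.logb 2 (12 * T) * δ)
      ≤ ENNReal.ofReal (1 - ((I:ℝ) + 1) * δ) := by
        apply ENNReal.ofReal_le_ofReal
        have : ((I:ℝ) + 1) * δ ≤ Real.logb 2 (12 * T) * δ :=
          mul_le_mul_of_nonneg_right hcount hδ0.le
        linarith
  _ = 1 - ENNReal.ofReal (((I:ℝ) + 1) * δ) := by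
        rw [ENNReal.ofReal_sub _ (by positivity), ENNReal.ofReal_one]
  _ ≤ 1 - μ U := tsub_le_tsub_left hμU 1
  _ = μ Uᶜ := (prob_compl_eq_one_sub hUmeas).symm
  _ ≤ _ := measure_mono hsub
end
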